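/- arXiv:1109.5061 — 5 statements merged into one kernel-verified Lean document; each statement's English description precedes it below -/
import Mathlib

section
/- For every natural number m, the number of fixed-point-free involutions σ of {1,…,2m} with C_σ = 0 equals the m-th Catalan number Cat(m). -/
/-- `A_σ = #{(i,j) : i < j < σ(j) < σ(i)}` for a permutation `σ` of `Fin n`
(encoding a permutation of `{1,…,n}`). -/
def Acnt {n : ℕ} (σ : Equiv.Perm (Fin n)) : ℕ :=
  (Finset.univ.filter (fun p : Fin n × Fin n =>
    p.1 < p.2 ∧ p.2 < σ p.2 ∧ σ p.2 < σ p.1)).card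

/-- `B_σ = #{(i,j) : i < j = σ(j) < σ(i)}`. -/
def Bcnt {n : ℕ} (σ : Equiv.Perm (Fin n)) : ℕ :=
  (Finset.univ.filter (fun p : Fin n × Fin n =>
    p.1 < p.2 ∧ σ p.2 = p.2 ∧ p.2 < σ p.1)).card

/-- `C_σ = #{(i,j) : i < j < σ(i) < σ(j)}`. -/
def Ccnt {n : ℕ} (σ : Equiv.Perm (Fin n)) : ℕ :=
  (Finset.univ.filter (fun p : Fin n × Fin n =>
    p.1 < p.2 ∧ p.2 < σ p.1 ∧ σ p.1 < σ p.2)).card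

/-- The number of inversions of `σ` (its Coxeter length in `S_n`). -/
def invCnt {n : ℕ} (σ : Equiv.Perm (Fin n)) : ℕ :=
  (Finset.univ.filter (fun p : Fin n × Fin n =>
    p.1 < p.2 ∧ σ p.2 < σ p.1)).card

open Equiv Finset

def NCItype (n : ℕ) := {σ : Equiv.Perm (Fin n) //
    (∀ i, σ (σ i) = i) ∧ (∀ i, σ i ≠ i) ∧ Ccnt σ = 0}

instance (n : ℕ) : Finite (NCItype n) := by unfold NCItype; infer_instance

lemma Ccnt_eq_zero_iff {n : ℕ} (σ : Perm (Fin n)) :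
    Ccnt σ = 0 ↔ ∀ i j : Fin n, i < j → j < σ i → ¬ σ i < σ j := by
  unfold Ccnt
  rw [Finset.card_eq_zero, Finset.filter_eq_empty_iff]
  constructor
  · intro h i j hij hj hs
    exact h (Finset.mem_univ (i, j)) ⟨hij, hj, hs⟩
  · rintro h ⟨i, j⟩ - ⟨h1, h2, h3⟩
    exact h i j h1 h2 h3

lemma even_card_of_inv {α : Type*} [LinearOrder α] (σ : α → α) (T : Finset α)
    (hT : ∀ x ∈ T, σ x ∈ T) (hinvol : ∀ x, σ (σ x) = x) (hfpf : ∀ x ∈ T, σ x ≠ x) :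
    Even T.card := by
  classical
  set A := T.filter (fun x => x < σ x) with hA
  set B := T.filter (fun x => σ x < x) with hB
  have hcard : A.card = B.card := by
    apply Finset.card_bij (fun a _ => σ a)
    · intro a ha
      simp only [hA, hB, Finset.mem_filter] at ha ⊢
      exact ⟨hT a ha.1, by rw [hinvol]; exact ha.2⟩
    · intro a ha b hb hab
      have := congrArg σ hab
      rwa [hinvol, hinvol] at this
    · intro b hb
      simp only [hA, hB, Finset.mem_filter] at hb ⊢
      exact ⟨σ b, ⟨hT b hb.1, by rw [hinvol]; exact hb.2⟩, hinvol b⟩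
  have hunion : A ∪ B = T := by
    ext x
    simp only [hA, hB, Finset.mem_union, Finset.mem_filter]
    constructor
    · rintro (h | h) <;> exact h.1
    · intro hx
      rcases lt_or_gt_of_ne (hfpf x hx).symm with h | h
      · exact Or.inl ⟨hx, h⟩
      · exact Or.inr ⟨hx, h⟩
  have hdisj : Disjoint A B := by
    rw [Finset.disjoint_left]
    intro x hx1 hx2
    simp only [hA, hB, Finset.mem_filter] at hx1 hx2
    exact absurd (lt_trans hx1.2 hx2.2) (lt_irrefl _)
  have := Finset.card_union_of_disjoint hdisj
  rw [hunion] at this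
  rw [this, hcard]
  exact ⟨B.card, by ring⟩

/-- the glue function -/
def gfun (m k : ℕ) (hk : k ≤ m) (τ : Perm (Fin (2*k))) (ρ : Perm (Fin (2*(m-k))))
    (x : Fin (2*m+2)) : Fin (2*m+2) :=
  if h0 : x.val = 0 then ⟨2*k+1, by omega⟩
  else if h1 : x.val = 2*k+1 then ⟨0, by omega⟩
  else if h2 : x.val < 2*k+1 then
    ⟨(τ ⟨x.val - 1, by omega⟩).val + 1, by have := (τ ⟨x.val - 1, by omega⟩).isLt; omega⟩
  else ⟨(ρ ⟨x.val - (2*k+2), by have := x.isLt; omega⟩).val + (2*k+2), by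
    have := (ρ ⟨x.val - (2*k+2), by have := x.isLt; omega⟩).isLt; omega⟩

lemma gfun_spec0 (m k : ℕ) (hk : k ≤ m) (τ : Perm (Fin (2*k))) (ρ : Perm (Fin (2*(m-k))))
    (x : Fin (2*m+2)) (h : x.val = 0) : (gfun m k hk τ ρ x).val = 2*k+1 := by
  simp [gfun, h]

lemma gfun_spec1 (m k : ℕ) (hk : k ≤ m) (τ : Perm (Fin (2*k))) (ρ : Perm (Fin (2*(m-k))))
    (x : Fin (2*m+2)) (h : x.val = 2*k+1) : (gfun m k hk τ ρ x).val = 0 := by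
  have h0 : ¬ x.val = 0 := by omega
  simp [gfun, h, h0]

lemma gfun_specL (m k : ℕ) (hk : k ≤ m) (τ : Perm (Fin (2*k))) (ρ : Perm (Fin (2*(m-k))))
    (x : Fin (2*m+2)) (h : 1 ≤ x.val) (h' : x.val ≤ 2*k) :
    (gfun m k hk τ ρ x).val = (τ ⟨x.val - 1, by omega⟩).val + 1 := by
  have h0 : ¬ x.val = 0 := by omega
  have h1 : ¬ x.val = 2*k+1 := by omega
  have h2 : x.val < 2*k+1 := by omega
  simp [gfun, h0, h1, h2]

lemma gfun_specR (m k : ℕ) (hk : k ≤ m) (τ : Perm (Fin (2*k))) (ρ : Perm (Fin (2*(m-k))))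
    (x : Fin (2*m+2)) (h : 2*k+2 ≤ x.val) :
    (gfun m k hk τ ρ x).val
      = (ρ ⟨x.val - (2*k+2), by have := x.isLt; omega⟩).val + (2*k+2) := by
  have h0 : ¬ x.val = 0 := by omega
  have h1 : ¬ x.val = 2*k+1 := by omega
  have h2 : ¬ x.val < 2*k+1 := by omega
  simp [gfun, h0, h1, h2]

lemma gfun_specL' (m k : ℕ) (hk : k ≤ m) (τ : Perm (Fin (2*k))) (ρ : Perm (Fin (2*(m-k))))
    (x : Fin (2*m+2)) (y : Fin (2*k)) (h : 1 ≤ x.val) (h' : x.val ≤ 2*k)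
    (hy : y.val = x.val - 1) :
    (gfun m k hk τ ρ x).val = (τ y).val + 1 := by
  rw [gfun_specL m k hk τ ρ x h h']
  exact congrArg (fun t => (τ t).val + 1) (Fin.ext hy.symm)

lemma gfun_specR' (m k : ℕ) (hk : k ≤ m) (τ : Perm (Fin (2*k))) (ρ : Perm (Fin (2*(m-k))))
    (x : Fin (2*m+2)) (y : Fin (2*(m-k))) (h : 2*k+2 ≤ x.val)
    (hy : y.val = x.val - (2*k+2)) :
    (gfun m k hk τ ρ x).val = (ρ y).val + (2*k+2) := by
  rw [gfun_specR m k hk τ ρ x h]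
  exact congrArg (fun t => (ρ t).val + (2*k+2)) (Fin.ext hy.symm)

lemma gfun_invol (m k : ℕ) (hk : k ≤ m) (τ : Perm (Fin (2*k))) (ρ : Perm (Fin (2*(m-k))))
    (hτ : ∀ i, τ (τ i) = i) (hρ : ∀ i, ρ (ρ i) = i) :
    Function.Involutive (gfun m k hk τ ρ) := by
  intro x
  rcases Nat.lt_or_ge x.val 1 with h | h
  · -- x = 0
    have h0 : x.val = 0 := by omega
    apply Fin.ext
    rw [gfun_spec1 m k hk τ ρ _ (gfun_spec0 m k hk τ ρ x h0), h0]
  · rcases Nat.lt_or_ge x.val (2*k+1) with h' | h'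
    · -- left block
      have hL := gfun_specL m k hk τ ρ x h (by omega)
      have hv1 : 1 ≤ (gfun m k hk τ ρ x).val := by omega
      have hv2 : (gfun m k hk τ ρ x).val ≤ 2*k := by
        have := (τ ⟨x.val - 1, by omega⟩).isLt; omega
      apply Fin.ext
      rw [gfun_specL m k hk τ ρ _ hv1 hv2]
      have harg : (⟨(gfun m k hk τ ρ x).val - 1, by omega⟩ : Fin (2*k))
          = τ ⟨x.val - 1, by omega⟩ := by
        apply Fin.ext; simp [hL]
      rw [harg, hτ]
      simp; omega
    · rcases Nat.eq_or_lt_of_le h' with h'' | h''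
      · -- x = 2k+1
        apply Fin.ext
        rw [gfun_spec0 m k hk τ ρ _ (gfun_spec1 m k hk τ ρ x h''.symm)]
        omega
      · -- right block
        have hR := gfun_specR m k hk τ ρ x (by omega)
        have hv : 2*k+2 ≤ (gfun m k hk τ ρ x).val := by omega
        apply Fin.ext
        rw [gfun_specR m k hk τ ρ _ hv]
        have harg : (⟨(gfun m k hk τ ρ x).val - (2*k+2), by
              have := (gfun m k hk τ ρ x).isLt; omega⟩ : Fin (2*(m-k)))
            = ρ ⟨x.val - (2*k+2), by have := x.isLt; omega⟩ := by
          apply Fin.ext; simp [hR]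
        rw [harg, hρ]
        simp; omega

def gluePerm (m k : ℕ) (hk : k ≤ m) (τ : Perm (Fin (2*k))) (ρ : Perm (Fin (2*(m-k))))
    (hτ : ∀ i, τ (τ i) = i) (hρ : ∀ i, ρ (ρ i) = i) : Perm (Fin (2*m+2)) :=
  Function.Involutive.toPerm _ (gfun_invol m k hk τ ρ hτ hρ)

lemma gluePerm_apply (m k : ℕ) (hk : k ≤ m) (τ : Perm (Fin (2*k))) (ρ : Perm (Fin (2*(m-k))))
    (hτ : ∀ i, τ (τ i) = i) (hρ : ∀ i, ρ (ρ i) = i) (x : Fin (2*m+2)) :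
    gluePerm m k hk τ ρ hτ hρ x = gfun m k hk τ ρ x := rfl

lemma gluePerm_fpf (m k : ℕ) (hk : k ≤ m) (τ : Perm (Fin (2*k))) (ρ : Perm (Fin (2*(m-k))))
    (hτ : ∀ i, τ (τ i) = i) (hρ : ∀ i, ρ (ρ i) = i)
    (hτf : ∀ i, τ i ≠ i) (hρf : ∀ i, ρ i ≠ i) :
    ∀ x, gluePerm m k hk τ ρ hτ hρ x ≠ x := by
  intro x hx
  have hx' : (gfun m k hk τ ρ x).val = x.val := congrArg Fin.val hx
  rcases Nat.lt_or_ge x.val 1 with h | h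
  · rw [gfun_spec0 m k hk τ ρ x (by omega)] at hx'; omega
  · rcases Nat.lt_or_ge x.val (2*k+1) with h' | h'
    · rw [gfun_specL m k hk τ ρ x h (by omega)] at hx'
      exact hτf ⟨x.val - 1, by omega⟩ (by apply Fin.ext; simp only [Fin.val_mk]; omega)
    · rcases Nat.eq_or_lt_of_le h' with h'' | h''
      · rw [gfun_spec1 m k hk τ ρ x h''.symm] at hx'; omega
      · rw [gfun_specR m k hk τ ρ x (by omega)] at hx'
        exact hρf ⟨x.val - (2*k+2), by have := x.isLt; omega⟩ (by apply Fin.ext; simp only [Fin.val_mk]; omega)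

lemma gluePerm_Ccnt (m k : ℕ) (hk : k ≤ m) (τ : Perm (Fin (2*k))) (ρ : Perm (Fin (2*(m-k))))
    (hτ : ∀ i, τ (τ i) = i) (hρ : ∀ i, ρ (ρ i) = i)
    (hτc : Ccnt τ = 0) (hρc : Ccnt ρ = 0) :
    Ccnt (gluePerm m k hk τ ρ hτ hρ) = 0 := by
  rw [Ccnt_eq_zero_iff] at hτc hρc ⊢
  intro i j hij hji hlt
  set g := gluePerm m k hk τ ρ hτ hρ with hg
  have hij' : i.val < j.val := hij
  have hji' : j.val < (g i).val := hji
  have hlt' : (g i).val < (g j).val := hlt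
  rcases Nat.lt_or_ge i.val 1 with h | h
  · -- i = 0 : g i = 2k+1, j in left block, g j ≤ 2k < g i
    have e1 : (g i).val = 2*k+1 := gfun_spec0 m k hk τ ρ i (by omega)
    have hj1 : 1 ≤ j.val := by omega
    have hj2 : j.val ≤ 2*k := by omega
    have e2 : (g j).val = (τ ⟨j.val - 1, by omega⟩).val + 1 :=
      gfun_specL m k hk τ ρ j hj1 hj2
    have := (τ ⟨j.val - 1, by omega⟩).isLt
    omega
  · rcases Nat.lt_or_ge i.val (2*k+1) with h' | h'
    · -- left block
      have e1 : (g i).val = (τ ⟨i.val - 1, by omega⟩).val + 1 :=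
        gfun_specL m k hk τ ρ i h (by omega)
      have hti := (τ ⟨i.val - 1, by omega⟩).isLt
      have hj1 : 1 ≤ j.val := by omega
      have hj2 : j.val ≤ 2*k := by omega
      have e2 : (g j).val = (τ ⟨j.val - 1, by omega⟩).val + 1 :=
        gfun_specL m k hk τ ρ j hj1 hj2
      exact hτc ⟨i.val - 1, by omega⟩ ⟨j.val - 1, by omega⟩
        (by simp only [Fin.mk_lt_mk]; omega)
        (by simp only [Fin.lt_def]; omega)
        (by simp only [Fin.lt_def]; omega)
    · rcases Nat.eq_or_lt_of_le h' with h'' | h''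
      · -- i = 2k+1 : g i = 0, contradiction with j < g i
        have e1 : (g i).val = 0 := gfun_spec1 m k hk τ ρ i h''.symm
        omega
      · -- right block
        have e1 : (g i).val = (ρ ⟨i.val - (2*k+2), by have := i.isLt; omega⟩).val + (2*k+2) :=
          gfun_specR m k hk τ ρ i (by omega)
        have e2 : (g j).val = (ρ ⟨j.val - (2*k+2), by have := j.isLt; omega⟩).val + (2*k+2) :=
          gfun_specR m k hk τ ρ j (by omega)
        exact hρc ⟨i.val - (2*k+2), by have := i.isLt; omega⟩
          ⟨j.val - (2*k+2), by have := j.isLt; omega⟩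
          (by simp only [Fin.mk_lt_mk]; omega)
          (by simp only [Fin.lt_def]; omega)
          (by simp only [Fin.lt_def]; omega)

def z0 (m : ℕ) : Fin (2*m+2) := ⟨0, by omega⟩

section Split

variable {m : ℕ} (σ : Perm (Fin (2*m+2)))
  (hinv : ∀ i, σ (σ i) = i) (hfpf : ∀ i, σ i ≠ i) (hC : Ccnt σ = 0)

include hinv hfpf hC

lemma left_inv_block : ∀ x : Fin (2*m+2), 0 < x.val → x.val < (σ (z0 m)).val →
    0 < (σ x).val ∧ (σ x).val < (σ (z0 m)).val := by
  intro x hx1 hx2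
  have hne0 : (σ x).val ≠ 0 := by
    intro h0
    have : σ x = z0 m := Fin.ext h0
    have : x = σ (z0 m) := by rw [← this, hinv]
    omega
  have hnej : (σ x).val ≠ (σ (z0 m)).val := by
    intro h0
    have : σ x = σ (z0 m) := Fin.ext h0
    have : x = z0 m := σ.injective this
    have := congrArg Fin.val this
    change x.val = 0 at this; omega
  have hnlt : ¬ (σ (z0 m)).val < (σ x).val := by
    intro hlt
    rw [Ccnt_eq_zero_iff] at hC
    exact hC (z0 m) x hx1 hx2 hlt
  omega

lemma right_inv_block : ∀ x : Fin (2*m+2), (σ (z0 m)).val < x.val →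
    (σ (z0 m)).val < (σ x).val := by
  intro x hx
  have hz : (σ (z0 m)).val ≠ 0 := by
    intro h0
    exact hfpf (z0 m) (Fin.ext (by simpa [z0] using h0))
  have hne0 : (σ x).val ≠ 0 := by
    intro h0
    have : σ x = z0 m := Fin.ext h0
    have : x = σ (z0 m) := by rw [← this, hinv]
    omega
  have hnej : (σ x).val ≠ (σ (z0 m)).val := by
    intro h0
    have : x = z0 m := σ.injective (Fin.ext h0)
    have := congrArg Fin.val this
    change x.val = 0 at this; omega
  have hnin : ¬ (0 < (σ x).val ∧ (σ x).val < (σ (z0 m)).val) := by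
    rintro ⟨h1, h2⟩
    have := left_inv_block σ hinv hfpf hC (σ x) h1 h2
    rw [hinv] at this
    omega
  omega

lemma sigma_z_odd : ∃ k : ℕ, k ≤ m ∧ (σ (z0 m)).val = 2*k+1 := by
  have hz : (σ (z0 m)).val ≠ 0 := by
    intro h0
    exact hfpf (z0 m) (Fin.ext (by simpa [z0] using h0))
  have heven : Even ((Finset.Ioo (z0 m) (σ (z0 m))).card) := by
    apply even_card_of_inv σ
    · intro x hx
      rw [Finset.mem_Ioo] at hx ⊢
      have h1 : 0 < x.val := hx.1
      have h2 : x.val < (σ (z0 m)).val := hx.2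
      have := left_inv_block σ hinv hfpf hC x h1 h2
      exact ⟨this.1, this.2⟩
    · exact hinv
    · intro x _; exact hfpf x
  rw [Fin.card_Ioo] at heven
  have hval : (z0 m).val = 0 := rfl
  rw [hval] at heven
  obtain ⟨c, hc⟩ := heven
  have := (σ (z0 m)).isLt
  exact ⟨c, by omega, by omega⟩

end Split

section SplitPerms

variable {m : ℕ} (σ : Perm (Fin (2*m+2)))
  (hinv : ∀ i, σ (σ i) = i) (hfpf : ∀ i, σ i ≠ i) (hC : Ccnt σ = 0)
  (k : ℕ) (hj : (σ (z0 m)).val = 2*k+1)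

def tfun (x : Fin (2*k)) : Fin (2*k) :=
  have hσ : 2*k+1 < 2*m+2 := hj ▸ (σ (z0 m)).isLt
  have hb : x.val + 1 < 2*m+2 := by have := x.isLt; omega
  ⟨(σ ⟨x.val+1, hb⟩).val - 1, by
    have h := left_inv_block σ hinv hfpf hC ⟨x.val+1, hb⟩ (Nat.succ_pos _)
      (show x.val+1 < (σ (z0 m)).val by rw [hj]; have := x.isLt; omega)
    rw [hj] at h; omega⟩

lemma tfun_spec (x : Fin (2*k)) (y : Fin (2*m+2)) (hy : y.val = x.val + 1) :
    (tfun σ hinv hfpf hC k hj x).val + 1 = (σ y).val := by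
  have hσ : 2*k+1 < 2*m+2 := hj ▸ (σ (z0 m)).isLt
  have hb : x.val + 1 < 2*m+2 := by have := x.isLt; omega
  have hyy : y = ⟨x.val+1, hb⟩ := Fin.ext hy
  rw [hyy]
  have h := left_inv_block σ hinv hfpf hC ⟨x.val+1, hb⟩ (Nat.succ_pos _)
    (show x.val+1 < (σ (z0 m)).val by rw [hj]; have := x.isLt; omega)
  show (σ ⟨x.val+1, hb⟩).val - 1 + 1 = (σ ⟨x.val+1, hb⟩).val
  omega

lemma tfun_invol : Function.Involutive (tfun σ hinv hfpf hC k hj) := by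
  intro x
  have hσ : 2*k+1 < 2*m+2 := hj ▸ (σ (z0 m)).isLt
  have hb : x.val + 1 < 2*m+2 := by have := x.isLt; omega
  have h1 := tfun_spec σ hinv hfpf hC k hj x ⟨x.val+1, hb⟩ rfl
  have h2 := tfun_spec σ hinv hfpf hC k hj (tfun σ hinv hfpf hC k hj x)
    (σ ⟨x.val+1, hb⟩) h1.symm
  rw [hinv] at h2
  exact Fin.ext (by simpa using h2)

lemma tfun_fpf : ∀ x, tfun σ hinv hfpf hC k hj x ≠ x := by
  intro x hx
  have hσ : 2*k+1 < 2*m+2 := hj ▸ (σ (z0 m)).isLt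
  have hb : x.val + 1 < 2*m+2 := by have := x.isLt; omega
  have h1 := tfun_spec σ hinv hfpf hC k hj x ⟨x.val+1, hb⟩ rfl
  rw [hx] at h1
  exact hfpf ⟨x.val+1, hb⟩ (Fin.ext (by simpa using h1.symm))

lemma tfun_Ccnt : Ccnt (Function.Involutive.toPerm _ (tfun_invol σ hinv hfpf hC k hj)) = 0 := by
  rw [Ccnt_eq_zero_iff]
  intro i j hij hji hlt
  have hσ : 2*k+1 < 2*m+2 := hj ▸ (σ (z0 m)).isLt
  have hbi : i.val + 1 < 2*m+2 := by have := i.isLt; omega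
  have hbj : j.val + 1 < 2*m+2 := by have := j.isLt; omega
  have hi := tfun_spec σ hinv hfpf hC k hj i ⟨i.val+1, hbi⟩ rfl
  have hjs := tfun_spec σ hinv hfpf hC k hj j ⟨j.val+1, hbj⟩ rfl
  have hji' : j.val < (tfun σ hinv hfpf hC k hj i).val := hji
  have hlt' : (tfun σ hinv hfpf hC k hj i).val < (tfun σ hinv hfpf hC k hj j).val := hlt
  exact (Ccnt_eq_zero_iff σ).mp hC ⟨i.val+1, hbi⟩ ⟨j.val+1, hbj⟩
    (show i.val+1 < j.val+1 by have : i.val < j.val := hij; omega)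
    (show (⟨j.val+1, hbj⟩ : Fin (2*m+2)).val < (σ ⟨i.val+1, hbi⟩).val by
      show j.val+1 < _; omega)
    (show (σ ⟨i.val+1, hbi⟩).val < (σ ⟨j.val+1, hbj⟩).val by omega)

def rfun (x : Fin (2*(m-k))) : Fin (2*(m-k)) :=
  have hb : x.val + (2*k+2) < 2*m+2 := by have := x.isLt; omega
  ⟨(σ ⟨x.val + (2*k+2), hb⟩).val - (2*k+2), by
    have h := right_inv_block σ hinv hfpf hC ⟨x.val + (2*k+2), hb⟩
      (show (σ (z0 m)).val < x.val + (2*k+2) by rw [hj]; omega)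
    have := (σ ⟨x.val + (2*k+2), hb⟩).isLt
    rw [hj] at h; omega⟩

lemma rfun_spec (x : Fin (2*(m-k))) (y : Fin (2*m+2)) (hy : y.val = x.val + (2*k+2)) :
    (rfun σ hinv hfpf hC k hj x).val + (2*k+2) = (σ y).val := by
  have hb : x.val + (2*k+2) < 2*m+2 := by have := x.isLt; omega
  have hyy : y = ⟨x.val + (2*k+2), hb⟩ := Fin.ext hy
  rw [hyy]
  have h := right_inv_block σ hinv hfpf hC ⟨x.val + (2*k+2), hb⟩
    (show (σ (z0 m)).val < x.val + (2*k+2) by rw [hj]; omega)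
  rw [hj] at h
  show (σ ⟨x.val + (2*k+2), hb⟩).val - (2*k+2) + (2*k+2) = (σ ⟨x.val + (2*k+2), hb⟩).val
  omega

lemma rfun_invol : Function.Involutive (rfun σ hinv hfpf hC k hj) := by
  intro x
  have hb : x.val + (2*k+2) < 2*m+2 := by have := x.isLt; omega
  have h1 := rfun_spec σ hinv hfpf hC k hj x ⟨x.val + (2*k+2), hb⟩ rfl
  have h2 := rfun_spec σ hinv hfpf hC k hj (rfun σ hinv hfpf hC k hj x)
    (σ ⟨x.val + (2*k+2), hb⟩) h1.symm
  rw [hinv] at h2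
  exact Fin.ext (by simpa using h2)

lemma rfun_fpf : ∀ x, rfun σ hinv hfpf hC k hj x ≠ x := by
  intro x hx
  have hb : x.val + (2*k+2) < 2*m+2 := by have := x.isLt; omega
  have h1 := rfun_spec σ hinv hfpf hC k hj x ⟨x.val + (2*k+2), hb⟩ rfl
  rw [hx] at h1
  exact hfpf ⟨x.val + (2*k+2), hb⟩ (Fin.ext (by simpa using h1.symm))

lemma rfun_Ccnt : Ccnt (Function.Involutive.toPerm _ (rfun_invol σ hinv hfpf hC k hj)) = 0 := by
  rw [Ccnt_eq_zero_iff]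
  intro i j hij hji hlt
  have hbi : i.val + (2*k+2) < 2*m+2 := by have := i.isLt; omega
  have hbj : j.val + (2*k+2) < 2*m+2 := by have := j.isLt; omega
  have hi := rfun_spec σ hinv hfpf hC k hj i ⟨i.val + (2*k+2), hbi⟩ rfl
  have hjs := rfun_spec σ hinv hfpf hC k hj j ⟨j.val + (2*k+2), hbj⟩ rfl
  have hji' : j.val < (rfun σ hinv hfpf hC k hj i).val := hji
  have hlt' : (rfun σ hinv hfpf hC k hj i).val < (rfun σ hinv hfpf hC k hj j).val := hlt
  exact (Ccnt_eq_zero_iff σ).mp hC ⟨i.val + (2*k+2), hbi⟩ ⟨j.val + (2*k+2), hbj⟩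
    (show i.val + (2*k+2) < j.val + (2*k+2) by have : i.val < j.val := hij; omega)
    (show (⟨j.val + (2*k+2), hbj⟩ : Fin (2*m+2)).val < (σ ⟨i.val + (2*k+2), hbi⟩).val by
      show j.val + (2*k+2) < _; omega)
    (show (σ ⟨i.val + (2*k+2), hbi⟩).val < (σ ⟨j.val + (2*k+2), hbj⟩).val by omega)

end SplitPerms

lemma glue_split {m : ℕ} (σ : Perm (Fin (2*m+2)))
    (hinv : ∀ i, σ (σ i) = i) (hfpf : ∀ i, σ i ≠ i) (hC : Ccnt σ = 0)
    (k : ℕ) (hk : k ≤ m) (hj : (σ (z0 m)).val = 2*k+1) :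
    gluePerm m k hk
      (Function.Involutive.toPerm _ (tfun_invol σ hinv hfpf hC k hj))
      (Function.Involutive.toPerm _ (rfun_invol σ hinv hfpf hC k hj))
      (fun i => tfun_invol σ hinv hfpf hC k hj i)
      (fun i => rfun_invol σ hinv hfpf hC k hj i) = σ := by
  set τ := Function.Involutive.toPerm _ (tfun_invol σ hinv hfpf hC k hj) with hτ
  set ρ := Function.Involutive.toPerm _ (rfun_invol σ hinv hfpf hC k hj) with hρ
  apply Equiv.ext
  intro x
  apply Fin.ext
  change (gfun m k hk τ ρ x).val = (σ x).val
  rcases Nat.lt_or_ge x.val 1 with h | h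
  · have h0 : x.val = 0 := by omega
    rw [gfun_spec0 m k hk τ ρ x h0]
    have hx : x = z0 m := Fin.ext h0
    rw [hx, hj]
  · rcases Nat.lt_or_ge x.val (2*k+1) with h' | h'
    · rw [gfun_specL m k hk τ ρ x h (by omega)]
      exact tfun_spec σ hinv hfpf hC k hj ⟨x.val - 1, by omega⟩ x
        (show x.val = x.val - 1 + 1 by omega)
    · rcases Nat.eq_or_lt_of_le h' with h'' | h''
      · rw [gfun_spec1 m k hk τ ρ x h''.symm]
        have hx : x = σ (z0 m) := Fin.ext (by omega)
        rw [hx, hinv]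
        rfl
      · rw [gfun_specR m k hk τ ρ x (by omega)]
        exact rfun_spec σ hinv hfpf hC k hj
          ⟨x.val - (2*k+2), by have := x.isLt; omega⟩ x
          (show x.val = x.val - (2*k+2) + (2*k+2) by omega)

def Fmap (m : ℕ) :
    (Σ k : Fin (m+1), NCItype (2*(k:ℕ)) × NCItype (2*(m-(k:ℕ)))) → NCItype (2*m+2) :=
  fun a =>
    ⟨gluePerm m a.1 a.1.is_le a.2.1.1 a.2.2.1 a.2.1.2.1 a.2.2.2.1,
     fun i => gfun_invol m a.1 a.1.is_le a.2.1.1 a.2.2.1 a.2.1.2.1 a.2.2.2.1 i,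
     gluePerm_fpf m a.1 a.1.is_le a.2.1.1 a.2.2.1 a.2.1.2.1 a.2.2.2.1
       a.2.1.2.2.1 a.2.2.2.2.1,
     gluePerm_Ccnt m a.1 a.1.is_le a.2.1.1 a.2.2.1 a.2.1.2.1 a.2.2.2.1
       a.2.1.2.2.2 a.2.2.2.2.2⟩

lemma Fmap_surj (m : ℕ) : Function.Surjective (Fmap m) := by
  rintro ⟨σ, hinv, hfpf, hC⟩
  obtain ⟨k, hk, hj⟩ := sigma_z_odd σ hinv hfpf hC
  refine ⟨⟨⟨k, by omega⟩,
    ⟨⟨Function.Involutive.toPerm _ (tfun_invol σ hinv hfpf hC k hj),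
      fun i => tfun_invol σ hinv hfpf hC k hj i,
      tfun_fpf σ hinv hfpf hC k hj,
      tfun_Ccnt σ hinv hfpf hC k hj⟩,
     ⟨Function.Involutive.toPerm _ (rfun_invol σ hinv hfpf hC k hj),
      fun i => rfun_invol σ hinv hfpf hC k hj i,
      rfun_fpf σ hinv hfpf hC k hj,
      rfun_Ccnt σ hinv hfpf hC k hj⟩⟩⟩, ?_⟩
  exact Subtype.ext (glue_split σ hinv hfpf hC k hk hj)

lemma Fmap_inj (m : ℕ) : Function.Injective (Fmap m) := by
  rintro ⟨k, ⟨τ, hτ⟩, ⟨ρ, hρ⟩⟩ ⟨k', ⟨τ', hτ'⟩, ⟨ρ', hρ'⟩⟩ hab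
  have hval : ∀ x, (gluePerm m k k.is_le τ ρ hτ.1 hρ.1 x)
      = (gluePerm m k' k'.is_le τ' ρ' hτ'.1 hρ'.1 x) := by
    intro x
    exact congrFun (congrArg (fun (e : Perm (Fin (2*m+2))) => (e : Fin (2*m+2) → Fin (2*m+2)))
      (congrArg Subtype.val hab)) x
  -- evaluate at 0 to get k = k'
  have h0 : (2*(k:ℕ)+1 : ℕ) = 2*(k':ℕ)+1 := by
    have := congrArg Fin.val (hval (z0 m))
    rw [gluePerm_apply, gluePerm_apply,
      gfun_spec0 m k k.is_le τ ρ (z0 m) rfl,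
      gfun_spec0 m k' k'.is_le τ' ρ' (z0 m) rfl] at this
    exact this
  have hkk : k = k' := Fin.ext (by omega)
  subst hkk
  have hτeq : τ = τ' := by
    apply Equiv.ext
    intro x
    have hb : x.val + 1 < 2*m+2 := by have := x.isLt; have := k.is_le; omega
    have := congrArg Fin.val (hval ⟨x.val+1, hb⟩)
    rw [gluePerm_apply, gluePerm_apply,
      gfun_specL' m k k.is_le τ ρ ⟨x.val+1, hb⟩ x (show 1 ≤ x.val+1 by omega)
        (show x.val+1 ≤ 2*(k:ℕ) by have := x.isLt; omega)
        (show x.val = x.val + 1 - 1 by omega),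
      gfun_specL' m k k.is_le τ' ρ' ⟨x.val+1, hb⟩ x (show 1 ≤ x.val+1 by omega)
        (show x.val+1 ≤ 2*(k:ℕ) by have := x.isLt; omega)
        (show x.val = x.val + 1 - 1 by omega)] at this
    exact Fin.ext (by omega)
  have hρeq : ρ = ρ' := by
    apply Equiv.ext
    intro x
    have hb : x.val + (2*(k:ℕ)+2) < 2*m+2 := by have := x.isLt; omega
    have := congrArg Fin.val (hval ⟨x.val + (2*(k:ℕ)+2), hb⟩)
    rw [gluePerm_apply, gluePerm_apply,
      gfun_specR' m k k.is_le τ ρ ⟨x.val + (2*(k:ℕ)+2), hb⟩ x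
        (show 2*(k:ℕ)+2 ≤ x.val + (2*(k:ℕ)+2) by omega)
        (show x.val = x.val + (2*(k:ℕ)+2) - (2*(k:ℕ)+2) by omega),
      gfun_specR' m k k.is_le τ' ρ' ⟨x.val + (2*(k:ℕ)+2), hb⟩ x
        (show 2*(k:ℕ)+2 ≤ x.val + (2*(k:ℕ)+2) by omega)
        (show x.val = x.val + (2*(k:ℕ)+2) - (2*(k:ℕ)+2) by omega)] at this
    exact Fin.ext (by omega)
  subst hτeq
  subst hρeq
  rfl

lemma natCard_sigma {r : ℕ} (f : Fin r → Type*) [inst : ∀ i, Finite (f i)] :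
    Nat.card (Σ i, f i) = ∑ i, Nat.card (f i) := by
  letI : ∀ i, Fintype (f i) := fun i => Fintype.ofFinite _
  simp only [Nat.card_eq_fintype_card]
  exact Fintype.card_sigma

lemma step (m : ℕ) : Nat.card (NCItype (2*m+2))
    = ∑ i : Fin (m+1), Nat.card (NCItype (2*(i:ℕ))) * Nat.card (NCItype (2*(m-(i:ℕ)))) := by
  rw [← Nat.card_eq_of_bijective (Fmap m) ⟨Fmap_inj m, Fmap_surj m⟩]
  rw [natCard_sigma]
  exact Finset.sum_congr rfl fun i _ => Nat.card_prod _ _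

lemma base : Nat.card (NCItype 0) = 1 := by
  haveI : Unique (NCItype 0) :=
    { default := ⟨1, fun i => i.elim0, fun i => i.elim0, by simp [Ccnt]⟩
      uniq := by
        rintro ⟨σ, h⟩
        exact Subtype.ext (Equiv.ext fun i => i.elim0) }
  exact Nat.card_unique

lemma main (m : ℕ) : Nat.card (NCItype (2*m)) = catalan m := by
  induction m using Nat.strong_induction_on with
  | _ m ih =>
    rcases m with _ | n
    · simpa using base
    · have h : Nat.card (NCItype (2*(n+1))) = Nat.card (NCItype (2*n+2)) := rfl
      rw [h, step n, catalan_succ]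
      refine Finset.sum_congr rfl fun i _ => ?_
      rw [ih i (by have := i.isLt; omega), ih (n - (i:ℕ)) (by omega)]

/-- The number of fixed-point-free involutions `σ` of
`{1,…,2m}` with `C_σ = 0` is the `m`-th Catalan number. -/
theorem card_fpf_involutions (m : ℕ) :
    Nat.card {σ : Equiv.Perm (Fin (2*m)) //
        (∀ i, σ (σ i) = i) ∧ (∀ i, σ i ≠ i) ∧ Ccnt σ = 0}
      = catalan m := by
  exact main m
end

section
/- For every integer n ≥ 1, Σ_{i=0}^{n−1} 2·(2i+1)·Cat(i)·Cat(n−i) = n·Cat(n+1). -/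
lemma cat_rec (n : ℕ) : (n + 2) * catalan (n+1) = 2 * (2*n+1) * catalan n := by
  have h1 := succ_mul_catalan_eq_centralBinom (n+1)
  have h2 := Nat.succ_mul_centralBinom_succ n
  have h3 := succ_mul_catalan_eq_centralBinom n
  apply Nat.eq_of_mul_eq_mul_left (show 0 < n+1 by omega)
  calc (n+1) * ((n + 2) * catalan (n+1)) = (n+1) * ((n+1+1) * catalan (n+1)) := by ring_nf
    _ = (n+1) * Nat.centralBinom (n+1) := by rw [h1]
    _ = 2 * (2*n+1) * Nat.centralBinom n := h2
    _ = 2 * (2*n+1) * ((n+1) * catalan n) := by rw [h3]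
    _ = (n+1) * (2 * (2*n+1) * catalan n) := by ring

lemma cat_conv (n : ℕ) :
    ∑ i ∈ Finset.range (n+1), catalan i * catalan (n - i) = catalan (n+1) := by
  rw [catalan_succ' n, ← Finset.Nat.sum_antidiagonal_eq_sum_range_succ
    (fun x y => catalan x * catalan y) n]

/-- `Σ_{i=0}^{n−1} 2(2i+1)·Cat(i)·Cat(n−i) = n·Cat(n+1)`. -/
theorem catalan_sum_identity (n : ℕ) (hn : 1 ≤ n) :
    ∑ i ∈ Finset.range n, 2 * (2*i+1) * catalan i * catalan (n - i)
      = n * catalan (n+1) := by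
  set S := ∑ i ∈ Finset.range n, 2 * (2*i+1) * catalan i * catalan (n - i) with hS
  set T := ∑ i ∈ Finset.range (n+1), 2 * (2*i+1) * catalan i * catalan (n - i) with hT
  have hTS : T = S + 2 * (2*n+1) * catalan n := by
    rw [hT, Finset.sum_range_succ, Nat.sub_self, catalan_zero, mul_one]
  have hrefl : T = ∑ i ∈ Finset.range (n+1),
      2 * (2*(n-i)+1) * catalan (n-i) * catalan i := by
    rw [hT, ← Finset.sum_range_reflect
      (fun i => 2 * (2*(n-i)+1) * catalan (n-i) * catalan i) (n+1)]
    apply Finset.sum_congr rfl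
    intro i hi
    have hi' : i ≤ n := by have := Finset.mem_range.mp hi; omega
    have h1 : n + 1 - 1 - i = n - i := by omega
    have h2 : n - (n - i) = i := by omega
    rw [h1, h2]
  have h2T : 2 * T = (4*n+4) * catalan (n+1) := by
    have : T + T = ∑ i ∈ Finset.range (n+1), (4*n+4) * (catalan i * catalan (n-i)) := by
      nth_rewrite 2 [hrefl]
      rw [hT, ← Finset.sum_add_distrib]
      apply Finset.sum_congr rfl
      intro i hi
      have hi' : i ≤ n := by have := Finset.mem_range.mp hi; omega
      have : 2*(2*i+1) + 2*(2*(n-i)+1) = 4*n+4 := by omega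
      calc 2 * (2*i+1) * catalan i * catalan (n-i)
            + 2 * (2*(n-i)+1) * catalan (n-i) * catalan i
          = (2*(2*i+1) + 2*(2*(n-i)+1)) * (catalan i * catalan (n-i)) := by ring
        _ = (4*n+4) * (catalan i * catalan (n-i)) := by rw [this]
    rw [two_mul, this, ← Finset.mul_sum, cat_conv]
  have hrec := cat_rec n
  -- 2*(S + 2*(2n+1)*catalan n) = (4n+4)*catalan(n+1)
  rw [hTS] at h2T
  have key : 2 * S + 2 * ((n+2) * catalan (n+1)) = (4*n+4) * catalan (n+1) := by
    rw [hrec]; omega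
  have hC := catalan (n+1)
  generalize hc : catalan (n+1) = C at key ⊢
  have hA : (n+2) * C = n * C + 2 * C := by ring
  have hB : (4*n+4) * C = 4 * (n*C) + 4 * C := by ring
  rw [hA, hB] at key
  omega
end

section
/- For every positive integer g and every permutation σ of {1,…,g}, writing a_i = σ(i): (i) #{(i,j) ∈ {1,…,g}² : i ≤ j < a_i and a_j > j} = #{(i,j) ∈ {1,…,g}² : a_i < a_j ≤ i and a_j > j}; and (ii) #{(i,j) ∈ {1,…,g}² : i ≤ j < a_i and a_j ≤ j} = #{(i,j) ∈ {1,…,g}² : a_i < a_j ≤ i and a_j ≤ j}. -/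
open Finset

namespace ClarkeAux

variable {g : ℕ} (σ : Equiv.Perm (Fin g))

/-- number of `i` with `i < k ≤ σ i`, as an integer. -/
def F (k : ℕ) : ℤ :=
  ((univ.filter fun i : Fin g => (i : ℕ) < k ∧ k ≤ (σ i : ℕ)).card : ℤ)

lemma F_zero : F σ 0 = 0 := by simp [F]

lemma F_top : F σ g = 0 := by
  have : (univ.filter fun i : Fin g => (i : ℕ) < g ∧ g ≤ (σ i : ℕ)) = ∅ := by
    apply Finset.filter_eq_empty_iff.mpr
    intro i _
    have := (σ i).is_lt
    omega
  rw [F, this]; simp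

lemma card_lt_eq (k : ℕ) :
    (univ.filter fun i : Fin g => (σ i : ℕ) < k).card
      = (univ.filter fun i : Fin g => (i : ℕ) < k).card := by
  apply Finset.card_bij (fun i _ => σ i)
  · intro i hi; simp only [mem_filter, mem_univ, true_and] at hi ⊢; exact hi
  · intro a _ b _ h; exact σ.injective h
  · intro b hb
    refine ⟨σ.symm b, ?_, by simp⟩
    simp only [mem_filter, mem_univ, true_and] at hb ⊢
    simpa using hb

/-- `F k` also counts `i` with `σ i < k ≤ i`. -/
lemma F_eq_G (k : ℕ) :
    F σ k = ((univ.filter fun i : Fin g => (σ i : ℕ) < k ∧ k ≤ (i : ℕ)).card : ℤ) := by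
  have h1 : (univ.filter fun i : Fin g => ((i : ℕ) < k) ∧ k ≤ (σ i : ℕ)).card
      + (univ.filter fun i : Fin g => ((i : ℕ) < k) ∧ ¬ k ≤ (σ i : ℕ)).card
      = (univ.filter fun i : Fin g => (i : ℕ) < k).card := by
    rw [← Finset.filter_filter, ← Finset.filter_filter]
    exact Finset.card_filter_add_card_filter_not _
  have h2 : (univ.filter fun i : Fin g => ((σ i : ℕ) < k) ∧ k ≤ (i : ℕ)).card
      + (univ.filter fun i : Fin g => ((σ i : ℕ) < k) ∧ ¬ k ≤ (i : ℕ)).card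
      = (univ.filter fun i : Fin g => (σ i : ℕ) < k).card := by
    rw [← Finset.filter_filter, ← Finset.filter_filter]
    exact Finset.card_filter_add_card_filter_not _
  have h3 : (univ.filter fun i : Fin g => ((i : ℕ) < k) ∧ ¬ k ≤ (σ i : ℕ))
      = (univ.filter fun i : Fin g => ((σ i : ℕ) < k) ∧ ¬ k ≤ (i : ℕ)) := by
    ext i; simp only [mem_filter, mem_univ, true_and]; omega
  have h4 := card_lt_eq σ k
  rw [h3] at h1
  simp only [F]
  omega

lemma stepF (k : Fin g) :
    F σ ((k : ℕ) + 1) = F σ (k : ℕ)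
      + (if (k : ℕ) < (σ k : ℕ) then 1 else 0)
      - (if ((σ.symm k : Fin g) : ℕ) < (k : ℕ) then 1 else 0) := by
  set T : Finset (Fin g) :=
    univ.filter fun i : Fin g => (i : ℕ) ≤ (k : ℕ) ∧ (k : ℕ) ≤ (σ i : ℕ) with hT
  have h1 : (univ.filter fun i : Fin g => (i : ℕ) < (k : ℕ) + 1 ∧ (k : ℕ) + 1 ≤ (σ i : ℕ))
      = T.filter fun i => ¬ σ i = k := by
    rw [hT, Finset.filter_filter]
    ext i
    simp only [mem_filter, mem_univ, true_and, Fin.ext_iff]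
    omega
  have h2 : (univ.filter fun i : Fin g => (i : ℕ) < (k : ℕ) ∧ (k : ℕ) ≤ (σ i : ℕ))
      = T.filter fun i => ¬ i = k := by
    rw [hT, Finset.filter_filter]
    ext i
    simp only [mem_filter, mem_univ, true_and, Fin.ext_iff]
    omega
  have c1 : (T.filter fun i => σ i = k).card
      + (univ.filter fun i : Fin g => (i : ℕ) < (k : ℕ) + 1 ∧ (k : ℕ) + 1 ≤ (σ i : ℕ)).card
      = T.card := by
    rw [h1]; exact Finset.card_filter_add_card_filter_not _
  have c2 : (T.filter fun i => i = k).card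
      + (univ.filter fun i : Fin g => (i : ℕ) < (k : ℕ) ∧ (k : ℕ) ≤ (σ i : ℕ)).card
      = T.card := by
    rw [h2]; exact Finset.card_filter_add_card_filter_not _
  have h3 : (T.filter fun i => σ i = k)
      = if ((σ.symm k : Fin g) : ℕ) ≤ (k : ℕ) then {σ.symm k} else ∅ := by
    ext i
    have hiff : σ i = k ↔ i = σ.symm k := by
      constructor
      · intro h; simp [← h]
      · rintro rfl; simp
    by_cases h : ((σ.symm k : Fin g) : ℕ) ≤ (k : ℕ)
    · simp only [hT, if_pos h, mem_filter, mem_univ, true_and, mem_singleton, hiff]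
      constructor
      · rintro ⟨_, h2⟩; exact h2
      · rintro rfl; exact ⟨⟨h, by simp⟩, rfl⟩
    · simp only [hT, if_neg h, mem_filter, mem_univ, true_and, notMem_empty, iff_false]
      rintro ⟨⟨h1, _⟩, h2⟩
      rw [hiff] at h2
      subst h2
      exact h h1
  have h4 : (T.filter fun i => i = k)
      = if (k : ℕ) ≤ (σ k : ℕ) then {k} else ∅ := by
    ext i
    by_cases h : (k : ℕ) ≤ (σ k : ℕ)
    · simp only [hT, if_pos h, mem_filter, mem_univ, true_and, mem_singleton]
      constructor
      · rintro ⟨_, h2⟩; exact h2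
      · rintro rfl; exact ⟨⟨le_refl _, h⟩, rfl⟩
    · simp only [hT, if_neg h, mem_filter, mem_univ, true_and, notMem_empty, iff_false]
      rintro ⟨⟨_, h2⟩, rfl⟩
      exact h h2
  have hc3 : (T.filter fun i => σ i = k).card
      = if ((σ.symm k : Fin g) : ℕ) ≤ (k : ℕ) then 1 else 0 := by
    rw [h3]; split_ifs <;> simp
  have hc4 : (T.filter fun i => i = k).card
      = if (k : ℕ) ≤ (σ k : ℕ) then 1 else 0 := by
    rw [h4]; split_ifs <;> simp
  have hsymm : ((σ.symm k : Fin g) : ℕ) = (k : ℕ) ↔ (k : ℕ) = ((σ k : Fin g) : ℕ) := by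
    rw [← Fin.ext_iff, ← Fin.ext_iff]
    exact Equiv.symm_apply_eq σ
  rw [hc3] at c1
  rw [hc4] at c2
  simp only [F]
  split_ifs at c1 c2 ⊢ <;> push_cast <;> omega

lemma card_filter_prod (P : Fin g × Fin g → Prop) [DecidablePred P] :
    ((univ.filter P).card : ℤ)
      = ∑ j : Fin g, ((univ.filter fun i : Fin g => P (i, j)).card : ℤ) := by
  rw [Finset.card_filter]
  push_cast
  rw [Fintype.sum_prod_type_right]
  refine Finset.sum_congr rfl fun j _ => ?_
  rw [Finset.card_filter]
  push_cast [Finset.card_filter]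
  rfl


lemma sum_step_zero :
    ∑ j : Fin g, (F σ ((j : ℕ) + 1) - F σ (j : ℕ)) = 0 := by
  rw [Fin.sum_univ_eq_sum_range (fun k => F σ (k + 1) - F σ k) g]
  rw [Finset.sum_range_sub (fun k => F σ k) g]
  rw [F_top, F_zero]
  ring

lemma sum_sq_zero :
    ∑ j : Fin g, ((F σ ((j : ℕ) + 1)) ^ 2 - (F σ (j : ℕ)) ^ 2) = 0 := by
  rw [Fin.sum_univ_eq_sum_range (fun k => (F σ (k + 1)) ^ 2 - (F σ k) ^ 2) g]
  rw [Finset.sum_range_sub (fun k => (F σ k) ^ 2) g]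
  rw [F_top, F_zero]
  ring

lemma key :
    ∑ j : Fin g, (if (j : ℕ) < (σ j : ℕ) then F σ ((j : ℕ) + 1) else 0)
      = ∑ j : Fin g, (if ((σ.symm j : Fin g) : ℕ) < (j : ℕ) then F σ (j : ℕ) else 0) := by
  have pt : ∀ j : Fin g,
      2 * ((if (j : ℕ) < (σ j : ℕ) then F σ ((j : ℕ) + 1) else 0)
        - (if ((σ.symm j : Fin g) : ℕ) < (j : ℕ) then F σ (j : ℕ) else 0))
      = ((F σ ((j : ℕ) + 1)) ^ 2 - (F σ (j : ℕ)) ^ 2)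
        + (F σ ((j : ℕ) + 1) - F σ (j : ℕ)) := by
    intro j
    have h := stepF σ j
    split_ifs with h1 h2 h2 <;> simp only [if_pos, if_neg, h1, h2, if_true, if_false] at h <;>
      rw [h] <;> ring
  have hs : ∑ j : Fin g,
      2 * ((if (j : ℕ) < (σ j : ℕ) then F σ ((j : ℕ) + 1) else 0)
        - (if ((σ.symm j : Fin g) : ℕ) < (j : ℕ) then F σ (j : ℕ) else 0)) = 0 := by
    rw [Finset.sum_congr rfl fun j _ => pt j, Finset.sum_add_distrib,
      sum_sq_zero, sum_step_zero]
    ring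
  rw [← Finset.mul_sum, Finset.sum_sub_distrib] at hs
  omega

end ClarkeAux

open ClarkeAux Finset in
/-- (Clarke's lemma) For a permutation `σ` of `{1,…,g}`,
writing `a_i = σ(i)`:
(i) `#{(i,j) : i ≤ j < a_i, a_j > j} = #{(i,j) : a_i < a_j ≤ i, a_j > j}`;
(ii) `#{(i,j) : i ≤ j < a_i, a_j ≤ j} = #{(i,j) : a_i < a_j ≤ i, a_j ≤ j}`. -/
theorem clarke_lemma (g : ℕ) (hg : 1 ≤ g) (σ : Equiv.Perm (Fin g)) :
    (Finset.univ.filter (fun p : Fin g × Fin g =>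
        p.1 ≤ p.2 ∧ p.2 < σ p.1 ∧ p.2 < σ p.2)).card
      = (Finset.univ.filter (fun p : Fin g × Fin g =>
        σ p.1 < σ p.2 ∧ σ p.2 ≤ p.1 ∧ p.2 < σ p.2)).card
    ∧
    (Finset.univ.filter (fun p : Fin g × Fin g =>
        p.1 ≤ p.2 ∧ p.2 < σ p.1 ∧ σ p.2 ≤ p.2)).card
      = (Finset.univ.filter (fun p : Fin g × Fin g =>
        σ p.1 < σ p.2 ∧ σ p.2 ≤ p.1 ∧ σ p.2 ≤ p.2)).card := by
  -- names for the four cardinalities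
  set A := (Finset.univ.filter (fun p : Fin g × Fin g =>
      p.1 ≤ p.2 ∧ p.2 < σ p.1 ∧ p.2 < σ p.2)).card with hAdef
  set B := (Finset.univ.filter (fun p : Fin g × Fin g =>
      σ p.1 < σ p.2 ∧ σ p.2 ≤ p.1 ∧ p.2 < σ p.2)).card with hBdef
  set C := (Finset.univ.filter (fun p : Fin g × Fin g =>
      p.1 ≤ p.2 ∧ p.2 < σ p.1 ∧ σ p.2 ≤ p.2)).card with hCdef
  set D := (Finset.univ.filter (fun p : Fin g × Fin g =>
      σ p.1 < σ p.2 ∧ σ p.2 ≤ p.1 ∧ σ p.2 ≤ p.2)).card with hDdef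
  set AC := (Finset.univ.filter (fun p : Fin g × Fin g =>
      p.1 ≤ p.2 ∧ p.2 < σ p.1)).card with hACdef
  set BD := (Finset.univ.filter (fun p : Fin g × Fin g =>
      σ p.1 < σ p.2 ∧ σ p.2 ≤ p.1)).card with hBDdef
  -- fiberwise expressions
  have hA : (A : ℤ) = ∑ j : Fin g,
      (if (j : ℕ) < (σ j : ℕ) then F σ ((j : ℕ) + 1) else 0) := by
    rw [hAdef, card_filter_prod]
    refine Finset.sum_congr rfl fun j _ => ?_
    by_cases h : (j : ℕ) < (σ j : ℕ)
    · rw [if_pos h]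
      simp only [F]
      congr 2
      ext i
      simp only [mem_filter, mem_univ, true_and, Fin.le_def, Fin.lt_def]
      omega
    · rw [if_neg h]
      rw [Finset.filter_eq_empty_iff.mpr ?_]
      · simp
      · intro i _
        simp only [Fin.lt_def, Fin.le_def]
        tauto
  have hB : (B : ℤ) = ∑ j : Fin g,
      (if ((σ.symm j : Fin g) : ℕ) < (j : ℕ) then F σ (j : ℕ) else 0) := by
    rw [hBdef, card_filter_prod]
    have h1 : ∀ j : Fin g,
        ((univ.filter fun i : Fin g => σ i < σ j ∧ σ j ≤ i ∧ (j : Fin g) < σ j).card : ℤ)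
          = (if (j : ℕ) < (σ j : ℕ) then F σ ((σ j : ℕ)) else 0) := by
      intro j
      by_cases h : (j : ℕ) < (σ j : ℕ)
      · rw [if_pos h, F_eq_G]
        congr 2
        ext i
        simp only [mem_filter, mem_univ, true_and, Fin.le_def, Fin.lt_def]
        constructor
        · rintro ⟨a, b, _⟩; exact ⟨a, b⟩
        · rintro ⟨a, b⟩; exact ⟨a, b, h⟩
      · rw [if_neg h]
        rw [Finset.filter_eq_empty_iff.mpr ?_]
        · simp
        · intro i _
          simp only [Fin.lt_def, Fin.le_def]
          tauto
    rw [Finset.sum_congr rfl fun j _ => h1 j]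
    have h2 : ∀ j : Fin g,
        (if (j : ℕ) < (σ j : ℕ) then F σ ((σ j : ℕ)) else 0)
          = (fun m : Fin g =>
              if ((σ.symm m : Fin g) : ℕ) < (m : ℕ) then F σ (m : ℕ) else 0) (σ j) := by
      intro j
      simp only [Equiv.symm_apply_apply]
    rw [Finset.sum_congr rfl fun j _ => h2 j]
    exact Equiv.sum_comp σ (fun m : Fin g =>
      if ((σ.symm m : Fin g) : ℕ) < (m : ℕ) then F σ (m : ℕ) else 0)
  -- part (i)
  have hAB : A = B := by
    have : (A : ℤ) = (B : ℤ) := by rw [hA, hB]; exact key σ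
    exact_mod_cast this
  -- totals
  have hAC : (AC : ℤ) = ∑ j : Fin g, F σ ((j : ℕ) + 1) := by
    rw [hACdef, card_filter_prod]
    refine Finset.sum_congr rfl fun j _ => ?_
    simp only [F]
    congr 2
    ext i
    simp only [mem_filter, mem_univ, true_and, Fin.le_def, Fin.lt_def]
    omega
  have hBD : (BD : ℤ) = ∑ j : Fin g, F σ (j : ℕ) := by
    rw [hBDdef, card_filter_prod]
    have h1 : ∀ j : Fin g,
        ((univ.filter fun i : Fin g => σ i < σ j ∧ σ j ≤ i).card : ℤ)
          = F σ ((σ j : ℕ)) := by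
      intro j
      have he : (univ.filter fun i : Fin g => σ i < σ j ∧ σ j ≤ i)
          = (univ.filter fun i : Fin g => (σ i : ℕ) < (σ j : ℕ) ∧ (σ j : ℕ) ≤ (i : ℕ)) := by
        ext i
        simp only [mem_filter, mem_univ, true_and, Fin.le_def, Fin.lt_def]
      rw [F_eq_G, he]
    rw [Finset.sum_congr rfl fun j _ => h1 j]
    exact Equiv.sum_comp σ (fun m : Fin g => F σ (m : ℕ))
  have hACBD : AC = BD := by
    have h0 := sum_step_zero σ
    rw [Finset.sum_sub_distrib] at h0
    have : (AC : ℤ) = (BD : ℤ) := by rw [hAC, hBD]; omega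
    exact_mod_cast this
  -- splittings
  have hsplit1 : A + C = AC := by
    have e1 : (univ.filter (fun p : Fin g × Fin g =>
        p.1 ≤ p.2 ∧ p.2 < σ p.1)).filter (fun p => p.2 < σ p.2)
        = univ.filter (fun p : Fin g × Fin g =>
          p.1 ≤ p.2 ∧ p.2 < σ p.1 ∧ p.2 < σ p.2) := by
      rw [Finset.filter_filter]
      ext p
      simp only [mem_filter, mem_univ, true_and]
      tauto
    have e2 : (univ.filter (fun p : Fin g × Fin g =>
        p.1 ≤ p.2 ∧ p.2 < σ p.1)).filter (fun p => ¬ p.2 < σ p.2)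
        = univ.filter (fun p : Fin g × Fin g =>
          p.1 ≤ p.2 ∧ p.2 < σ p.1 ∧ σ p.2 ≤ p.2) := by
      rw [Finset.filter_filter]
      ext p
      simp only [mem_filter, mem_univ, true_and, not_lt]
      tauto
    have := Finset.card_filter_add_card_filter_not
      (s := univ.filter (fun p : Fin g × Fin g => p.1 ≤ p.2 ∧ p.2 < σ p.1))
      (p := fun p => p.2 < σ p.2)
    rw [e1, e2] at this
    rw [hAdef, hCdef, hACdef]
    exact this
  have hsplit2 : B + D = BD := by
    have e1 : (univ.filter (fun p : Fin g × Fin g =>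
        σ p.1 < σ p.2 ∧ σ p.2 ≤ p.1)).filter (fun p => p.2 < σ p.2)
        = univ.filter (fun p : Fin g × Fin g =>
          σ p.1 < σ p.2 ∧ σ p.2 ≤ p.1 ∧ p.2 < σ p.2) := by
      rw [Finset.filter_filter]
      ext p
      simp only [mem_filter, mem_univ, true_and]
      tauto
    have e2 : (univ.filter (fun p : Fin g × Fin g =>
        σ p.1 < σ p.2 ∧ σ p.2 ≤ p.1)).filter (fun p => ¬ p.2 < σ p.2)
        = univ.filter (fun p : Fin g × Fin g =>
          σ p.1 < σ p.2 ∧ σ p.2 ≤ p.1 ∧ σ p.2 ≤ p.2) := by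
      rw [Finset.filter_filter]
      ext p
      simp only [mem_filter, mem_univ, true_and, not_lt]
      tauto
    have := Finset.card_filter_add_card_filter_not
      (s := univ.filter (fun p : Fin g × Fin g => σ p.1 < σ p.2 ∧ σ p.2 ≤ p.1))
      (p := fun p => p.2 < σ p.2)
    rw [e1, e2] at this
    rw [hBdef, hDdef, hBDdef]
    exact this
  exact ⟨hAB, by omega⟩
end

section
/- For every permutation σ of {1,…,g}: 2·ℓ(σ) = 4·(A_σ + A_{σ⁻¹} + B_σ) + #{i ∈ {1,…,g} : σ(i) ≠ i} if and only if σ∘σ = id and C_σ = 0. -/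
namespace EqIffInv
open Finset
variable {n : ℕ}

lemma sum_split_two (p t : Fin n) (hpt : p ≠ t) (f : Fin n → ℕ) :
    ∑ a, f a = f p + f t + ∑ a, if a ≠ p ∧ a ≠ t then f a else 0 := by
  have key : ∀ a, f a = (if a = p then f p else 0) + (if a = t then f t else 0)
      + (if a ≠ p ∧ a ≠ t then f a else 0) := by
    intro a
    by_cases h1 : a = p
    · subst h1; simp [hpt]
    · by_cases h2 : a = t
      · subst h2; simp [h1]
      · simp [h1, h2]
  calc ∑ a, f a
      = ∑ a, ((if a = p then f p else 0) + (if a = t then f t else 0)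
          + (if a ≠ p ∧ a ≠ t then f a else 0)) := Finset.sum_congr rfl (fun a _ => key a)
    _ = _ := by
        rw [Finset.sum_add_distrib, Finset.sum_add_distrib]
        simp [Finset.sum_ite_eq' Finset.univ p (fun _ => f p),
          Finset.sum_ite_eq' Finset.univ t (fun _ => f t)]

lemma card_split (Q : Fin n → Fin n → Prop) [∀ a b : Fin n, Decidable (Q a b)]
    (p t : Fin n) (hpt : p ≠ t) :
    (univ.filter fun x : Fin n × Fin n => Q x.1 x.2).card
      = (univ.filter fun x : Fin n × Fin n =>
          ((x.1 ≠ p ∧ x.1 ≠ t) ∧ (x.2 ≠ p ∧ x.2 ≠ t)) ∧ Q x.1 x.2).card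
      + (univ.filter fun b : Fin n => (b ≠ p ∧ b ≠ t) ∧ Q p b).card
      + (univ.filter fun b : Fin n => (b ≠ p ∧ b ≠ t) ∧ Q t b).card
      + (univ.filter fun a : Fin n => (a ≠ p ∧ a ≠ t) ∧ Q a p).card
      + (univ.filter fun a : Fin n => (a ≠ p ∧ a ≠ t) ∧ Q a t).card
      + ((if Q p p then 1 else 0) + (if Q p t then 1 else 0)
         + (if Q t p then 1 else 0) + (if Q t t then 1 else 0)) := by
  classical
  have hcf : ∀ (R : Fin n → Prop) [DecidablePred R],
      (univ.filter R).card = ∑ a, if R a then (1:ℕ) else 0 := by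
    intro R _; rw [Finset.card_filter]
  have hcf2 : ∀ (R : Fin n × Fin n → Prop) [DecidablePred R],
      (univ.filter R).card = ∑ a : Fin n, ∑ b : Fin n, if R (a, b) then (1:ℕ) else 0 := by
    intro R _; rw [Finset.card_filter]; exact Fintype.sum_prod_type _
  rw [hcf2]
  rw [sum_split_two p t hpt (fun a => ∑ b, if Q a b then (1:ℕ) else 0)]
  rw [sum_split_two p t hpt (fun b => if Q p b then (1:ℕ) else 0)]
  rw [sum_split_two p t hpt (fun b => if Q t b then (1:ℕ) else 0)]
  have hres : ∑ a, (if a ≠ p ∧ a ≠ t then (∑ b, if Q a b then (1:ℕ) else 0) else 0)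
      = (∑ a, if (a ≠ p ∧ a ≠ t) ∧ Q a p then (1:ℕ) else 0)
      + (∑ a, if (a ≠ p ∧ a ≠ t) ∧ Q a t then (1:ℕ) else 0)
      + (∑ a, ∑ b, if ((a ≠ p ∧ a ≠ t) ∧ (b ≠ p ∧ b ≠ t)) ∧ Q a b then (1:ℕ) else 0) := by
    rw [← Finset.sum_add_distrib, ← Finset.sum_add_distrib]
    refine Finset.sum_congr rfl (fun a _ => ?_)
    by_cases ha : a ≠ p ∧ a ≠ t
    · rw [if_pos ha, sum_split_two p t hpt (fun b => if Q a b then (1:ℕ) else 0)]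
      have g1 : (if Q a p then (1:ℕ) else 0) = if (a ≠ p ∧ a ≠ t) ∧ Q a p then 1 else 0 := by
        simp [ha]
      have g2 : (if Q a t then (1:ℕ) else 0) = if (a ≠ p ∧ a ≠ t) ∧ Q a t then 1 else 0 := by
        simp [ha]
      have g3 : ∀ b, (if b ≠ p ∧ b ≠ t then (if Q a b then (1:ℕ) else 0) else 0)
          = if ((a ≠ p ∧ a ≠ t) ∧ (b ≠ p ∧ b ≠ t)) ∧ Q a b then 1 else 0 := by
        intro b; by_cases hb : b ≠ p ∧ b ≠ t
        · simp [hb, ha]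
        · simp [hb]
      rw [g1, g2]
      exact congrArg _ (Finset.sum_congr rfl fun b _ => g3 b)
    · rw [if_neg ha]
      have g1 : (if (a ≠ p ∧ a ≠ t) ∧ Q a p then (1:ℕ) else 0) = 0 := by simp [ha]
      have g2 : (if (a ≠ p ∧ a ≠ t) ∧ Q a t then (1:ℕ) else 0) = 0 := by simp [ha]
      have g3 : ∀ b, (if ((a ≠ p ∧ a ≠ t) ∧ (b ≠ p ∧ b ≠ t)) ∧ Q a b then (1:ℕ) else 0) = 0 := by
        intro b; simp [ha]
      rw [g1, g2]
      simp only [zero_add]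
      symm
      exact Finset.sum_eq_zero fun b _ => g3 b
  rw [hres]
  rw [hcf2 (fun x : Fin n × Fin n => ((x.1 ≠ p ∧ x.1 ≠ t) ∧ (x.2 ≠ p ∧ x.2 ≠ t)) ∧ Q x.1 x.2)]
  rw [hcf (fun b : Fin n => (b ≠ p ∧ b ≠ t) ∧ Q p b)]
  rw [hcf (fun b : Fin n => (b ≠ p ∧ b ≠ t) ∧ Q t b)]
  rw [hcf (fun a : Fin n => (a ≠ p ∧ a ≠ t) ∧ Q a p)]
  rw [hcf (fun a : Fin n => (a ≠ p ∧ a ≠ t) ∧ Q a t)]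
  have e1 : ∀ a : Fin n, (if a ≠ p ∧ a ≠ t then (if Q p a then (1:ℕ) else 0) else 0)
      = if (a ≠ p ∧ a ≠ t) ∧ Q p a then (1:ℕ) else 0 := by
    intro a; by_cases h : a ≠ p ∧ a ≠ t <;> simp [h]
  have e2 : ∀ a : Fin n, (if a ≠ p ∧ a ≠ t then (if Q t a then (1:ℕ) else 0) else 0)
      = if (a ≠ p ∧ a ≠ t) ∧ Q t a then (1:ℕ) else 0 := by
    intro a; by_cases h : a ≠ p ∧ a ≠ t <;> simp [h]
  simp only [e1, e2]
  ring



lemma filter_split (P Q : Fin n → Prop) [DecidablePred P] [DecidablePred Q] :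
    (univ.filter fun x => P x).card
      = (univ.filter fun x => P x ∧ Q x).card + (univ.filter fun x => P x ∧ ¬ Q x).card := by
  rw [← Finset.filter_filter, ← Finset.filter_filter,
    Finset.card_filter_add_card_filter_not]

lemma card_lt_eq (c : Fin n) : (univ.filter fun x : Fin n => x < c).card = c.val := by
  have : (univ.filter fun x : Fin n => x < c) = Finset.Iio c := by
    ext x; simp [Finset.mem_Iio]
  rw [this, Fin.card_Iio]

lemma card_Ioo_filter (p t : Fin n) :
    (univ.filter fun x : Fin n => p < x ∧ x < t).card = (Finset.Ioo p t).card := by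
  congr 1
  ext x; simp [Finset.mem_Ioo]

lemma card_sigma_lt (σ : Equiv.Perm (Fin n)) (c : Fin n) :
    (univ.filter fun x => σ x < c).card = c.val := by
  rw [← card_lt_eq c]
  apply Finset.card_nbij' (i := fun x => σ x) (j := fun x => σ⁻¹ x) <;>
    simp [Finset.mem_filter, Set.MapsTo, Set.LeftInvOn, Set.RightInvOn, Set.EqOn]

lemma level_cross (σ : Equiv.Perm (Fin n)) (c : Fin n) :
    (univ.filter fun x => x < c ∧ ¬ (σ x < c)).card
      = (univ.filter fun x => ¬ (x < c) ∧ σ x < c).card := by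
  have h1 := filter_split (fun x : Fin n => x < c) (fun x => σ x < c)
  have h2 := filter_split (fun x : Fin n => σ x < c) (fun x => x < c)
  rw [card_lt_eq] at h1
  rw [card_sigma_lt] at h2
  have h3 : (univ.filter fun x : Fin n => σ x < c ∧ x < c).card
      = (univ.filter fun x : Fin n => x < c ∧ σ x < c).card := by
    congr 1; ext x; simp [and_comm]
  have h4 : (univ.filter fun x : Fin n => σ x < c ∧ ¬ x < c).card
      = (univ.filter fun x : Fin n => ¬ x < c ∧ σ x < c).card := by
    congr 1; ext x; simp [and_comm]
  omega

/-- reformulation of `Acnt σ⁻¹`. -/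
lemma Acnt_inv (σ : Equiv.Perm (Fin n)) :
    Acnt σ⁻¹ = (univ.filter fun x : Fin n × Fin n =>
      x.1 < x.2 ∧ σ x.2 < σ x.1 ∧ σ x.1 < x.1).card := by
  unfold Acnt
  apply Finset.card_nbij' (i := fun x => (σ⁻¹ x.2, σ⁻¹ x.1)) (j := fun x => (σ x.2, σ x.1))
  · intro x hx
    simp only [Finset.mem_coe, Finset.mem_filter, Finset.mem_univ, true_and] at hx ⊢
    refine ⟨hx.2.2, ?_, ?_⟩ <;> simp [hx.1, show x.2 < σ.symm x.2 from hx.2.1]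
  · intro x hx
    simp only [Finset.mem_coe, Finset.mem_filter, Finset.mem_univ, true_and] at hx ⊢
    refine ⟨hx.2.1, ?_, ?_⟩ <;> simp [hx.1, hx.2.2]
  · intro x hx; simp
  · intro x hx; simp

lemma invCnt_inv (σ : Equiv.Perm (Fin n)) : invCnt σ⁻¹ = invCnt σ := by
  unfold invCnt
  apply Finset.card_nbij' (i := fun x => (σ⁻¹ x.2, σ⁻¹ x.1)) (j := fun x => (σ x.2, σ x.1))
  · intro x hx
    simp only [Finset.mem_coe, Finset.mem_filter, Finset.mem_univ, true_and] at hx ⊢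
    refine ⟨hx.2, by simp [hx.1]⟩
  · intro x hx
    simp only [Finset.mem_coe, Finset.mem_filter, Finset.mem_univ, true_and] at hx ⊢
    refine ⟨hx.2, by simp [hx.1]⟩
  · intro x hx; simp
  · intro x hx; simp

lemma supp_inv (σ : Equiv.Perm (Fin n)) :
    (univ.filter fun i : Fin n => σ⁻¹ i ≠ i).card = (univ.filter fun i : Fin n => σ i ≠ i).card := by
  congr 1; ext i
  simp only [Finset.mem_filter, Finset.mem_univ, true_and, ne_eq]
  refine not_congr ⟨fun h => ?_, fun h => ?_⟩
  · have h2 := congrArg (fun z => σ z) h; simp only [Equiv.Perm.inv_def, Equiv.apply_symm_apply] at h2; rw [← h2]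
  · have h2 := congrArg (fun z => σ⁻¹ z) h; simp only [Equiv.Perm.inv_def, Equiv.symm_apply_apply] at h2 ⊢; rw [← h2]



lemma cz (R : Fin n → Prop) [DecidablePred R] (h : ∀ x, ¬ R x) :
    (univ.filter R).card = 0 := by
  rw [Finset.card_eq_zero, Finset.filter_eq_empty_iff]
  exact fun x _ => h x

lemma ccg (R S : Fin n → Prop) [DecidablePred R] [DecidablePred S] (h : ∀ x, R x ↔ S x) :
    (univ.filter R).card = (univ.filter S).card := by
  congr 1; ext x; simp only [Finset.mem_filter, Finset.mem_univ, true_and]; exact h x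

section Master
variable (σ : Equiv.Perm (Fin n)) (p m t : Fin n)

/-- component ℓ -/
lemma compL (hmt : m < t) (hpt : p < t) (hmp : m ≤ p)
    (hσt : σ t = m) (hσp : σ p = t) (htop : ∀ j, t < j → σ j = j) :
    invCnt σ + (univ.filter fun x : Fin n => x < p ∧ m < σ x).card
        + (univ.filter fun x : Fin n => p < x ∧ x < t ∧ σ x < m).card
      = invCnt (σ * Equiv.swap p t) + (Finset.Ioo p t).card + 1
        + (univ.filter fun x : Fin n => x < t ∧ x ≠ p ∧ m < σ x).card := by
  have hσinj := σ.injective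
  have hptne : p ≠ t := ne_of_lt hpt
  have hmtne : m ≠ t := ne_of_lt hmt
  have hs2p : (σ * Equiv.swap p t) p = m := by
    simp [Equiv.Perm.mul_apply, Equiv.swap_apply_left, hσt]
  have hs2t : (σ * Equiv.swap p t) t = t := by
    simp [Equiv.Perm.mul_apply, Equiv.swap_apply_right, hσp]
  have hs2o : ∀ x, x ≠ p → x ≠ t → (σ * Equiv.swap p t) x = σ x := by
    intro x h1 h2
    simp [Equiv.Perm.mul_apply, Equiv.swap_apply_of_ne_of_ne h1 h2]
  have hfix : ∀ x : Fin n, t < σ x → t < x := by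
    intro x hx
    have := htop _ hx
    have := hσinj this
    rwa [this] at hx
  have hlt : ∀ x : Fin n, x ≤ t → x ≠ p → σ x < t := by
    intro x hxt hxp
    rcases lt_trichotomy (σ x) t with h | h | h
    · exact h
    · exact absurd (hσinj (h.trans hσp.symm)) hxp
    · exact absurd hxt (not_le_of_gt (hfix x h))
  have H1 := card_split (fun a b : Fin n => a < b ∧ σ b < σ a) p t hptne
  have H2 := card_split (fun a b : Fin n => a < b ∧ (σ * Equiv.swap p t) b < (σ * Equiv.swap p t) a) p t hptne
  simp only [hσp, hσt, hs2p, hs2t, hpt, hmt, lt_self_iff_false, lt_asymm hpt,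
    false_and, and_false, and_true, true_and, and_self, if_false, if_true, lt_asymm hmt,
    add_zero, zero_add] at H1 H2
  -- H1 boundary pieces
  have e1 : (univ.filter fun b : Fin n => (b ≠ p ∧ b ≠ t) ∧ p < b ∧ σ b < t).card
      = (Finset.Ioo p t).card := by
    rw [← card_Ioo_filter]
    apply ccg
    intro b
    constructor
    · rintro ⟨⟨hbp, hbt⟩, hpb, hblt⟩
      refine ⟨hpb, ?_⟩
      rcases lt_trichotomy b t with h | h | h
      · exact h
      · exact absurd h hbt
      · exact absurd (htop b h ▸ hblt) (lt_asymm h)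
    · rintro ⟨hpb, hbt⟩
      exact ⟨⟨hpb.ne', hbt.ne⟩, hpb, hlt b hbt.le hpb.ne'⟩
  have e2 : (univ.filter fun b : Fin n => (b ≠ p ∧ b ≠ t) ∧ t < b ∧ σ b < m).card = 0 := by
    apply cz
    rintro b ⟨⟨hbp, hbt⟩, htb, hlt2⟩
    rw [htop b htb] at hlt2
    exact absurd (hlt2.trans (hmt.trans htb)) (lt_irrefl b)
  have e3 : (univ.filter fun a : Fin n => (a ≠ p ∧ a ≠ t) ∧ a < p ∧ t < σ a).card = 0 := by
    apply cz
    rintro a ⟨⟨hap, hat⟩, hap2, hta⟩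
    exact absurd (hlt a (hap2.trans hpt).le hap) (lt_asymm hta)
  have e4 : (univ.filter fun a : Fin n => (a ≠ p ∧ a ≠ t) ∧ a < t ∧ m < σ a).card
      = (univ.filter fun x : Fin n => x < t ∧ x ≠ p ∧ m < σ x).card := by
    apply ccg
    intro a
    constructor
    · rintro ⟨⟨hap, hat⟩, h1, h2⟩; exact ⟨h1, hap, h2⟩
    · rintro ⟨h1, h2, h3⟩; exact ⟨⟨h2, h1.ne⟩, h1, h3⟩
  -- H2 boundary pieces
  have f1 : (univ.filter fun b : Fin n => (b ≠ p ∧ b ≠ t) ∧ p < b ∧ (σ * Equiv.swap p t) b < m).card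
      = (univ.filter fun x : Fin n => p < x ∧ x < t ∧ σ x < m).card := by
    apply ccg
    intro b
    constructor
    · rintro ⟨⟨hbp, hbt⟩, hpb, hlt2⟩
      rw [hs2o b hbp hbt] at hlt2
      refine ⟨hpb, ?_, hlt2⟩
      rcases lt_trichotomy b t with h | h | h
      · exact h
      · exact absurd h hbt
      · exact absurd ((htop b h ▸ hlt2).trans (hmt.trans h)) (lt_irrefl b)
    · rintro ⟨hpb, hbt, hlt2⟩
      exact ⟨⟨hpb.ne', hbt.ne⟩, hpb, by rwa [hs2o b hpb.ne' hbt.ne]⟩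
  have f2 : (univ.filter fun b : Fin n => (b ≠ p ∧ b ≠ t) ∧ t < b ∧ (σ * Equiv.swap p t) b < t).card = 0 := by
    apply cz
    rintro b ⟨⟨hbp, hbt⟩, htb, hlt2⟩
    rw [hs2o b hbp hbt, htop b htb] at hlt2
    exact absurd (hlt2.trans htb) (lt_irrefl b)
  have f3 : (univ.filter fun a : Fin n => (a ≠ p ∧ a ≠ t) ∧ a < p ∧ m < (σ * Equiv.swap p t) a).card
      = (univ.filter fun x : Fin n => x < p ∧ m < σ x).card := by
    apply ccg
    intro a
    constructor
    · rintro ⟨⟨hap, hat⟩, h1, h2⟩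
      rw [hs2o a hap hat] at h2
      exact ⟨h1, h2⟩
    · rintro ⟨h1, h2⟩
      exact ⟨⟨h1.ne, (h1.trans hpt).ne⟩, h1, by rwa [hs2o a h1.ne (h1.trans hpt).ne]⟩
  have f4 : (univ.filter fun a : Fin n => (a ≠ p ∧ a ≠ t) ∧ a < t ∧ t < (σ * Equiv.swap p t) a).card = 0 := by
    apply cz
    rintro a ⟨⟨hap, hat⟩, h1, h2⟩
    rw [hs2o a hap hat] at h2
    exact absurd (hlt a h1.le hap) (lt_asymm h2)
  rw [e1, e2, e3, e4] at H1
  rw [f1, f2, f3, f4] at H2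
  have hinner : (univ.filter fun x : Fin n × Fin n =>
        ((x.1 ≠ p ∧ x.1 ≠ t) ∧ x.2 ≠ p ∧ x.2 ≠ t) ∧ x.1 < x.2 ∧ σ x.2 < σ x.1).card
      = (univ.filter fun x : Fin n × Fin n =>
        ((x.1 ≠ p ∧ x.1 ≠ t) ∧ x.2 ≠ p ∧ x.2 ≠ t)
          ∧ x.1 < x.2 ∧ (σ * Equiv.swap p t) x.2 < (σ * Equiv.swap p t) x.1).card := by
    congr 1
    ext x
    simp only [Finset.mem_filter, Finset.mem_univ, true_and]
    constructor
    · rintro ⟨⟨⟨h1, h2⟩, h3, h4⟩, h5, h6⟩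
      exact ⟨⟨⟨h1, h2⟩, h3, h4⟩, h5, by rwa [hs2o x.1 h1 h2, hs2o x.2 h3 h4]⟩
    · rintro ⟨⟨⟨h1, h2⟩, h3, h4⟩, h5, h6⟩
      rw [hs2o x.1 h1 h2, hs2o x.2 h3 h4] at h6
      exact ⟨⟨⟨h1, h2⟩, h3, h4⟩, h5, h6⟩
  unfold invCnt
  omega

end Master


section Comp
variable (σ : Equiv.Perm (Fin n)) (p m t : Fin n)

/-- component A -/
lemma compA (hmt : m < t) (hpt : p < t) (hmp : m ≤ p)
    (hσt : σ t = m) (hσp : σ p = t) (htop : ∀ j, t < j → σ j = j) :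
    Acnt σ = Acnt (σ * Equiv.swap p t)
      + (univ.filter fun x : Fin n => p < x ∧ x < t ∧ x < σ x).card := by
  have hσinj := σ.injective
  have hptne : p ≠ t := ne_of_lt hpt
  have hmtne : m ≠ t := ne_of_lt hmt
  have hs2p : (σ * Equiv.swap p t) p = m := by
    simp [Equiv.Perm.mul_apply, Equiv.swap_apply_left, hσt]
  have hs2t : (σ * Equiv.swap p t) t = t := by
    simp [Equiv.Perm.mul_apply, Equiv.swap_apply_right, hσp]
  have hs2o : ∀ x, x ≠ p → x ≠ t → (σ * Equiv.swap p t) x = σ x := by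
    intro x h1 h2
    simp [Equiv.Perm.mul_apply, Equiv.swap_apply_of_ne_of_ne h1 h2]
  have hfix : ∀ x : Fin n, t < σ x → t < x := by
    intro x hx
    have h0 := htop _ hx
    have h1 := hσinj h0
    rwa [h1] at hx
  have hlt : ∀ x : Fin n, x ≤ t → x ≠ p → σ x < t := by
    intro x hxt hxp
    rcases lt_trichotomy (σ x) t with h | h | h
    · exact h
    · exact absurd (hσinj (h.trans hσp.symm)) hxp
    · exact absurd hxt (not_le_of_gt (hfix x h))
  have H1 := card_split (fun a b : Fin n => a < b ∧ b < σ b ∧ σ b < σ a) p t hptne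
  have H2 := card_split (fun a b : Fin n => a < b ∧ b < (σ * Equiv.swap p t) b
      ∧ (σ * Equiv.swap p t) b < (σ * Equiv.swap p t) a) p t hptne
  simp only [hσp, hσt, hs2p, hs2t, hpt, hmt, lt_self_iff_false, lt_asymm hpt, lt_asymm hmt,
    not_lt.mpr hmp, Ne.symm hptne, Ne.symm hmtne, hptne, hmtne,
    false_and, and_false, and_true, true_and, and_self, if_false, if_true,
    add_zero, zero_add, Finset.filter_false, Finset.card_empty] at H1 H2
  have e1 : (univ.filter fun b : Fin n => (b ≠ p ∧ b ≠ t) ∧ p < b ∧ b < σ b ∧ σ b < t).card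
      = (univ.filter fun x : Fin n => p < x ∧ x < t ∧ x < σ x).card := by
    apply ccg
    intro b
    constructor
    · rintro ⟨⟨hbp, hbt⟩, h1, h2, h3⟩
      exact ⟨h1, h2.trans h3, h2⟩
    · rintro ⟨h1, h2, h3⟩
      exact ⟨⟨h1.ne', h2.ne⟩, h1, h3, hlt b h2.le h1.ne'⟩
  have e2 : (univ.filter fun b : Fin n => (b ≠ p ∧ b ≠ t) ∧ t < b ∧ b < σ b ∧ σ b < m).card = 0 := by
    apply cz
    rintro b ⟨⟨hbp, hbt⟩, h1, h2, h3⟩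
    rw [htop b h1] at h2
    exact absurd h2 (lt_irrefl b)
  have e3 : (univ.filter fun a : Fin n => (a ≠ p ∧ a ≠ t) ∧ a < p ∧ t < σ a).card = 0 := by
    apply cz
    rintro a ⟨⟨hap, hat⟩, h1, h2⟩
    exact absurd (hlt a (h1.trans hpt).le hap) (lt_asymm h2)
  have f1 : (univ.filter fun b : Fin n => (b ≠ p ∧ b ≠ t) ∧ p < b ∧ b < (σ * Equiv.swap p t) b
      ∧ (σ * Equiv.swap p t) b < m).card = 0 := by
    apply cz
    rintro b ⟨⟨hbp, hbt⟩, h1, h2, h3⟩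
    rw [hs2o b hbp hbt] at h2 h3
    exact absurd ((h2.trans h3).trans (hmp.trans_lt h1)) (lt_irrefl b)
  have f2 : (univ.filter fun b : Fin n => (b ≠ p ∧ b ≠ t) ∧ t < b ∧ b < (σ * Equiv.swap p t) b
      ∧ (σ * Equiv.swap p t) b < t).card = 0 := by
    apply cz
    rintro b ⟨⟨hbp, hbt⟩, h1, h2, h3⟩
    rw [hs2o b hbp hbt, htop b h1] at h2
    exact absurd h2 (lt_irrefl b)
  have hinner : (univ.filter fun x : Fin n × Fin n =>
        ((x.1 ≠ p ∧ x.1 ≠ t) ∧ x.2 ≠ p ∧ x.2 ≠ t) ∧ x.1 < x.2 ∧ x.2 < σ x.2 ∧ σ x.2 < σ x.1).card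
      = (univ.filter fun x : Fin n × Fin n =>
        ((x.1 ≠ p ∧ x.1 ≠ t) ∧ x.2 ≠ p ∧ x.2 ≠ t) ∧ x.1 < x.2 ∧ x.2 < (σ * Equiv.swap p t) x.2
          ∧ (σ * Equiv.swap p t) x.2 < (σ * Equiv.swap p t) x.1).card := by
    congr 1
    ext x
    simp only [Finset.mem_filter, Finset.mem_univ, true_and]
    constructor
    · rintro ⟨⟨⟨h1, h2⟩, h3, h4⟩, h5, h6, h7⟩
      refine ⟨⟨⟨h1, h2⟩, h3, h4⟩, h5, ?_, ?_⟩
      · rw [hs2o x.2 h3 h4]; exact h6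
      · rw [hs2o x.2 h3 h4, hs2o x.1 h1 h2]; exact h7
    · rintro ⟨⟨⟨h1, h2⟩, h3, h4⟩, h5, h6, h7⟩
      rw [hs2o x.2 h3 h4, hs2o x.1 h1 h2] at h7
      rw [hs2o x.2 h3 h4] at h6
      exact ⟨⟨⟨h1, h2⟩, h3, h4⟩, h5, h6, h7⟩
  unfold Acnt
  omega

/-- component A' -/
lemma compA' (hmt : m < t) (hpt : p < t) (hmp : m ≤ p)
    (hσt : σ t = m) (hσp : σ p = t) (htop : ∀ j, t < j → σ j = j) :
    Acnt σ⁻¹ + (univ.filter fun x : Fin n => x < p ∧ m < σ x ∧ σ x < x).card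
      + (if p = m then 0 else (univ.filter fun x : Fin n => p < x ∧ x < t ∧ σ x < m).card)
    = Acnt (σ * Equiv.swap p t)⁻¹
      + (univ.filter fun x : Fin n => x < t ∧ x ≠ p ∧ m < σ x ∧ σ x < x).card := by
  have hσinj := σ.injective
  have hptne : p ≠ t := ne_of_lt hpt
  have hmtne : m ≠ t := ne_of_lt hmt
  have hs2p : (σ * Equiv.swap p t) p = m := by
    simp [Equiv.Perm.mul_apply, Equiv.swap_apply_left, hσt]
  have hs2t : (σ * Equiv.swap p t) t = t := by
    simp [Equiv.Perm.mul_apply, Equiv.swap_apply_right, hσp]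
  have hs2o : ∀ x, x ≠ p → x ≠ t → (σ * Equiv.swap p t) x = σ x := by
    intro x h1 h2
    simp [Equiv.Perm.mul_apply, Equiv.swap_apply_of_ne_of_ne h1 h2]
  have hfix : ∀ x : Fin n, t < σ x → t < x := by
    intro x hx
    have h0 := htop _ hx
    have h1 := hσinj h0
    rwa [h1] at hx
  have hlt : ∀ x : Fin n, x ≤ t → x ≠ p → σ x < t := by
    intro x hxt hxp
    rcases lt_trichotomy (σ x) t with h | h | h
    · exact h
    · exact absurd (hσinj (h.trans hσp.symm)) hxp
    · exact absurd hxt (not_le_of_gt (hfix x h))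
  rw [Acnt_inv σ, Acnt_inv (σ * Equiv.swap p t)]
  have H1 := card_split (fun a b : Fin n => a < b ∧ σ b < σ a ∧ σ a < a) p t hptne
  have H2 := card_split (fun a b : Fin n => a < b ∧ (σ * Equiv.swap p t) b < (σ * Equiv.swap p t) a
      ∧ (σ * Equiv.swap p t) a < a) p t hptne
  simp only [hσp, hσt, hs2p, hs2t, hpt, hmt, lt_self_iff_false, lt_asymm hpt, lt_asymm hmt,
    not_lt.mpr hmp, Ne.symm hptne, Ne.symm hmtne, hptne, hmtne,
    false_and, and_false, and_true, true_and, and_self, if_false, if_true,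
    add_zero, zero_add, Finset.filter_false, Finset.card_empty] at H1 H2
  have e1 : (univ.filter fun b : Fin n => (b ≠ p ∧ b ≠ t) ∧ t < b ∧ σ b < m).card = 0 := by
    apply cz
    rintro b ⟨⟨hbp, hbt⟩, h1, h2⟩
    rw [htop b h1] at h2
    exact absurd (h2.trans (hmt.trans h1)) (lt_irrefl b)
  have e2 : (univ.filter fun a : Fin n => (a ≠ p ∧ a ≠ t) ∧ a < p ∧ t < σ a ∧ σ a < a).card = 0 := by
    apply cz
    rintro a ⟨⟨hap, hat⟩, h1, h2, h3⟩
    exact absurd (h2.trans (h3.trans (h1.trans hpt))) (lt_irrefl t)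
  have e3 : (univ.filter fun a : Fin n => (a ≠ p ∧ a ≠ t) ∧ a < t ∧ m < σ a ∧ σ a < a).card
      = (univ.filter fun x : Fin n => x < t ∧ x ≠ p ∧ m < σ x ∧ σ x < x).card := by
    apply ccg
    intro a
    constructor
    · rintro ⟨⟨hap, hat⟩, h1, h2, h3⟩; exact ⟨h1, hap, h2, h3⟩
    · rintro ⟨h1, h2, h3, h4⟩; exact ⟨⟨h2, h1.ne⟩, h1, h3, h4⟩
  have f1 : (univ.filter fun b : Fin n => (b ≠ p ∧ b ≠ t) ∧ p < b
        ∧ (σ * Equiv.swap p t) b < m ∧ m < p).card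
      = (if p = m then 0 else (univ.filter fun x : Fin n => p < x ∧ x < t ∧ σ x < m).card) := by
    by_cases hpm : p = m
    · rw [if_pos hpm]
      apply cz
      rintro b ⟨⟨hbp, hbt⟩, h1, h2, h3⟩
      rw [hpm] at h3
      exact absurd h3 (lt_irrefl m)
    · rw [if_neg hpm]
      have hmp' : m < p := lt_of_le_of_ne hmp (fun h => hpm h.symm)
      apply ccg
      intro b
      constructor
      · rintro ⟨⟨hbp, hbt⟩, h1, h2, h3⟩
        rw [hs2o b hbp hbt] at h2
        refine ⟨h1, ?_, h2⟩
        rcases lt_trichotomy b t with h | h | h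
        · exact h
        · exact absurd h hbt
        · exact absurd ((htop b h ▸ h2).trans (hmt.trans h)) (lt_irrefl b)
      · rintro ⟨h1, h2, h3⟩
        exact ⟨⟨h1.ne', h2.ne⟩, h1, by rwa [hs2o b h1.ne' h2.ne], hmp.lt_of_ne (fun h => hpm h.symm)⟩
  have f2 : (univ.filter fun a : Fin n => (a ≠ p ∧ a ≠ t) ∧ a < p
        ∧ m < (σ * Equiv.swap p t) a ∧ (σ * Equiv.swap p t) a < a).card
      = (univ.filter fun x : Fin n => x < p ∧ m < σ x ∧ σ x < x).card := by
    apply ccg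
    intro a
    constructor
    · rintro ⟨⟨hap, hat⟩, h1, h2, h3⟩
      rw [hs2o a hap hat] at h2 h3
      exact ⟨h1, h2, h3⟩
    · rintro ⟨h1, h2, h3⟩
      refine ⟨⟨h1.ne, (h1.trans hpt).ne⟩, h1, ?_, ?_⟩
      · rwa [hs2o a h1.ne (h1.trans hpt).ne]
      · rwa [hs2o a h1.ne (h1.trans hpt).ne]
  have f3 : (univ.filter fun a : Fin n => (a ≠ p ∧ a ≠ t) ∧ a < t
        ∧ t < (σ * Equiv.swap p t) a ∧ (σ * Equiv.swap p t) a < a).card = 0 := by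
    apply cz
    rintro a ⟨⟨hap, hat⟩, h1, h2, h3⟩
    rw [hs2o a hap hat] at h2
    exact absurd (hlt a h1.le hap) (lt_asymm h2)
  have hinner : (univ.filter fun x : Fin n × Fin n =>
        ((x.1 ≠ p ∧ x.1 ≠ t) ∧ x.2 ≠ p ∧ x.2 ≠ t) ∧ x.1 < x.2 ∧ σ x.2 < σ x.1 ∧ σ x.1 < x.1).card
      = (univ.filter fun x : Fin n × Fin n =>
        ((x.1 ≠ p ∧ x.1 ≠ t) ∧ x.2 ≠ p ∧ x.2 ≠ t) ∧ x.1 < x.2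
          ∧ (σ * Equiv.swap p t) x.2 < (σ * Equiv.swap p t) x.1
          ∧ (σ * Equiv.swap p t) x.1 < x.1).card := by
    congr 1
    ext x
    simp only [Finset.mem_filter, Finset.mem_univ, true_and]
    constructor
    · rintro ⟨⟨⟨h1, h2⟩, h3, h4⟩, h5, h6, h7⟩
      refine ⟨⟨⟨h1, h2⟩, h3, h4⟩, h5, ?_, ?_⟩
      · rw [hs2o x.2 h3 h4, hs2o x.1 h1 h2]; exact h6
      · rw [hs2o x.1 h1 h2]; exact h7
    · rintro ⟨⟨⟨h1, h2⟩, h3, h4⟩, h5, h6, h7⟩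
      rw [hs2o x.2 h3 h4, hs2o x.1 h1 h2] at h6
      rw [hs2o x.1 h1 h2] at h7
      exact ⟨⟨⟨h1, h2⟩, h3, h4⟩, h5, h6, h7⟩
  omega

/-- component B -/
lemma compB (hmt : m < t) (hpt : p < t) (hmp : m ≤ p)
    (hσt : σ t = m) (hσp : σ p = t) (htop : ∀ j, t < j → σ j = j) :
    Bcnt σ + (if p = m then (univ.filter fun x : Fin n => x < p ∧ m < σ x).card else 0)
    = Bcnt (σ * Equiv.swap p t)
      + (univ.filter fun x : Fin n => p < x ∧ x < t ∧ σ x = x).card := by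
  have hσinj := σ.injective
  have hptne : p ≠ t := ne_of_lt hpt
  have hmtne : m ≠ t := ne_of_lt hmt
  have hs2p : (σ * Equiv.swap p t) p = m := by
    simp [Equiv.Perm.mul_apply, Equiv.swap_apply_left, hσt]
  have hs2t : (σ * Equiv.swap p t) t = t := by
    simp [Equiv.Perm.mul_apply, Equiv.swap_apply_right, hσp]
  have hs2o : ∀ x, x ≠ p → x ≠ t → (σ * Equiv.swap p t) x = σ x := by
    intro x h1 h2
    simp [Equiv.Perm.mul_apply, Equiv.swap_apply_of_ne_of_ne h1 h2]
  have hfix : ∀ x : Fin n, t < σ x → t < x := by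
    intro x hx
    have h0 := htop _ hx
    have h1 := hσinj h0
    rwa [h1] at hx
  have hlt : ∀ x : Fin n, x ≤ t → x ≠ p → σ x < t := by
    intro x hxt hxp
    rcases lt_trichotomy (σ x) t with h | h | h
    · exact h
    · exact absurd (hσinj (h.trans hσp.symm)) hxp
    · exact absurd hxt (not_le_of_gt (hfix x h))
  have H1 := card_split (fun a b : Fin n => a < b ∧ σ b = b ∧ b < σ a) p t hptne
  have H2 := card_split (fun a b : Fin n => a < b ∧ (σ * Equiv.swap p t) b = b
      ∧ b < (σ * Equiv.swap p t) a) p t hptne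
  simp only [hσp, hσt, hs2p, hs2t, hpt, hmt, lt_self_iff_false, lt_asymm hpt, lt_asymm hmt,
    not_lt.mpr hmp, Ne.symm hptne, Ne.symm hmtne, hptne, hmtne,
    false_and, and_false, and_true, true_and, and_self, if_false, if_true,
    add_zero, zero_add, Finset.filter_false, Finset.card_empty] at H1 H2
  have e1 : (univ.filter fun b : Fin n => (b ≠ p ∧ b ≠ t) ∧ p < b ∧ σ b = b ∧ b < t).card
      = (univ.filter fun x : Fin n => p < x ∧ x < t ∧ σ x = x).card := by
    apply ccg
    intro b
    constructor
    · rintro ⟨⟨hbp, hbt⟩, h1, h2, h3⟩; exact ⟨h1, h3, h2⟩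
    · rintro ⟨h1, h2, h3⟩; exact ⟨⟨h1.ne', h2.ne⟩, h1, h3, h2⟩
  have e2 : (univ.filter fun b : Fin n => (b ≠ p ∧ b ≠ t) ∧ t < b ∧ σ b = b ∧ b < m).card = 0 := by
    apply cz
    rintro b ⟨⟨hbp, hbt⟩, h1, h2, h3⟩
    exact absurd ((h3.trans hmt).trans h1) (lt_irrefl b)
  have f1 : (univ.filter fun b : Fin n => (b ≠ p ∧ b ≠ t) ∧ p < b
        ∧ (σ * Equiv.swap p t) b = b ∧ b < m).card = 0 := by
    apply cz
    rintro b ⟨⟨hbp, hbt⟩, h1, h2, h3⟩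
    exact absurd (h3.trans_le (hmp.trans h1.le)) (lt_irrefl b)
  have f2 : (univ.filter fun b : Fin n => (b ≠ p ∧ b ≠ t) ∧ t < b
        ∧ (σ * Equiv.swap p t) b = b ∧ b < t).card = 0 := by
    apply cz
    rintro b ⟨⟨hbp, hbt⟩, h1, h2, h3⟩
    exact absurd (h1.trans h3) (lt_irrefl t)
  have f3 : (univ.filter fun a : Fin n => (a ≠ p ∧ a ≠ t) ∧ a < p ∧ m = p
        ∧ p < (σ * Equiv.swap p t) a).card
      = (if p = m then (univ.filter fun x : Fin n => x < p ∧ m < σ x).card else 0) := by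
    by_cases hpm : p = m
    · rw [if_pos hpm]
      apply ccg
      intro a
      constructor
      · rintro ⟨⟨hap, hat⟩, h1, h2, h3⟩
        rw [hs2o a hap hat] at h3
        exact ⟨h1, hpm ▸ h3⟩
      · rintro ⟨h1, h2⟩
        refine ⟨⟨h1.ne, (h1.trans hpt).ne⟩, h1, hpm.symm, ?_⟩
        rw [hs2o a h1.ne (h1.trans hpt).ne]
        exact hpm ▸ h2
    · rw [if_neg hpm]
      apply cz
      rintro a ⟨⟨hap, hat⟩, h1, h2, h3⟩
      exact hpm h2.symm
  have f4 : (univ.filter fun a : Fin n => (a ≠ p ∧ a ≠ t) ∧ a < t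
        ∧ t < (σ * Equiv.swap p t) a).card = 0 := by
    apply cz
    rintro a ⟨⟨hap, hat⟩, h1, h2⟩
    rw [hs2o a hap hat] at h2
    exact absurd (hlt a h1.le hap) (lt_asymm h2)
  have hinner : (univ.filter fun x : Fin n × Fin n =>
        ((x.1 ≠ p ∧ x.1 ≠ t) ∧ x.2 ≠ p ∧ x.2 ≠ t) ∧ x.1 < x.2 ∧ σ x.2 = x.2 ∧ x.2 < σ x.1).card
      = (univ.filter fun x : Fin n × Fin n =>
        ((x.1 ≠ p ∧ x.1 ≠ t) ∧ x.2 ≠ p ∧ x.2 ≠ t) ∧ x.1 < x.2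
          ∧ (σ * Equiv.swap p t) x.2 = x.2 ∧ x.2 < (σ * Equiv.swap p t) x.1).card := by
    congr 1
    ext x
    simp only [Finset.mem_filter, Finset.mem_univ, true_and]
    constructor
    · rintro ⟨⟨⟨h1, h2⟩, h3, h4⟩, h5, h6, h7⟩
      refine ⟨⟨⟨h1, h2⟩, h3, h4⟩, h5, ?_, ?_⟩
      · rw [hs2o x.2 h3 h4]; exact h6
      · rw [hs2o x.1 h1 h2]; exact h7
    · rintro ⟨⟨⟨h1, h2⟩, h3, h4⟩, h5, h6, h7⟩
      rw [hs2o x.2 h3 h4] at h6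
      rw [hs2o x.1 h1 h2] at h7
      exact ⟨⟨⟨h1, h2⟩, h3, h4⟩, h5, h6, h7⟩
  unfold Bcnt
  omega

/-- component C -/
lemma compC (hmt : m < t) (hpt : p < t) (hmp : m ≤ p)
    (hσt : σ t = m) (hσp : σ p = t) (htop : ∀ j, t < j → σ j = j) :
    Ccnt σ = Ccnt (σ * Equiv.swap p t)
      + (univ.filter fun x : Fin n => x < p ∧ p < σ x ∧ σ x < t).card := by
  have hσinj := σ.injective
  have hptne : p ≠ t := ne_of_lt hpt
  have hmtne : m ≠ t := ne_of_lt hmt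
  have hs2p : (σ * Equiv.swap p t) p = m := by
    simp [Equiv.Perm.mul_apply, Equiv.swap_apply_left, hσt]
  have hs2t : (σ * Equiv.swap p t) t = t := by
    simp [Equiv.Perm.mul_apply, Equiv.swap_apply_right, hσp]
  have hs2o : ∀ x, x ≠ p → x ≠ t → (σ * Equiv.swap p t) x = σ x := by
    intro x h1 h2
    simp [Equiv.Perm.mul_apply, Equiv.swap_apply_of_ne_of_ne h1 h2]
  have hfix : ∀ x : Fin n, t < σ x → t < x := by
    intro x hx
    have h0 := htop _ hx
    have h1 := hσinj h0
    rwa [h1] at hx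
  have hlt : ∀ x : Fin n, x ≤ t → x ≠ p → σ x < t := by
    intro x hxt hxp
    rcases lt_trichotomy (σ x) t with h | h | h
    · exact h
    · exact absurd (hσinj (h.trans hσp.symm)) hxp
    · exact absurd hxt (not_le_of_gt (hfix x h))
  have H1 := card_split (fun a b : Fin n => a < b ∧ b < σ a ∧ σ a < σ b) p t hptne
  have H2 := card_split (fun a b : Fin n => a < b ∧ b < (σ * Equiv.swap p t) a
      ∧ (σ * Equiv.swap p t) a < (σ * Equiv.swap p t) b) p t hptne
  simp only [hσp, hσt, hs2p, hs2t, hpt, hmt, lt_self_iff_false, lt_asymm hpt, lt_asymm hmt,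
    not_lt.mpr hmp, Ne.symm hptne, Ne.symm hmtne, hptne, hmtne,
    false_and, and_false, and_true, true_and, and_self, if_false, if_true,
    add_zero, zero_add, Finset.filter_false, Finset.card_empty] at H1 H2
  have e1 : (univ.filter fun b : Fin n => (b ≠ p ∧ b ≠ t) ∧ p < b ∧ b < t ∧ t < σ b).card = 0 := by
    apply cz
    rintro b ⟨⟨hbp, hbt⟩, h1, h2, h3⟩
    exact absurd (hlt b h2.le hbp) (lt_asymm h3)
  have e2 : (univ.filter fun b : Fin n => (b ≠ p ∧ b ≠ t) ∧ t < b ∧ b < m ∧ m < σ b).card = 0 := by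
    apply cz
    rintro b ⟨⟨hbp, hbt⟩, h1, h2, h3⟩
    exact absurd ((h2.trans hmt).trans h1) (lt_irrefl b)
  have e3 : (univ.filter fun a : Fin n => (a ≠ p ∧ a ≠ t) ∧ a < p ∧ p < σ a ∧ σ a < t).card
      = (univ.filter fun x : Fin n => x < p ∧ p < σ x ∧ σ x < t).card := by
    apply ccg
    intro a
    constructor
    · rintro ⟨⟨hap, hat⟩, h1, h2, h3⟩; exact ⟨h1, h2, h3⟩
    · rintro ⟨h1, h2, h3⟩; exact ⟨⟨h1.ne, (h1.trans hpt).ne⟩, h1, h2, h3⟩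
  have e4 : (univ.filter fun a : Fin n => (a ≠ p ∧ a ≠ t) ∧ a < t ∧ t < σ a ∧ σ a < m).card = 0 := by
    apply cz
    rintro a ⟨⟨hap, hat⟩, h1, h2, h3⟩
    exact absurd (hlt a h1.le hap) (lt_asymm h2)
  have f1 : (univ.filter fun b : Fin n => (b ≠ p ∧ b ≠ t) ∧ p < b ∧ b < m
        ∧ m < (σ * Equiv.swap p t) b).card = 0 := by
    apply cz
    rintro b ⟨⟨hbp, hbt⟩, h1, h2, h3⟩
    exact absurd (h2.trans_le (hmp.trans h1.le)) (lt_irrefl b)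
  have f2 : (univ.filter fun b : Fin n => (b ≠ p ∧ b ≠ t) ∧ t < b ∧ b < t
        ∧ t < (σ * Equiv.swap p t) b).card = 0 := by
    apply cz
    rintro b ⟨⟨hbp, hbt⟩, h1, h2, h3⟩
    exact absurd (h1.trans h2) (lt_irrefl t)
  have f3 : (univ.filter fun a : Fin n => (a ≠ p ∧ a ≠ t) ∧ a < p ∧ p < (σ * Equiv.swap p t) a
        ∧ (σ * Equiv.swap p t) a < m).card = 0 := by
    apply cz
    rintro a ⟨⟨hap, hat⟩, h1, h2, h3⟩
    exact absurd (h2.trans h3) (not_lt.mpr hmp)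
  have f4 : (univ.filter fun a : Fin n => (a ≠ p ∧ a ≠ t) ∧ a < t ∧ t < (σ * Equiv.swap p t) a
        ∧ (σ * Equiv.swap p t) a < t).card = 0 := by
    apply cz
    rintro a ⟨⟨hap, hat⟩, h1, h2, h3⟩
    exact absurd (h2.trans h3) (lt_irrefl t)
  have hinner : (univ.filter fun x : Fin n × Fin n =>
        ((x.1 ≠ p ∧ x.1 ≠ t) ∧ x.2 ≠ p ∧ x.2 ≠ t) ∧ x.1 < x.2 ∧ x.2 < σ x.1 ∧ σ x.1 < σ x.2).card
      = (univ.filter fun x : Fin n × Fin n =>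
        ((x.1 ≠ p ∧ x.1 ≠ t) ∧ x.2 ≠ p ∧ x.2 ≠ t) ∧ x.1 < x.2
          ∧ x.2 < (σ * Equiv.swap p t) x.1 ∧ (σ * Equiv.swap p t) x.1 < (σ * Equiv.swap p t) x.2).card := by
    congr 1
    ext x
    simp only [Finset.mem_filter, Finset.mem_univ, true_and]
    constructor
    · rintro ⟨⟨⟨h1, h2⟩, h3, h4⟩, h5, h6, h7⟩
      refine ⟨⟨⟨h1, h2⟩, h3, h4⟩, h5, ?_, ?_⟩
      · rw [hs2o x.1 h1 h2]; exact h6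
      · rw [hs2o x.1 h1 h2, hs2o x.2 h3 h4]; exact h7
    · rintro ⟨⟨⟨h1, h2⟩, h3, h4⟩, h5, h6, h7⟩
      rw [hs2o x.1 h1 h2] at h6
      rw [hs2o x.1 h1 h2, hs2o x.2 h3 h4] at h7
      exact ⟨⟨⟨h1, h2⟩, h3, h4⟩, h5, h6, h7⟩
  unfold Ccnt
  omega

end Comp


section Comp2
variable (σ : Equiv.Perm (Fin n)) (p m t : Fin n)

lemma compSupp (hmt : m < t) (hpt : p < t)
    (hσt : σ t = m) (hσp : σ p = t) :
    (univ.filter fun i : Fin n => σ i ≠ i).card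
      = (univ.filter fun i : Fin n => (σ * Equiv.swap p t) i ≠ i).card
        + (if p = m then 2 else 1) := by
  have hptne : p ≠ t := ne_of_lt hpt
  have hmtne : m ≠ t := ne_of_lt hmt
  have hs2p : (σ * Equiv.swap p t) p = m := by
    simp [Equiv.Perm.mul_apply, Equiv.swap_apply_left, hσt]
  have hs2t : (σ * Equiv.swap p t) t = t := by
    simp [Equiv.Perm.mul_apply, Equiv.swap_apply_right, hσp]
  have hs2o : ∀ x, x ≠ p → x ≠ t → (σ * Equiv.swap p t) x = σ x := by
    intro x h1 h2
    simp [Equiv.Perm.mul_apply, Equiv.swap_apply_of_ne_of_ne h1 h2]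
  have htS : t ∈ univ.filter fun i : Fin n => σ i ≠ i := by
    simp only [Finset.mem_filter, Finset.mem_univ, true_and]
    rw [hσt]; exact hmtne
  by_cases hpm : p = m
  · have hset : (univ.filter fun i : Fin n => (σ * Equiv.swap p t) i ≠ i)
        = ((univ.filter fun i : Fin n => σ i ≠ i).erase t).erase p := by
      ext x
      simp only [Finset.mem_erase, Finset.mem_filter, Finset.mem_univ, true_and]
      by_cases hx1 : x = p
      · subst hx1
        simp only [hs2p, ← hpm, not_true, false_iff]
        tauto
      · by_cases hx2 : x = t
        · subst hx2
          simp only [hs2t, not_true, false_iff]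
          tauto
        · rw [hs2o x hx1 hx2]
          constructor
          · intro h; exact ⟨hx1, hx2, h⟩
          · rintro ⟨-, -, h⟩; exact h
    have hpS : p ∈ (univ.filter fun i : Fin n => σ i ≠ i).erase t := by
      simp only [Finset.mem_erase, Finset.mem_filter, Finset.mem_univ, true_and]
      exact ⟨hptne, by rw [hσp]; exact Ne.symm hptne⟩
    rw [if_pos hpm, hset]
    have c1 := Finset.card_erase_add_one hpS
    have c2 := Finset.card_erase_add_one htS
    omega
  · have hset : (univ.filter fun i : Fin n => (σ * Equiv.swap p t) i ≠ i)
        = (univ.filter fun i : Fin n => σ i ≠ i).erase t := by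
      ext x
      simp only [Finset.mem_erase, Finset.mem_filter, Finset.mem_univ, true_and]
      by_cases hx1 : x = p
      · subst hx1
        simp only [hs2p]
        constructor
        · intro h; exact ⟨hptne, by rw [hσp]; exact Ne.symm hptne⟩
        · intro h; exact fun hc => hpm hc.symm
      · by_cases hx2 : x = t
        · subst hx2
          simp only [hs2t, not_true, false_iff]
          tauto
        · rw [hs2o x hx1 hx2]
          constructor
          · intro h; exact ⟨hx2, h⟩
          · rintro ⟨-, h⟩; exact h
    rw [if_neg hpm, hset]
    have c2 := Finset.card_erase_add_one htS
    omega

lemma partP1 (hmt : m < t) (hpt : p < t) (hmp : m ≤ p)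
    (hσt : σ t = m) (hσp : σ p = t) (htop : ∀ j, t < j → σ j = j) :
    (Finset.Ioo p t).card
      = (univ.filter fun x : Fin n => p < x ∧ x < t ∧ x < σ x).card
      + (univ.filter fun x : Fin n => p < x ∧ x < t ∧ σ x = x).card
      + (univ.filter fun x : Fin n => p < x ∧ x < t ∧ σ x < m).card
      + (univ.filter fun x : Fin n => p < x ∧ x < t ∧ m < σ x ∧ σ x < x).card := by
  have hσinj := σ.injective
  rw [← card_Ioo_filter]
  have s1 := filter_split (fun x : Fin n => p < x ∧ x < t) (fun x => x < σ x)
  have s2 := filter_split (fun x : Fin n => (p < x ∧ x < t) ∧ ¬ x < σ x) (fun x => σ x = x)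
  have s3 := filter_split (fun x : Fin n => ((p < x ∧ x < t) ∧ ¬ x < σ x) ∧ ¬ σ x = x)
    (fun x => σ x < m)
  have c1 : (univ.filter fun x : Fin n => (p < x ∧ x < t) ∧ x < σ x).card
      = (univ.filter fun x : Fin n => p < x ∧ x < t ∧ x < σ x).card := by
    apply ccg; intro x; constructor
    · rintro ⟨⟨h1, h2⟩, h3⟩; exact ⟨h1, h2, h3⟩
    · rintro ⟨h1, h2, h3⟩; exact ⟨⟨h1, h2⟩, h3⟩
  have c2 : (univ.filter fun x : Fin n => ((p < x ∧ x < t) ∧ ¬ x < σ x) ∧ σ x = x).card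
      = (univ.filter fun x : Fin n => p < x ∧ x < t ∧ σ x = x).card := by
    apply ccg; intro x; constructor
    · rintro ⟨⟨⟨h1, h2⟩, h3⟩, h4⟩; exact ⟨h1, h2, h4⟩
    · rintro ⟨h1, h2, h3⟩; exact ⟨⟨⟨h1, h2⟩, by rw [h3]; exact lt_irrefl x⟩, h3⟩
  have c3 : (univ.filter fun x : Fin n => (((p < x ∧ x < t) ∧ ¬ x < σ x) ∧ ¬ σ x = x) ∧ σ x < m).card
      = (univ.filter fun x : Fin n => p < x ∧ x < t ∧ σ x < m).card := by
    apply ccg; intro x; constructor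
    · rintro ⟨⟨⟨⟨h1, h2⟩, h3⟩, h4⟩, h5⟩; exact ⟨h1, h2, h5⟩
    · rintro ⟨h1, h2, h3⟩
      have hx : σ x < x := h3.trans_le (hmp.trans h1.le)
      exact ⟨⟨⟨⟨h1, h2⟩, lt_asymm hx⟩, hx.ne⟩, h3⟩
  have c4 : (univ.filter fun x : Fin n =>
        (((p < x ∧ x < t) ∧ ¬ x < σ x) ∧ ¬ σ x = x) ∧ ¬ σ x < m).card
      = (univ.filter fun x : Fin n => p < x ∧ x < t ∧ m < σ x ∧ σ x < x).card := by
    apply ccg; intro x; constructor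
    · rintro ⟨⟨⟨⟨h1, h2⟩, h3⟩, h4⟩, h5⟩
      have hx : σ x < x := lt_of_le_of_ne (not_lt.mp h3) h4
      have hm : m < σ x := by
        rcases lt_trichotomy (σ x) m with h | h | h
        · exact absurd h h5
        · exact absurd (hσinj (h.trans hσt.symm)) h2.ne
        · exact h
      exact ⟨h1, h2, hm, hx⟩
    · rintro ⟨h1, h2, h3, h4⟩
      exact ⟨⟨⟨⟨h1, h2⟩, lt_asymm h4⟩, h4.ne⟩, lt_asymm h3⟩
  omega

lemma partP2 (hmt : m < t) (hpt : p < t) (hmp : m ≤ p)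
    (hσt : σ t = m) (hσp : σ p = t) (htop : ∀ j, t < j → σ j = j) :
    (univ.filter fun x : Fin n => x < t ∧ x ≠ p ∧ m < σ x).card
      = (univ.filter fun x : Fin n => x < p ∧ m < σ x).card
      + (univ.filter fun x : Fin n => p < x ∧ x < t ∧ x < σ x).card
      + (univ.filter fun x : Fin n => p < x ∧ x < t ∧ σ x = x).card
      + (univ.filter fun x : Fin n => p < x ∧ x < t ∧ m < σ x ∧ σ x < x).card := by
  have s1 := filter_split (fun x : Fin n => x < t ∧ x ≠ p ∧ m < σ x) (fun x => x < p)
  have s2 := filter_split (fun x : Fin n => (x < t ∧ x ≠ p ∧ m < σ x) ∧ ¬ x < p)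
    (fun x => x < σ x)
  have s3 := filter_split (fun x : Fin n => ((x < t ∧ x ≠ p ∧ m < σ x) ∧ ¬ x < p) ∧ ¬ x < σ x)
    (fun x => σ x = x)
  have c1 : (univ.filter fun x : Fin n => (x < t ∧ x ≠ p ∧ m < σ x) ∧ x < p).card
      = (univ.filter fun x : Fin n => x < p ∧ m < σ x).card := by
    apply ccg; intro x; constructor
    · rintro ⟨⟨h1, h2, h3⟩, h4⟩; exact ⟨h4, h3⟩
    · rintro ⟨h1, h2⟩; exact ⟨⟨h1.trans hpt, h1.ne, h2⟩, h1⟩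
  have c2 : (univ.filter fun x : Fin n => ((x < t ∧ x ≠ p ∧ m < σ x) ∧ ¬ x < p) ∧ x < σ x).card
      = (univ.filter fun x : Fin n => p < x ∧ x < t ∧ x < σ x).card := by
    apply ccg; intro x; constructor
    · rintro ⟨⟨⟨h1, h2, h3⟩, h4⟩, h5⟩
      exact ⟨lt_of_le_of_ne (not_lt.mp h4) (Ne.symm h2), h1, h5⟩
    · rintro ⟨h1, h2, h3⟩
      exact ⟨⟨⟨h2, h1.ne', (hmp.trans_lt h1).trans h3⟩, not_lt.mpr h1.le⟩, h3⟩
  have c3 : (univ.filter fun x : Fin n =>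
        (((x < t ∧ x ≠ p ∧ m < σ x) ∧ ¬ x < p) ∧ ¬ x < σ x) ∧ σ x = x).card
      = (univ.filter fun x : Fin n => p < x ∧ x < t ∧ σ x = x).card := by
    apply ccg; intro x; constructor
    · rintro ⟨⟨⟨⟨h1, h2, h3⟩, h4⟩, h5⟩, h6⟩
      exact ⟨lt_of_le_of_ne (not_lt.mp h4) (Ne.symm h2), h1, h6⟩
    · rintro ⟨h1, h2, h3⟩
      refine ⟨⟨⟨⟨h2, h1.ne', ?_⟩, not_lt.mpr h1.le⟩, by rw [h3]; exact lt_irrefl x⟩, h3⟩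
      rw [h3]; exact hmp.trans_lt h1
  have c4 : (univ.filter fun x : Fin n =>
        (((x < t ∧ x ≠ p ∧ m < σ x) ∧ ¬ x < p) ∧ ¬ x < σ x) ∧ ¬ σ x = x).card
      = (univ.filter fun x : Fin n => p < x ∧ x < t ∧ m < σ x ∧ σ x < x).card := by
    apply ccg; intro x; constructor
    · rintro ⟨⟨⟨⟨h1, h2, h3⟩, h4⟩, h5⟩, h6⟩
      exact ⟨lt_of_le_of_ne (not_lt.mp h4) (Ne.symm h2), h1, h3,
        lt_of_le_of_ne (not_lt.mp h5) h6⟩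
    · rintro ⟨h1, h2, h3, h4⟩
      exact ⟨⟨⟨⟨h2, h1.ne', h3⟩, not_lt.mpr h1.le⟩, lt_asymm h4⟩, h4.ne⟩
  omega

lemma partP2' (hmt : m < t) (hpt : p < t) (hmp : m ≤ p)
    (hσt : σ t = m) (hσp : σ p = t) (htop : ∀ j, t < j → σ j = j) :
    (univ.filter fun x : Fin n => x < t ∧ x ≠ p ∧ m < σ x ∧ σ x < x).card
      = (univ.filter fun x : Fin n => x < p ∧ m < σ x ∧ σ x < x).card
      + (univ.filter fun x : Fin n => p < x ∧ x < t ∧ m < σ x ∧ σ x < x).card := by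
  have s1 := filter_split (fun x : Fin n => x < t ∧ x ≠ p ∧ m < σ x ∧ σ x < x) (fun x => x < p)
  have c1 : (univ.filter fun x : Fin n => (x < t ∧ x ≠ p ∧ m < σ x ∧ σ x < x) ∧ x < p).card
      = (univ.filter fun x : Fin n => x < p ∧ m < σ x ∧ σ x < x).card := by
    apply ccg; intro x; constructor
    · rintro ⟨⟨h1, h2, h3, h4⟩, h5⟩; exact ⟨h5, h3, h4⟩
    · rintro ⟨h1, h2, h3⟩; exact ⟨⟨h1.trans hpt, h1.ne, h2, h3⟩, h1⟩
  have c2 : (univ.filter fun x : Fin n => (x < t ∧ x ≠ p ∧ m < σ x ∧ σ x < x) ∧ ¬ x < p).card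
      = (univ.filter fun x : Fin n => p < x ∧ x < t ∧ m < σ x ∧ σ x < x).card := by
    apply ccg; intro x; constructor
    · rintro ⟨⟨h1, h2, h3, h4⟩, h5⟩
      exact ⟨lt_of_le_of_ne (not_lt.mp h5) (Ne.symm h2), h1, h3, h4⟩
    · rintro ⟨h1, h2, h3, h4⟩
      exact ⟨⟨h2, h1.ne', h3, h4⟩, not_lt.mpr h1.le⟩
  omega

lemma partP3 (hmt : m < t) (hpt : p < t) (hpm : p = m)
    (hσt : σ t = m) (hσp : σ p = t) (htop : ∀ j, t < j → σ j = j) :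
    (univ.filter fun x : Fin n => x < p ∧ m < σ x).card
      = (univ.filter fun x : Fin n => p < x ∧ x < t ∧ σ x < m).card := by
  subst hpm
  have hσinj := σ.injective
  have c1 : (univ.filter fun x : Fin n => x < p ∧ p < σ x).card
      = (univ.filter fun x : Fin n => x < p ∧ ¬ σ x < p).card := by
    apply ccg; intro x; constructor
    · rintro ⟨h1, h2⟩; exact ⟨h1, lt_asymm h2⟩
    · rintro ⟨h1, h2⟩
      refine ⟨h1, ?_⟩
      rcases lt_trichotomy p (σ x) with h | h | h
      · exact h
      · exact absurd (hσinj (h.symm.trans hσt.symm)) (h1.trans hpt).ne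
      · exact absurd h h2
  have c2 : (univ.filter fun x : Fin n => ¬ x < p ∧ σ x < p).card
      = (univ.filter fun x : Fin n => p < x ∧ x < t ∧ σ x < p).card := by
    apply ccg; intro x; constructor
    · rintro ⟨h1, h2⟩
      have hxp : x ≠ p := by
        intro hc; rw [hc, hσp] at h2; exact absurd (hpt.trans h2) (lt_irrefl p)
      have hxt : x ≠ t := by
        intro hc; rw [hc, hσt] at h2; exact absurd h2 (lt_irrefl p)
      refine ⟨lt_of_le_of_ne (not_lt.mp h1) (Ne.symm hxp), ?_, h2⟩
      rcases lt_trichotomy x t with h | h | h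
      · exact h
      · exact absurd h hxt
      · exact absurd ((htop x h ▸ h2).trans (hpt.trans h)) (lt_irrefl x)
    · rintro ⟨h1, h2, h3⟩; exact ⟨not_lt.mpr h1.le, h3⟩
  rw [c1, level_cross σ p, c2]

lemma partP4 (hmt : m < t) (hpt : p < t) (hpm : p = m)
    (hσt : σ t = m) (hσp : σ p = t) (hinv : ∀ i, σ (σ i) = i) :
    (univ.filter fun x : Fin n => p < x ∧ x < t ∧ σ x < m).card
      = (univ.filter fun x : Fin n => x < p ∧ p < σ x ∧ σ x < t).card := by
  subst hpm
  apply Finset.card_nbij' (i := fun x => σ x) (j := fun x => σ x)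
  · intro x hx
    simp only [Finset.mem_coe, Finset.mem_filter, Finset.mem_univ, true_and] at hx ⊢
    exact ⟨hx.2.2, by rw [hinv]; exact hx.1, by rw [hinv]; exact hx.2.1⟩
  · intro x hx
    simp only [Finset.mem_coe, Finset.mem_filter, Finset.mem_univ, true_and] at hx ⊢
    exact ⟨hx.2.1, hx.2.2, by rw [hinv]; exact hx.1⟩
  · intro x hx; simp [hinv]
  · intro x hx; simp [hinv]

lemma partP5 (hmt : m < t) (hpt : p < t) (hpm : p = m)
    (hσt : σ t = m) (hσp : σ p = t) :
    (∀ i, σ (σ i) = i) ↔ (∀ i, (σ * Equiv.swap p t) ((σ * Equiv.swap p t) i) = i) := by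
  have hσinj := σ.injective
  have hptne : p ≠ t := ne_of_lt hpt
  have hs2p : (σ * Equiv.swap p t) p = m := by
    simp [Equiv.Perm.mul_apply, Equiv.swap_apply_left, hσt]
  have hs2t : (σ * Equiv.swap p t) t = t := by
    simp [Equiv.Perm.mul_apply, Equiv.swap_apply_right, hσp]
  have hs2o : ∀ x, x ≠ p → x ≠ t → (σ * Equiv.swap p t) x = σ x := by
    intro x h1 h2
    simp [Equiv.Perm.mul_apply, Equiv.swap_apply_of_ne_of_ne h1 h2]
  have hp2 : (σ * Equiv.swap p t) p = p := by rw [hs2p, ← hpm]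
  constructor
  · intro h x
    by_cases hx1 : x = p
    · rw [hx1, hp2, hp2]
    · by_cases hx2 : x = t
      · rw [hx2, hs2t, hs2t]
      · have hne1 : σ x ≠ p := by
          intro hc
          exact hx2 (hσinj (by rw [hc, hpm, ← hσt]))
        have hne2 : σ x ≠ t := by
          intro hc
          exact hx1 (hσinj (by rw [hc, ← hσp]))
        rw [hs2o x hx1 hx2, hs2o (σ x) hne1 hne2, h]
  · intro h x
    by_cases hx1 : x = p
    · rw [hx1, hσp, hσt, ← hpm]
    · by_cases hx2 : x = t
      · rw [hx2, hσt, ← hpm, hσp]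
      · have hne1 : σ x ≠ p := by
          intro hc
          exact hx2 (hσinj (by rw [hc, hpm, ← hσt]))
        have hne2 : σ x ≠ t := by
          intro hc
          exact hx1 (hσinj (by rw [hc, ← hσp]))
        rw [← hs2o x hx1 hx2, ← hs2o ((σ * Equiv.swap p t) x) (by rw [hs2o x hx1 hx2]; exact hne1)
          (by rw [hs2o x hx1 hx2]; exact hne2), h]

lemma partP6 (hpm : p ≠ m) (hσt : σ t = m) (hσp : σ p = t) :
    ¬ (∀ i, σ (σ i) = i) := by
  intro h
  have h2 : σ m = t := by rw [← hσt, h t]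
  exact hpm (σ.injective (hσp.trans h2.symm))

end Comp2


lemma card_pair_by_snd (Q : Fin n → Fin n → Prop) [∀ a b : Fin n, Decidable (Q a b)] :
    (univ.filter fun x : Fin n × Fin n => Q x.1 x.2).card
      = ∑ b : Fin n, (univ.filter fun a : Fin n => Q a b).card := by
  rw [Finset.card_filter]
  rw [Fintype.sum_prod_type_right]
  exact Finset.sum_congr rfl fun b _ => (Finset.card_filter _ _).symm

lemma cross_fixed (σ : Equiv.Perm (Fin n)) (j : Fin n) (hj : σ j = j) :
    (univ.filter fun i : Fin n => i < j ∧ j < σ i).card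
      = (univ.filter fun i : Fin n => i < j ∧ j < σ⁻¹ i).card := by
  have hj' : σ⁻¹ j = j := by
    rw [Equiv.Perm.inv_eq_iff_eq]; exact hj.symm
  have c1 : (univ.filter fun i : Fin n => i < j ∧ j < σ i).card
      = (univ.filter fun i : Fin n => i < j ∧ ¬ σ i < j).card := by
    apply ccg; intro i; constructor
    · rintro ⟨h1, h2⟩; exact ⟨h1, lt_asymm h2⟩
    · rintro ⟨h1, h2⟩
      refine ⟨h1, lt_of_le_of_ne (not_lt.mp h2) ?_⟩
      intro hc
      exact h1.ne (σ.injective (by rw [← hc, hj]))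
  have c2 : (univ.filter fun i : Fin n => ¬ i < j ∧ σ i < j).card
      = (univ.filter fun u : Fin n => u < j ∧ ¬ σ⁻¹ u < j).card := by
    apply Finset.card_nbij' (i := fun x => σ x) (j := fun x => σ⁻¹ x)
    · intro x hx
      simp only [Finset.mem_coe, Finset.mem_filter, Finset.mem_univ, true_and] at hx ⊢
      exact ⟨hx.2, by simpa using hx.1⟩
    · intro x hx
      simp only [Finset.mem_coe, Finset.mem_filter, Finset.mem_univ, true_and] at hx ⊢
      exact ⟨hx.2, by simpa using hx.1⟩
    · intro x hx; simp
    · intro x hx; simp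
  have c3 : (univ.filter fun u : Fin n => u < j ∧ ¬ σ⁻¹ u < j).card
      = (univ.filter fun u : Fin n => u < j ∧ j < σ⁻¹ u).card := by
    apply ccg; intro u; constructor
    · rintro ⟨h1, h2⟩
      refine ⟨h1, lt_of_le_of_ne (not_lt.mp h2) ?_⟩
      intro hc
      have h3 : σ j = u := by rw [hc]; exact Equiv.apply_symm_apply σ u
      apply h1.ne
      rw [← h3, hj]
    · rintro ⟨h1, h2⟩; exact ⟨h1, lt_asymm h2⟩
  rw [c1, level_cross σ j, c2, c3]

lemma B_inv (σ : Equiv.Perm (Fin n)) : Bcnt σ⁻¹ = Bcnt σ := by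
  unfold Bcnt
  rw [card_pair_by_snd (fun a b : Fin n => a < b ∧ σ⁻¹ b = b ∧ b < σ⁻¹ a),
    card_pair_by_snd (fun a b : Fin n => a < b ∧ σ b = b ∧ b < σ a)]
  refine Finset.sum_congr rfl fun b _ => ?_
  by_cases hb : σ b = b
  · have hb' : σ⁻¹ b = b := by rw [Equiv.Perm.inv_eq_iff_eq]; exact hb.symm
    have r1 : (univ.filter fun a : Fin n => a < b ∧ σ⁻¹ b = b ∧ b < σ⁻¹ a).card
        = (univ.filter fun a : Fin n => a < b ∧ b < σ⁻¹ a).card := by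
      apply ccg; intro a; constructor
      · rintro ⟨h1, -, h3⟩; exact ⟨h1, h3⟩
      · rintro ⟨h1, h3⟩; exact ⟨h1, hb', h3⟩
    have r2 : (univ.filter fun a : Fin n => a < b ∧ σ b = b ∧ b < σ a).card
        = (univ.filter fun a : Fin n => a < b ∧ b < σ a).card := by
      apply ccg; intro a; constructor
      · rintro ⟨h1, -, h3⟩; exact ⟨h1, h3⟩
      · rintro ⟨h1, h3⟩; exact ⟨h1, hb, h3⟩
    rw [r1, r2, cross_fixed σ b hb]
  · have hb' : ¬ σ⁻¹ b = b := by
      intro hc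
      exact hb (((congrArg (fun z => σ z) hc).symm).trans (Equiv.apply_symm_apply σ b))
    have z1 : (univ.filter fun a : Fin n => a < b ∧ σ⁻¹ b = b ∧ b < σ⁻¹ a).card = 0 :=
      cz _ (fun a => by rintro ⟨-, h, -⟩; exact hb' h)
    have z2 : (univ.filter fun a : Fin n => a < b ∧ σ b = b ∧ b < σ a).card = 0 :=
      cz _ (fun a => by rintro ⟨-, h, -⟩; exact hb h)
    rw [z1, z2]

/-- the master identity, for `m ≤ p` -/
lemma master (σ : Equiv.Perm (Fin n)) (p m t : Fin n)
    (hmt : m < t) (hpt : p < t) (hmp : m ≤ p)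
    (hσt : σ t = m) (hσp : σ p = t) (htop : ∀ j, t < j → σ j = j) :
    2 * invCnt σ
      + (4 * (Acnt (σ * Equiv.swap p t) + Acnt (σ * Equiv.swap p t)⁻¹ + Bcnt (σ * Equiv.swap p t))
        + (univ.filter fun i : Fin n => (σ * Equiv.swap p t) i ≠ i).card)
      + (if p = m then 1 else 0)
    = 2 * invCnt (σ * Equiv.swap p t)
      + (4 * (Acnt σ + Acnt σ⁻¹ + Bcnt σ) + (univ.filter fun i : Fin n => σ i ≠ i).card)
      + 4 * (univ.filter fun x : Fin n => p < x ∧ x < t ∧ σ x < m).card + 1 := by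
  have hL := compL σ p m t hmt hpt hmp hσt hσp htop
  have hA := compA σ p m t hmt hpt hmp hσt hσp htop
  have hA' := compA' σ p m t hmt hpt hmp hσt hσp htop
  have hB := compB σ p m t hmt hpt hmp hσt hσp htop
  have hS := compSupp σ p m t hmt hpt hσt hσp
  have h1 := partP1 σ p m t hmt hpt hmp hσt hσp htop
  have h2 := partP2 σ p m t hmt hpt hmp hσt hσp htop
  have h2' := partP2' σ p m t hmt hpt hmp hσt hσp htop
  by_cases hpm : p = m
  · have h3 := partP3 σ p m t hmt hpt hpm hσt hσp htop
    rw [if_pos hpm] at hA' hB hS ⊢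
    omega
  · rw [if_neg hpm] at hA' hB hS ⊢
    omega



lemma czp (Q : Fin n × Fin n → Prop) [DecidablePred Q] (h : ∀ x, ¬ Q x) :
    (univ.filter Q).card = 0 := by
  rw [Finset.card_eq_zero, Finset.filter_eq_empty_iff]
  exact fun x _ => h x


theorem eq_iff_involution' (g : ℕ) (σ : Equiv.Perm (Fin g)) :
    2 * invCnt σ = 4 * (Acnt σ + Acnt σ⁻¹ + Bcnt σ)
        + (Finset.univ.filter (fun i : Fin g => σ i ≠ i)).card
      ↔ ((∀ i, σ (σ i) = i) ∧ Ccnt σ = 0) := by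
  open Finset EqIffInv in
  suffices H : ∀ k : ℕ, ∀ τ : Equiv.Perm (Fin g),
      (Finset.univ.filter (fun i : Fin g => τ i ≠ i)).card = k →
      (4 * (Acnt τ + Acnt τ⁻¹ + Bcnt τ)
          + (Finset.univ.filter (fun i : Fin g => τ i ≠ i)).card ≤ 2 * invCnt τ
        ∧ (2 * invCnt τ = 4 * (Acnt τ + Acnt τ⁻¹ + Bcnt τ)
            + (Finset.univ.filter (fun i : Fin g => τ i ≠ i)).card
          ↔ ((∀ i, τ (τ i) = i) ∧ Ccnt τ = 0))) by
    exact (H _ σ rfl).2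
  clear σ
  intro k
  induction k using Nat.strong_induction_on with
  | _ k IH =>
  intro σ hk
  by_cases hone : ∀ i, σ i = i
  · -- identity-like base case
    have hone' : ∀ i, σ⁻¹ i = i := fun i =>
      σ.injective (by rw [Equiv.Perm.inv_def, Equiv.apply_symm_apply, hone i])
    have hA : Acnt σ = 0 := by
      unfold Acnt; apply czp
      rintro x ⟨h1, h2, h3⟩
      rw [hone x.2] at h2
      exact lt_irrefl x.2 h2
    have hAi : Acnt σ⁻¹ = 0 := by
      unfold Acnt; apply czp
      rintro x ⟨h1, h2, h3⟩
      rw [hone' x.2] at h2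
      exact lt_irrefl x.2 h2
    have hB : Bcnt σ = 0 := by
      unfold Bcnt; apply czp
      rintro x ⟨h1, h2, h3⟩
      rw [hone x.1] at h3
      exact lt_asymm h1 h3
    have hI : invCnt σ = 0 := by
      unfold invCnt; apply czp
      rintro x ⟨h1, h2⟩
      rw [hone x.1, hone x.2] at h2
      exact lt_asymm h1 h2
    have hC : Ccnt σ = 0 := by
      unfold Ccnt; apply czp
      rintro x ⟨h1, h2, h3⟩
      rw [hone x.1] at h2
      exact lt_asymm h1 h2
    have hs : (Finset.univ.filter (fun i : Fin g => σ i ≠ i)).card = 0 :=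
      cz _ (fun x hx => hx (hone x))
    refine ⟨by omega, ?_, ?_⟩
    · intro _
      exact ⟨fun i => by rw [hone i]; exact hone i, hC⟩
    · intro _
      omega
  · -- there is a non-fixed point
    have hne : (Finset.univ.filter (fun i : Fin g => σ i ≠ i)).Nonempty := by
      push_neg at hone
      obtain ⟨i0, hi0⟩ := hone
      exact ⟨i0, Finset.mem_filter.mpr ⟨Finset.mem_univ _, hi0⟩⟩
    obtain ⟨t, htmem, htmax⟩ : ∃ t ∈ (Finset.univ.filter (fun i : Fin g => σ i ≠ i)),
        ∀ j ∈ (Finset.univ.filter (fun i : Fin g => σ i ≠ i)), j ≤ t :=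
      ⟨_, Finset.max'_mem _ hne, fun j hj => Finset.le_max' _ j hj⟩
    have hσtne : σ t ≠ t := (Finset.mem_filter.mp htmem).2
    have htop : ∀ j, t < j → σ j = j := by
      intro j hj
      by_contra hcon
      exact absurd (htmax j (Finset.mem_filter.mpr ⟨Finset.mem_univ _, hcon⟩))
        (not_le_of_gt hj)
    have hmt : σ t < t := by
      rcases lt_trichotomy (σ t) t with h | h | h
      · exact h
      · exact absurd h hσtne
      · exact absurd (σ.injective (htop _ h)) hσtne
    have hσp : σ (σ⁻¹ t) = t := Equiv.apply_symm_apply σ t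
    have hptne : σ⁻¹ t ≠ t := by
      intro hc
      exact hσtne (((congrArg (fun z => σ z) hc).symm).trans hσp)
    have hpt : σ⁻¹ t < t := by
      rcases lt_trichotomy (σ⁻¹ t) t with h | h | h
      · exact h
      · exact absurd h hptne
      · exact absurd ((htop _ h).symm.trans hσp) hptne
    have hS := compSupp σ (σ⁻¹ t) (σ t) t hmt hpt rfl hσp
    have hite1 : (1:ℕ) ≤ (if σ⁻¹ t = σ t then 2 else 1) := by split <;> omega
    have hklt : (Finset.univ.filter
        (fun i : Fin g => (σ * Equiv.swap (σ⁻¹ t) t) i ≠ i)).card < k := by omega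
    obtain ⟨IH1, IH2⟩ := IH _ hklt (σ * Equiv.swap (σ⁻¹ t) t) rfl
    rcases le_or_gt (σ t) (σ⁻¹ t) with hmp | hpm
    · -- m ≤ p : direct master
      have hM := master σ (σ⁻¹ t) (σ t) t hmt hpt hmp rfl hσp htop
      have hCid := compC σ (σ⁻¹ t) (σ t) t hmt hpt hmp rfl hσp htop
      by_cases hpm2 : σ⁻¹ t = σ t
      · rw [if_pos hpm2] at hM
        refine ⟨by omega, ?_, ?_⟩
        · intro heq
          have hB0 : (Finset.univ.filter
              (fun x : Fin g => σ⁻¹ t < x ∧ x < t ∧ σ x < σ t)).card = 0 := by omega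
          have h2eq : 2 * invCnt (σ * Equiv.swap (σ⁻¹ t) t)
              = 4 * (Acnt (σ * Equiv.swap (σ⁻¹ t) t) + Acnt (σ * Equiv.swap (σ⁻¹ t) t)⁻¹
                  + Bcnt (σ * Equiv.swap (σ⁻¹ t) t))
                + (Finset.univ.filter
                    (fun i : Fin g => (σ * Equiv.swap (σ⁻¹ t) t) i ≠ i)).card := by omega
          obtain ⟨hinv2, hC2⟩ := IH2.mp h2eq
          have hinv : ∀ i, σ (σ i) = i :=
            (partP5 σ (σ⁻¹ t) (σ t) t hmt hpt hpm2 rfl hσp).mpr hinv2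
          have hYB := partP4 σ (σ⁻¹ t) (σ t) t hmt hpt hpm2 rfl hσp hinv
          exact ⟨hinv, by omega⟩
        · rintro ⟨hinv, hC0⟩
          have hYB := partP4 σ (σ⁻¹ t) (σ t) t hmt hpt hpm2 rfl hσp hinv
          have hC20 : Ccnt (σ * Equiv.swap (σ⁻¹ t) t) = 0 := by omega
          have h2eq := IH2.mpr ⟨(partP5 σ (σ⁻¹ t) (σ t) t hmt hpt hpm2 rfl hσp).mp hinv, hC20⟩
          omega
      · rw [if_neg hpm2] at hM
        refine ⟨by omega, ?_, ?_⟩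
        · intro heq; exfalso; omega
        · rintro ⟨hinv, -⟩
          exact absurd hinv (partP6 σ (σ⁻¹ t) (σ t) t hpm2 rfl hσp)
    · -- p < m : apply master to σ⁻¹
      have htop' : ∀ j, t < j → σ⁻¹ j = j := fun j hj =>
        σ.injective (by rw [Equiv.Perm.inv_def, Equiv.apply_symm_apply, htop j hj])
      have hσ'm : σ⁻¹ (σ t) = t := Equiv.symm_apply_apply σ t
      have hM' := master σ⁻¹ (σ t) (σ⁻¹ t) t hpt hmt hpm.le rfl hσ'm htop'
      have hcomm : σ⁻¹ * Equiv.swap (σ t) t = (σ * Equiv.swap (σ⁻¹ t) t)⁻¹ := by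
        have h1 : Equiv.swap (σ t) t = σ * Equiv.swap t (σ⁻¹ t) * σ⁻¹ := by
          have h2 := Equiv.swap_apply_apply σ t (σ⁻¹ t)
          rwa [hσp] at h2
        rw [h1, mul_inv_rev, Equiv.swap_inv, Equiv.swap_comm t (σ⁻¹ t)]
        group
      rw [hcomm] at hM'
      rw [invCnt_inv σ, invCnt_inv (σ * Equiv.swap (σ⁻¹ t) t), B_inv σ,
        B_inv (σ * Equiv.swap (σ⁻¹ t) t), supp_inv σ, supp_inv (σ * Equiv.swap (σ⁻¹ t) t),
        inv_inv σ, inv_inv (σ * Equiv.swap (σ⁻¹ t) t)] at hM'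
      rw [if_neg (hpm.ne' : σ t ≠ σ⁻¹ t)] at hM'
      refine ⟨by omega, ?_, ?_⟩
      · intro heq; exfalso; omega
      · rintro ⟨hinv, -⟩
        exact absurd hinv (partP6 σ (σ⁻¹ t) (σ t) t (hpm.ne : σ⁻¹ t ≠ σ t) rfl hσp)


end EqIffInv

/-- `2ℓ(σ) = 4(A_σ + A_{σ⁻¹} + B_σ) + #{i : σ(i) ≠ i}` iff
`σ` is an involution with `C_σ = 0`. -/
theorem eq_iff_involution (g : ℕ) (σ : Equiv.Perm (Fin g)) :
    2 * invCnt σ = 4 * (Acnt σ + Acnt σ⁻¹ + Bcnt σ)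
        + (Finset.univ.filter (fun i : Fin g => σ i ≠ i)).card
      ↔ ((∀ i, σ (σ i) = i) ∧ Ccnt σ = 0) := EqIffInv.eq_iff_involution' g σ
end

section
/- For every permutation σ of {1,…,g}: 2·ℓ(σ) = 4·(A_σ + A_{σ⁻¹} + B_σ) + #{i ∈ {1,…,g} : σ(i) ≠ i} + 1 if and only if C_σ = 0, C_{σ⁻¹} = 0, and the cycle decomposition of σ consists of fixed points, transpositions, and exactly one cycle of length 3. -/
namespace Stmt19
open Finset Equiv Equiv.Perm
variable {g : ℕ}


/-! ### auxiliary counts -/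

def Apcnt (σ : Equiv.Perm (Fin g)) : ℕ :=
  (univ.filter (fun p : Fin g × Fin g =>
    p.1 < p.2 ∧ σ p.2 < σ p.1 ∧ σ p.1 < p.1)).card
def Bpcnt (σ : Equiv.Perm (Fin g)) : ℕ :=
  (univ.filter (fun p : Fin g × Fin g =>
    p.1 < p.2 ∧ σ p.2 < p.1 ∧ σ p.1 = p.1)).card
def Rcnt (σ : Equiv.Perm (Fin g)) : ℕ :=
  (univ.filter (fun p : Fin g × Fin g =>
    p.1 < p.2 ∧ σ p.2 < σ p.1 ∧ σ p.2 < p.2 ∧ p.1 < σ p.1)).card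
def R1cnt (σ : Equiv.Perm (Fin g)) : ℕ :=
  (univ.filter (fun p : Fin g × Fin g =>
    p.1 < σ p.1 ∧ p.1 < p.2 ∧ σ p.2 ≤ p.1)).card
def R2cnt (σ : Equiv.Perm (Fin g)) : ℕ :=
  (univ.filter (fun p : Fin g × Fin g =>
    p.1 < σ p.2 ∧ σ p.2 < p.2 ∧ σ p.2 < σ p.1)).card
def Wcnt (σ : Equiv.Perm (Fin g)) : ℕ :=
  (univ.filter (fun t : Fin g => t < σ t ∨ t < σ⁻¹ t)).card
def mmcnt (σ : Equiv.Perm (Fin g)) : ℕ :=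
  (univ.filter (fun t : Fin g => σ t < t ∧ σ⁻¹ t < t)).card
def ppcnt (σ : Equiv.Perm (Fin g)) : ℕ :=
  (univ.filter (fun t : Fin g => t < σ t ∧ t < σ⁻¹ t)).card
def et (σ : Equiv.Perm (Fin g)) (t : Fin g) : ℕ :=
  (univ.filter (fun i => i < t ∧ t < σ i)).card
def ft (σ : Equiv.Perm (Fin g)) (t : Fin g) : ℕ :=
  (univ.filter (fun j => t < j ∧ σ j < t)).card
def dt (σ : Equiv.Perm (Fin g)) (t : Fin g) : ℕ :=
  (univ.filter (fun j => t < j ∧ σ j ≤ t)).card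
def ut (σ : Equiv.Perm (Fin g)) (t : Fin g) : ℕ :=
  (univ.filter (fun i => i ≤ t ∧ t < σ i)).card

/-! ### generic finset helpers -/

lemma card_fiber_snd (P : Fin g × Fin g → Prop) [DecidablePred P] :
    (univ.filter P).card = ∑ t : Fin g, (univ.filter (fun i => P (i, t))).card := by
  rw [Finset.card_eq_sum_card_fiberwise (f := Prod.snd) (t := univ) (fun x _ => mem_univ _)]
  refine Finset.sum_congr rfl fun t _ => ?_
  refine Finset.card_bij (fun p _ => p.1) ?_ ?_ ?_
  · rintro ⟨i, j⟩ hp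
    simp only [mem_filter, mem_univ, true_and] at hp ⊢
    obtain ⟨h1, h2⟩ := hp; subst h2; exact h1
  · rintro ⟨i, j⟩ hp ⟨i', j'⟩ hp' h
    simp only [mem_filter] at hp hp'
    simp only [Prod.mk.injEq] at *
    exact ⟨h, hp.2.trans hp'.2.symm⟩
  · intro i hi
    simp only [mem_filter, mem_univ, true_and] at hi
    exact ⟨(i, t), by simp [hi], rfl⟩

lemma card_fiber_fst (P : Fin g × Fin g → Prop) [DecidablePred P] :
    (univ.filter P).card = ∑ t : Fin g, (univ.filter (fun j => P (t, j))).card := by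
  rw [Finset.card_eq_sum_card_fiberwise (f := Prod.fst) (t := univ) (fun x _ => mem_univ _)]
  refine Finset.sum_congr rfl fun t _ => ?_
  refine Finset.card_bij (fun p _ => p.2) ?_ ?_ ?_
  · rintro ⟨i, j⟩ hp
    simp only [mem_filter, mem_univ, true_and] at hp ⊢
    obtain ⟨h1, h2⟩ := hp; subst h2; exact h1
  · rintro ⟨i, j⟩ hp ⟨i', j'⟩ hp' h
    simp only [mem_filter] at hp hp'
    simp only [Prod.mk.injEq] at *
    exact ⟨hp.2.trans hp'.2.symm, h⟩
  · intro j hj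
    simp only [mem_filter, mem_univ, true_and] at hj
    exact ⟨(t, j), by simp [hj], rfl⟩

lemma filter_eq_single {p : Fin g → Prop} [DecidablePred p] (a : Fin g)
    (h : ∀ i, p i ↔ i = a) : (univ.filter p).card = 1 := by
  have : univ.filter p = {a} := by ext i; simp [h i]
  rw [this, Finset.card_singleton]

lemma filter_split_card (p q : Fin g → Prop) [DecidablePred p] [DecidablePred q]
    (hpq : ∀ i, ¬ (p i ∧ q i)) :
    (univ.filter (fun i => p i ∨ q i)).card
      = (univ.filter p).card + (univ.filter q).card := by
  rw [Finset.filter_or]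
  rw [Finset.card_union_of_disjoint]
  rw [Finset.disjoint_filter]
  intro x _ hp hq
  exact hpq x ⟨hp, hq⟩

lemma const_conj_card (c : Prop) [Decidable c] (p : Fin g → Prop) [DecidablePred p] :
    (univ.filter (fun i => c ∧ p i)).card = if c then (univ.filter p).card else 0 := by
  by_cases h : c
  · rw [if_pos h]
    congr 1
    apply Finset.filter_congr; intro x _; simp [h]
  · rw [if_neg h]
    rw [Finset.card_eq_zero, Finset.filter_eq_empty_iff]
    rintro i _ ⟨hc, _⟩; exact h hc

lemma split_card (s : Finset (Fin g)) (p : Fin g → Prop) [DecidablePred p] :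
    (s.filter p).card + (s.filter (fun i => ¬ p i)).card = s.card :=
  Finset.card_filter_add_card_filter_not p

/-! ### gap count lemmas -/

lemma ut_eq_dt (σ : Equiv.Perm (Fin g)) (t : Fin g) : ut σ t = dt σ t := by
  unfold ut dt
  have hbij : (univ.filter (fun j : Fin g => σ j ≤ t)).card
      = (univ.filter (fun i : Fin g => i ≤ t)).card := by
    refine Finset.card_bij' (fun j _ => σ j) (fun i _ => σ⁻¹ i) ?_ ?_ ?_ ?_
    · intro a ha; simp only [mem_filter, mem_univ, true_and] at ha ⊢; exact ha
    · intro a ha; simp only [mem_filter, mem_univ, true_and] at ha ⊢; simpa using ha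
    · intro a _; simp
    · intro a _; simp
  have h1 := split_card (univ.filter (fun i : Fin g => i ≤ t)) (fun i => t < σ i)
  have h2 := split_card (univ.filter (fun j : Fin g => σ j ≤ t)) (fun j => t < j)
  rw [Finset.filter_filter, Finset.filter_filter] at h1 h2
  have e1 : (univ.filter fun a : Fin g => a ≤ t ∧ ¬ t < σ a)
      = (univ.filter fun a : Fin g => a ≤ t ∧ σ a ≤ t) := by
    apply Finset.filter_congr; intro x _; simp [not_lt]
  have e2 : (univ.filter fun a : Fin g => σ a ≤ t ∧ ¬ t < a)
      = (univ.filter fun a : Fin g => a ≤ t ∧ σ a ≤ t) := by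
    apply Finset.filter_congr; intro x _
    constructor <;> simp (config := {contextual := true}) [not_lt, and_comm]
  rw [e1] at h1
  rw [e2] at h2
  have e3 : (univ.filter fun a : Fin g => σ a ≤ t ∧ t < a)
      = (univ.filter fun a : Fin g => t < a ∧ σ a ≤ t) := by
    apply Finset.filter_congr; intro x _; simp [and_comm]
  rw [e3] at h2
  omega

lemma ut_eq (σ : Equiv.Perm (Fin g)) (t : Fin g) :
    ut σ t = et σ t + (if t < σ t then 1 else 0) := by
  unfold ut et
  have : (univ.filter (fun i : Fin g => i ≤ t ∧ t < σ i))
      = (univ.filter (fun i : Fin g => (i < t ∧ t < σ i) ∨ (i = t ∧ t < σ i))) := by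
    apply Finset.filter_congr; intro x _
    constructor
    · rintro ⟨h1, h2⟩
      rcases lt_or_eq_of_le h1 with h | h
      · exact Or.inl ⟨h, h2⟩
      · exact Or.inr ⟨h, h2⟩
    · rintro (⟨h1, h2⟩ | ⟨h1, h2⟩)
      · exact ⟨le_of_lt h1, h2⟩
      · exact ⟨le_of_eq h1, h2⟩
  rw [this, filter_split_card]
  · congr 1
    by_cases h : t < σ t
    · rw [if_pos h]
      apply filter_eq_single t
      intro i; constructor
      · rintro ⟨h1, _⟩; exact h1
      · rintro rfl; exact ⟨rfl, h⟩
    · rw [if_neg h]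
      rw [Finset.card_eq_zero, Finset.filter_eq_empty_iff]
      rintro i _ ⟨rfl, h2⟩; exact h h2
  · rintro i ⟨⟨h1, _⟩, ⟨rfl, _⟩⟩; exact lt_irrefl _ h1

lemma dt_eq (σ : Equiv.Perm (Fin g)) (t : Fin g) :
    dt σ t = ft σ t + (if t < σ⁻¹ t then 1 else 0) := by
  unfold dt ft
  have : (univ.filter (fun j : Fin g => t < j ∧ σ j ≤ t))
      = (univ.filter (fun j : Fin g => (t < j ∧ σ j < t) ∨ (t < j ∧ σ j = t))) := by
    apply Finset.filter_congr; intro x _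
    constructor
    · rintro ⟨h1, h2⟩
      rcases lt_or_eq_of_le h2 with h | h
      · exact Or.inl ⟨h1, h⟩
      · exact Or.inr ⟨h1, h⟩
    · rintro (⟨h1, h2⟩ | ⟨h1, h2⟩)
      · exact ⟨h1, le_of_lt h2⟩
      · exact ⟨h1, le_of_eq h2⟩
  rw [this, filter_split_card]
  · congr 1
    by_cases h : t < σ⁻¹ t
    · rw [if_pos h]
      apply filter_eq_single (σ⁻¹ t)
      intro j; constructor
      · rintro ⟨_, h2⟩
        have := congrArg (σ⁻¹ : Equiv.Perm (Fin g)) h2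
        simpa using this
      · rintro rfl; exact ⟨h, by simp⟩
    · rw [if_neg h]
      rw [Finset.card_eq_zero, Finset.filter_eq_empty_iff]
      rintro j _ ⟨h1, h2⟩
      apply h
      have hj : j = σ⁻¹ t := by
        have := congrArg (σ⁻¹ : Equiv.Perm (Fin g)) h2
        simpa using this
      rwa [hj] at h1
  · rintro j ⟨⟨_, h1⟩, ⟨_, h2⟩⟩; exact absurd h2 (ne_of_lt h1)

/-! ### decomposition of inversions -/

lemma inv_split (σ : Equiv.Perm (Fin g)) :
    invCnt σ = Acnt σ + Bcnt σ + Apcnt σ + Bpcnt σ + Rcnt σ := by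
  unfold invCnt Acnt Bcnt Apcnt Bpcnt Rcnt
  rw [Finset.card_filter, Finset.card_filter, Finset.card_filter, Finset.card_filter,
    Finset.card_filter, Finset.card_filter]
  rw [← Finset.sum_add_distrib, ← Finset.sum_add_distrib, ← Finset.sum_add_distrib,
    ← Finset.sum_add_distrib]
  refine Finset.sum_congr rfl fun p _ => ?_
  have hfix : σ p.2 = p.2 ↔ (σ p.2 : ℕ) = (p.2 : ℕ) := Fin.ext_iff
  have hfix2 : σ p.1 = p.1 ↔ (σ p.1 : ℕ) = (p.1 : ℕ) := Fin.ext_iff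
  simp only [Fin.lt_def, hfix, hfix2]
  split_ifs <;> omega

lemma R_split (σ : Equiv.Perm (Fin g)) : Rcnt σ = R1cnt σ + R2cnt σ := by
  unfold Rcnt R1cnt R2cnt
  rw [Finset.card_filter, Finset.card_filter, Finset.card_filter, ← Finset.sum_add_distrib]
  refine Finset.sum_congr rfl fun p _ => ?_
  simp only [Fin.lt_def, Fin.le_def]
  split_ifs <;> omega

lemma Apcnt_eq (σ : Equiv.Perm (Fin g)) : Apcnt σ = Acnt σ⁻¹ := by
  unfold Apcnt Acnt
  refine Finset.card_bij' (fun p _ => (σ p.2, σ p.1)) (fun q _ => (σ⁻¹ q.2, σ⁻¹ q.1)) ?_ ?_ ?_ ?_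
  · rintro ⟨i, j⟩ hp
    simp only [mem_filter, mem_univ, true_and] at hp ⊢
    simp only [Perm.inv_def, Equiv.symm_apply_apply]
    exact ⟨hp.2.1, hp.2.2, hp.1⟩
  · rintro ⟨u, v⟩ hq
    simp only [mem_filter, mem_univ, true_and] at hq ⊢
    simp only [Perm.inv_def, Equiv.apply_symm_apply]
    exact ⟨hq.2.2, hq.1, hq.2.1⟩
  · rintro ⟨i, j⟩ _; simp
  · rintro ⟨u, v⟩ _; simp

/-! ### sums over t -/

lemma B_sum (σ : Equiv.Perm (Fin g)) :
    Bcnt σ = ∑ t : Fin g, if σ t = t then et σ t else 0 := by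
  unfold Bcnt
  rw [card_fiber_snd]
  refine Finset.sum_congr rfl fun t _ => ?_
  have : (univ.filter (fun i : Fin g => i < t ∧ σ t = t ∧ t < σ i))
      = (univ.filter (fun i : Fin g => σ t = t ∧ (i < t ∧ t < σ i))) := by
    apply Finset.filter_congr; intro x _; tauto
  rw [this, const_conj_card]
  rfl

lemma Bp_sum (σ : Equiv.Perm (Fin g)) :
    Bpcnt σ = ∑ t : Fin g, if σ t = t then ft σ t else 0 := by
  unfold Bpcnt
  rw [card_fiber_fst]
  refine Finset.sum_congr rfl fun t _ => ?_
  have : (univ.filter (fun j : Fin g => t < j ∧ σ j < t ∧ σ t = t))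
      = (univ.filter (fun j : Fin g => σ t = t ∧ (t < j ∧ σ j < t))) := by
    apply Finset.filter_congr; intro x _; tauto
  rw [this, const_conj_card]
  rfl

lemma Bp_eq_B (σ : Equiv.Perm (Fin g)) : Bpcnt σ = Bcnt σ := by
  rw [B_sum, Bp_sum]
  refine Finset.sum_congr rfl fun t _ => ?_
  by_cases h : σ t = t
  · rw [if_pos h, if_pos h]
    have h1 := ut_eq σ t
    have h2 := dt_eq σ t
    have h3 := ut_eq_dt σ t
    have h4 : ¬ t < σ t := by rw [h]; exact lt_irrefl t
    have h5 : ¬ t < σ⁻¹ t := by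
      have hinv : σ⁻¹ t = t := by apply σ.injective; simp [h]
      rw [hinv]; exact lt_irrefl t
    rw [if_neg h4] at h1
    rw [if_neg h5] at h2
    omega
  · rw [if_neg h, if_neg h]

lemma R1_sum (σ : Equiv.Perm (Fin g)) :
    R1cnt σ = ∑ t : Fin g, if t < σ t then dt σ t else 0 := by
  unfold R1cnt
  rw [card_fiber_fst]
  refine Finset.sum_congr rfl fun t _ => ?_
  have : (univ.filter (fun j : Fin g => t < σ t ∧ t < j ∧ σ j ≤ t))
      = (univ.filter (fun j : Fin g => (t < σ t) ∧ (t < j ∧ σ j ≤ t))) := rfl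
  rw [this, const_conj_card]
  rfl

lemma R2_sum (σ : Equiv.Perm (Fin g)) :
    R2cnt σ = ∑ t : Fin g, if t < σ⁻¹ t then et σ t else 0 := by
  have hb : R2cnt σ = (univ.filter (fun p : Fin g × Fin g =>
      p.1 < p.2 ∧ p.2 < σ⁻¹ p.2 ∧ p.2 < σ p.1)).card := by
    unfold R2cnt
    refine Finset.card_bij' (fun p _ => (p.1, σ p.2)) (fun q _ => (q.1, σ⁻¹ q.2)) ?_ ?_ ?_ ?_
    · rintro ⟨i, j⟩ hp
      simp only [mem_filter, mem_univ, true_and] at hp ⊢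
      simp only [Perm.inv_def, Equiv.symm_apply_apply]
      exact ⟨hp.1, hp.2.1, hp.2.2⟩
    · rintro ⟨u, v⟩ hq
      simp only [mem_filter, mem_univ, true_and] at hq ⊢
      simp only [Perm.inv_def, Equiv.apply_symm_apply]
      exact ⟨hq.1, hq.2.1, hq.2.2⟩
    · rintro ⟨i, j⟩ _; simp
    · rintro ⟨u, v⟩ _; simp
  rw [hb, card_fiber_snd]
  refine Finset.sum_congr rfl fun t _ => ?_
  have : (univ.filter (fun i : Fin g => i < t ∧ t < σ⁻¹ t ∧ t < σ i))
      = (univ.filter (fun i : Fin g => (t < σ⁻¹ t) ∧ (i < t ∧ t < σ i))) := by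
    apply Finset.filter_congr; intro x _; tauto
  rw [this, const_conj_card]
  rfl

lemma U1_sum (σ : Equiv.Perm (Fin g)) :
    Acnt σ + Ccnt σ = ∑ t : Fin g, if t < σ t then et σ t else 0 := by
  have hu : Acnt σ + Ccnt σ = (univ.filter (fun p : Fin g × Fin g =>
      p.1 < p.2 ∧ p.2 < σ p.2 ∧ p.2 < σ p.1)).card := by
    unfold Acnt Ccnt
    rw [Finset.card_filter, Finset.card_filter, Finset.card_filter, ← Finset.sum_add_distrib]
    refine (Finset.sum_congr rfl fun p _ => ?_).symm
    have hne : p.1 < p.2 → ((σ p.1 : ℕ) ≠ (σ p.2 : ℕ)) := by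
      intro h he
      exact absurd (σ.injective (Fin.ext he)) (ne_of_lt h)
    have := fun (h : (p.1 : ℕ) < (p.2 : ℕ)) => hne (Fin.lt_def.mpr h)
    simp only [Fin.lt_def]
    split_ifs <;> omega
  rw [hu, card_fiber_snd]
  refine Finset.sum_congr rfl fun t _ => ?_
  have : (univ.filter (fun i : Fin g => i < t ∧ t < σ t ∧ t < σ i))
      = (univ.filter (fun i : Fin g => (t < σ t) ∧ (i < t ∧ t < σ i))) := by
    apply Finset.filter_congr; intro x _; tauto
  rw [this, const_conj_card]
  rfl

lemma et_inv (σ : Equiv.Perm (Fin g)) (t : Fin g) : et σ⁻¹ t = ft σ t := by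
  unfold et ft
  refine Finset.card_bij' (fun i _ => σ⁻¹ i) (fun j _ => σ j) ?_ ?_ ?_ ?_
  · intro a ha
    simp only [mem_filter, mem_univ, true_and, Perm.inv_def, Equiv.apply_symm_apply] at ha ⊢
    exact ⟨ha.2, ha.1⟩
  · intro a ha
    simp only [mem_filter, mem_univ, true_and, Perm.inv_def, Equiv.symm_apply_apply] at ha ⊢
    exact ⟨ha.2, ha.1⟩
  · intro a _; simp
  · intro a _; simp

lemma U2_sum (σ : Equiv.Perm (Fin g)) :
    Acnt σ⁻¹ + Ccnt σ⁻¹ = ∑ t : Fin g, if t < σ⁻¹ t then ft σ t else 0 := by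
  rw [U1_sum σ⁻¹]
  refine Finset.sum_congr rfl fun t _ => ?_
  rw [et_inv]

lemma W_sum (σ : Equiv.Perm (Fin g)) :
    Wcnt σ = ∑ t : Fin g, if (t < σ t ∨ t < σ⁻¹ t) then 1 else 0 := by
  unfold Wcnt
  rw [Finset.card_filter]

/-! ### the main identity -/

lemma main_identity (σ : Equiv.Perm (Fin g)) :
    invCnt σ = 2 * Acnt σ + 2 * Acnt σ⁻¹ + 2 * Bcnt σ + Ccnt σ + Ccnt σ⁻¹ + Wcnt σ := by
  have h1 := inv_split σ
  rw [Apcnt_eq, Bp_eq_B, R_split] at h1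
  have h2 : R1cnt σ + R2cnt σ
      = (Acnt σ + Ccnt σ) + (Acnt σ⁻¹ + Ccnt σ⁻¹) + Wcnt σ := by
    rw [R1_sum, R2_sum, U1_sum, U2_sum, W_sum]
    rw [← Finset.sum_add_distrib, ← Finset.sum_add_distrib, ← Finset.sum_add_distrib]
    refine Finset.sum_congr rfl fun t _ => ?_
    have h1 := ut_eq σ t
    have h2 := dt_eq σ t
    have h3 := ut_eq_dt σ t
    split_ifs at h1 h2 ⊢ <;> omega
  omega


lemma fix_iff_inv_fix (σ : Equiv.Perm (Fin g)) (t : Fin g) : σ t = t ↔ σ⁻¹ t = t := by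
  constructor
  · intro h; apply σ.injective; simp [h]
  · intro h; conv_lhs => rw [← h]
    simp

lemma moved_split (σ : Equiv.Perm (Fin g)) :
    (univ.filter (fun i : Fin g => σ i ≠ i)).card = Wcnt σ + mmcnt σ := by
  unfold Wcnt mmcnt
  rw [Finset.card_filter, Finset.card_filter, Finset.card_filter, ← Finset.sum_add_distrib]
  refine Finset.sum_congr rfl fun t _ => ?_
  have h1 : σ t = t ↔ (σ t : ℕ) = (t : ℕ) := Fin.ext_iff
  have h2 : σ⁻¹ t = t ↔ (σ⁻¹ t : ℕ) = (t : ℕ) := Fin.ext_iff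
  have h3 := fix_iff_inv_fix σ t
  rw [h1, h2] at h3
  simp only [Fin.lt_def, ne_eq, h1]
  split_ifs <;> omega

lemma pp_eq_mm (σ : Equiv.Perm (Fin g)) : ppcnt σ = mmcnt σ := by
  have hS : (univ.filter (fun i : Fin g => i < σ i)).card
      = (univ.filter (fun i : Fin g => σ⁻¹ i < i)).card := by
    refine Finset.card_bij' (fun i _ => σ i) (fun j _ => σ⁻¹ j) ?_ ?_ ?_ ?_
    · intro a ha; simp only [mem_filter, mem_univ, true_and, Perm.inv_def, Equiv.symm_apply_apply] at ha ⊢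
      exact ha
    · intro a ha; simp only [mem_filter, mem_univ, true_and, Perm.inv_def, Equiv.apply_symm_apply] at ha ⊢
      exact ha
    · intro a _; simp
    · intro a _; simp
  have hsplit1 : (univ.filter (fun i : Fin g => i < σ i)).card
      = ppcnt σ + (univ.filter (fun i : Fin g => i < σ i ∧ σ⁻¹ i < i)).card := by
    unfold ppcnt
    rw [Finset.card_filter, Finset.card_filter, Finset.card_filter, ← Finset.sum_add_distrib]
    refine Finset.sum_congr rfl fun t _ => ?_
    have h1 : σ t = t ↔ (σ t : ℕ) = (t : ℕ) := Fin.ext_iff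
    have h2 : σ⁻¹ t = t ↔ (σ⁻¹ t : ℕ) = (t : ℕ) := Fin.ext_iff
    have h3 := fix_iff_inv_fix σ t
    rw [h1, h2] at h3
    simp only [Fin.lt_def]
    split_ifs <;> omega
  have hsplit2 : (univ.filter (fun i : Fin g => σ⁻¹ i < i)).card
      = mmcnt σ + (univ.filter (fun i : Fin g => i < σ i ∧ σ⁻¹ i < i)).card := by
    unfold mmcnt
    rw [Finset.card_filter, Finset.card_filter, Finset.card_filter, ← Finset.sum_add_distrib]
    refine Finset.sum_congr rfl fun t _ => ?_
    have h1 : σ t = t ↔ (σ t : ℕ) = (t : ℕ) := Fin.ext_iff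
    have h2 : σ⁻¹ t = t ↔ (σ⁻¹ t : ℕ) = (t : ℕ) := Fin.ext_iff
    have h3 := fix_iff_inv_fix σ t
    rw [h1, h2] at h3
    simp only [Fin.lt_def]
    split_ifs <;> omega
  omega

lemma mm_le_W (σ : Equiv.Perm (Fin g)) : mmcnt σ ≤ Wcnt σ := by
  rw [← pp_eq_mm]
  apply Finset.card_le_card
  intro x hx
  simp only [mem_filter, mem_univ, true_and] at hx ⊢
  exact Or.inl hx.1

lemma multiset32 (m : Multiset ℕ) :
    (∀ a ∈ m, 2 ≤ a) → m.sum = 2 * Multiset.card m + 1 →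
    ∃ k, m = 3 ::ₘ Multiset.replicate k 2 := by
  induction m using Multiset.induction_on with
  | empty =>
    intro _ hs
    simp at hs
  | cons a s IH =>
    intro h2 hs
    rw [Multiset.sum_cons, Multiset.card_cons] at hs
    have ha2 : 2 ≤ a := h2 a (Multiset.mem_cons_self a s)
    have hsge : 2 * Multiset.card s ≤ s.sum := by
      have := Multiset.card_nsmul_le_sum (s := s) (a := 2) (fun x hx => h2 x (Multiset.mem_cons_of_mem hx))
      simpa [smul_eq_mul, mul_comm] using this
    have ha3 : a ≤ 3 := by omega
    rcases Nat.eq_or_lt_of_le ha2 with h | h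
    · -- a = 2
      have hs' : s.sum = 2 * Multiset.card s + 1 := by omega
      obtain ⟨k, hk⟩ := IH (fun x hx => h2 x (Multiset.mem_cons_of_mem hx)) hs'
      refine ⟨k + 1, ?_⟩
      rw [hk, ← h, Multiset.cons_swap, Multiset.replicate_succ]
    · -- a = 3
      have ha : a = 3 := by omega
      have hs' : s.sum = 2 * Multiset.card s := by omega
      have hall : ∀ b ∈ s, b = 2 := by
        by_contra hbad
        push_neg at hbad
        obtain ⟨b, hb, hbne⟩ := hbad
        have hb3 : 3 ≤ b := by
          have := h2 b (Multiset.mem_cons_of_mem hb)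
          omega
        obtain ⟨t, ht⟩ := Multiset.exists_cons_of_mem hb
        rw [ht, Multiset.sum_cons, Multiset.card_cons] at hs'
        have htge : 2 * Multiset.card t ≤ t.sum := by
          have := Multiset.card_nsmul_le_sum (s := t) (a := 2) (fun x hx => by
            have : x ∈ s := ht ▸ Multiset.mem_cons_of_mem hx
            exact h2 x (Multiset.mem_cons_of_mem this))
          simpa [smul_eq_mul, mul_comm] using this
        omega
      refine ⟨Multiset.card s, ?_⟩
      rw [ha]
      congr 1
      conv_lhs => rw [Multiset.eq_replicate_card.mpr hall]

lemma Ccnt_zero_iff (σ : Equiv.Perm (Fin g)) :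
    Ccnt σ = 0 ↔ ∀ i j : Fin g, ¬ (i < j ∧ j < σ i ∧ σ i < σ j) := by
  unfold Ccnt
  rw [Finset.card_eq_zero, Finset.filter_eq_empty_iff]
  constructor
  · intro h i j hij
    exact h (mem_univ (i, j)) hij
  · rintro h ⟨i, j⟩ _
    exact h i j

lemma sc_iterate (σ : Equiv.Perm (Fin g)) (z : Fin g) (j : ℕ) :
    σ.SameCycle z (σ^[j] z) := by
  refine ⟨(j : ℤ), ?_⟩
  rw [zpow_natCast]
  rfl

lemma fixed_ne (σ : Equiv.Perm (Fin g)) (x : Fin g) (hx : σ x ≠ x) :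
    ∀ z, σ.SameCycle x z → σ z ≠ z := by
  intro z hz hfix
  obtain ⟨i, hi⟩ := hz.symm
  rw [zpow_apply_eq_self_of_apply_eq_self hfix i] at hi
  exact hx (hi ▸ hfix)

/-- maximal strictly descending run. -/
lemma run_desc (σ : Equiv.Perm (Fin g)) (x M : Fin g) (hx : σ x ≠ x)
    (hsc : σ.SameCycle x M) :
    ∃ l, (∀ k, k < l → σ (σ^[k] M) < σ^[k] M) ∧ σ^[l] M < σ (σ^[l] M) := by
  have hmov : ∀ k, σ (σ^[k] M) ≠ σ^[k] M := fun k =>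
    fixed_ne σ x hx _ (hsc.trans (sc_iterate σ M k))
  have hex : ∃ k, σ^[k] M < σ (σ^[k] M) := by
    by_contra hall
    push_neg at hall
    have hdesc : ∀ k, σ (σ^[k] M) < σ^[k] M := fun k =>
      lt_of_le_of_ne (hall k) (hmov k)
    have hbd : ∀ k, (σ^[k] M : ℕ) + k ≤ (M : ℕ) := by
      intro k
      induction k with
      | zero => simp
      | succ n ih =>
        have := hdesc n
        rw [Function.iterate_succ_apply']
        have hlt : (σ (σ^[n] M) : ℕ) < (σ^[n] M : ℕ) := this
        omega
    have := hbd ((M : ℕ) + 1)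
    omega
  refine ⟨Nat.find hex, fun k hk => ?_, Nat.find_spec hex⟩
  have := Nat.find_min hex hk
  push_neg at this
  exact lt_of_le_of_ne this (hmov k)

/-- maximal strictly ascending run. -/
lemma run_asc (σ : Equiv.Perm (Fin g)) (x z : Fin g) (hx : σ x ≠ x)
    (hsc : σ.SameCycle x z) :
    ∃ l, (∀ k, k < l → σ^[k] z < σ (σ^[k] z)) ∧ σ (σ^[l] z) < σ^[l] z := by
  have hmov : ∀ k, σ (σ^[k] z) ≠ σ^[k] z := fun k =>
    fixed_ne σ x hx _ (hsc.trans (sc_iterate σ z k))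
  have hex : ∃ k, σ (σ^[k] z) < σ^[k] z := by
    by_contra hall
    push_neg at hall
    have hasc : ∀ k, σ^[k] z < σ (σ^[k] z) := fun k =>
      lt_of_le_of_ne (hall k) (Ne.symm (hmov k))
    have hbd : ∀ k, (z : ℕ) + k ≤ (σ^[k] z : ℕ) := by
      intro k
      induction k with
      | zero => simp
      | succ n ih =>
        have := hasc n
        rw [Function.iterate_succ_apply']
        have hlt : (σ^[n] z : ℕ) < (σ (σ^[n] z) : ℕ) := this
        omega
    have h1 := hbd g
    have h2 : (σ^[g] z : ℕ) < g := (σ^[g] z).isLt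
    omega
  refine ⟨Nat.find hex, fun k hk => ?_, Nat.find_spec hex⟩
  have := Nat.find_min hex hk
  push_neg at this
  exact lt_of_le_of_ne this (Ne.symm (hmov k))

/-- Walking down from `x` past the bottom `d l` of a descending run forces a
crossing of two "down arcs", contradicting `C_{σ⁻¹} = 0`. -/
lemma no_escape (σ : Equiv.Perm (Fin g)) (hC' : Ccnt σ⁻¹ = 0)
    (d : ℕ → Fin g) (l : ℕ)
    (hstep : ∀ k, k < l → σ (d k) = d (k+1))
    (hdec : ∀ k, k < l → d (k+1) < d k)
    (hpp : d l < σ (d l))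
    (x : Fin g) (T : ℕ) (hx0 : d l < x)
    (hbnd : ∀ j, j ≤ T → σ^[j] x ≤ d 0)
    (hT : σ^[T] x < d l) : False := by
  rw [Ccnt_zero_iff] at hC'
  have hmono : ∀ j k, j ≤ k → k ≤ l → d k ≤ d j := by
    intro j k hjk hkl
    induction hjk with
    | refl => exact le_refl _
    | @step m h ih =>
      have h1 : m < l := by omega
      exact le_of_lt (lt_of_lt_of_le (hdec m h1) (ih (by omega)))
  have hexQ : ∃ s, σ^[s] x < d l := ⟨T, hT⟩
  set s := Nat.find hexQ with hs
  have hsT : s ≤ T := Nat.find_le hT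
  have hQs : σ^[s] x < d l := Nat.find_spec hexQ
  have hs1 : 1 ≤ s := by
    rcases Nat.eq_zero_or_pos s with h | h
    · exfalso
      have h2 := hQs
      rw [h] at h2
      simp only [Function.iterate_zero_apply] at h2
      exact absurd h2 (not_lt_of_gt hx0)
    · exact h
  set w : Fin g := σ^[s-1] x with hw
  have hsw : σ w = σ^[s] x := by
    have he : s = (s - 1) + 1 := by omega
    rw [hw]
    conv_rhs => rw [he]
    rw [Function.iterate_succ_apply']
  have hwnot : ¬ (w < d l) := Nat.find_min hexQ (by omega)
  have hwgt : d l < w := by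
    rcases lt_trichotomy w (d l) with h | h | h
    · exact absurd h hwnot
    · exfalso
      have h3 : σ (d l) = σ^[s] x := h ▸ hsw
      rw [← h3] at hQs
      exact absurd (hQs.trans hpp) (lt_irrefl _)
    · exact h
  have hwrun : ∀ k, k ≤ l → d k ≠ w := by
    intro k hk hkw
    rcases Nat.lt_or_ge k l with h | h
    · have h1 : σ (d k) = d (k+1) := hstep k h
      rw [hkw, hsw] at h1
      have h2 : d l ≤ d (k+1) := hmono (k+1) l (by omega) (le_refl _)
      rw [← h1] at h2
      exact absurd (lt_of_le_of_lt h2 hQs) (lt_irrefl _)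
    · have hkl : k = l := by omega
      rw [hkl] at hkw
      exact absurd hkw (ne_of_lt hwgt)
  have hwd0 : w < d 0 := by
    have h1 : w ≤ d 0 := hbnd (s-1) (by omega)
    exact lt_of_le_of_ne h1 (fun h => (hwrun 0 (by omega)) h.symm)
  -- innermost run arc jumping over w
  have hexR : ∃ k, d k < w := ⟨l, hwgt⟩
  set k0 := Nat.find hexR with hk0
  have hk0l : k0 ≤ l := Nat.find_le hwgt
  have hRk : d k0 < w := Nat.find_spec hexR
  have hk01 : 1 ≤ k0 := by
    rcases Nat.eq_zero_or_pos k0 with h | h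
    · exfalso
      have h2 := hRk
      rw [h] at h2
      exact absurd h2 (not_lt_of_gt hwd0)
    · exact h
  have hRk1 : w < d (k0 - 1) := by
    have h1 : ¬ (d (k0-1) < w) := Nat.find_min hexR (by omega)
    have h2 : d (k0-1) ≠ w := hwrun (k0-1) (by omega)
    rcases lt_trichotomy w (d (k0-1)) with h | h | h
    · exact h
    · exact absurd h.symm h2
    · exact absurd h h1
  -- the two down arcs cross : apply C_{σ⁻¹} = 0 to (σ w, d k0)
  refine hC' (σ w) (d k0) ⟨?_, ?_, ?_⟩
  · rw [hsw]
    exact lt_of_lt_of_le hQs (hmono k0 l hk0l (le_refl _))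
  · have : σ⁻¹ (σ w) = w := by simp
    rw [this]
    exact hRk
  · have h1 : σ⁻¹ (σ w) = w := by simp
    have h2 : σ (d (k0-1)) = d k0 := by
      have := hstep (k0-1) (by omega)
      have he : k0 - 1 + 1 = k0 := by omega
      rwa [he] at this
    have h3 : σ⁻¹ (d k0) = d (k0-1) := by
      rw [← h2]; simp
    rw [h1, h3]
    exact hRk1

lemma iterate_run (σ : Equiv.Perm (Fin g)) (d : ℕ → Fin g) (a : ℕ)
    (hdstep : ∀ k, k < a → σ (d k) = d (k+1)) :
    ∀ k, k ≤ a → σ^[k] (d 0) = d k := by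
  intro k hk
  induction k with
  | zero => simp
  | succ n ih =>
    rw [Function.iterate_succ_apply', ih (by omega), hdstep n (by omega)]

/-- A point below the max `M` which is a local max of its cycle cannot lie on a
cycle covered by one descending and one ascending run. -/
lemma not_in_two_runs (σ : Equiv.Perm (Fin g)) (x M : Fin g)
    (hx1 : σ x < x) (hx2 : σ⁻¹ x < x) (hxM : x < M) (hsc : σ.SameCycle M x)
    (d e : ℕ → Fin g) (a b : ℕ) (ha : 1 ≤ a) (hb : 1 ≤ b)
    (hd0 : d 0 = M) (hde : d a = e 0) (heb : e b = M)
    (hdstep : ∀ k, k < a → σ (d k) = d (k+1))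
    (hestep : ∀ k, k < b → σ (e k) = e (k+1))
    (hddec : ∀ k, k < a → d (k+1) < d k)
    (heinc : ∀ k, k < b → e k < e (k+1)) : False := by
  have hiter_d : ∀ k, k ≤ a → σ^[k] M = d k := by
    intro k hk
    rw [← hd0]
    exact iterate_run σ d a hdstep k hk
  have hiter_e : ∀ k, k ≤ b → σ^[k] (e 0) = e k := iterate_run σ e b hestep
  have hperiod : σ^[a + b] M = M := by
    rw [add_comm, Function.iterate_add_apply, hiter_d a (le_refl _), hde,
      hiter_e b (le_refl _), heb]
  obtain ⟨i, _, hi⟩ := hsc.exists_pow_eq'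
  have hi' : σ^[i] M = x := hi
  have hmod : σ^[i % (a+b)] M = x := by
    have hdecomp : i = i % (a+b) + (a+b) * (i / (a+b)) := (Nat.mod_add_div i (a+b)).symm
    have h2 : σ^[i] M = σ^[i % (a+b)] M := by
      conv_lhs => rw [hdecomp]
      rw [Function.iterate_add_apply, Function.iterate_mul,
        Function.iterate_fixed hperiod]
    rw [← h2]
    exact hi'
  set r := i % (a+b) with hr
  have hrlt : r < a + b := Nat.mod_lt _ (by omega)
  rcases le_or_gt r a with h | h
  · -- x on the descending run
    have hx : x = d r := by rw [← hmod, hiter_d r h]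
    rcases Nat.eq_zero_or_pos r with h0 | h0
    · rw [h0, hd0] at hx
      exact absurd hx (ne_of_lt hxM)
    · have hstep1 : σ (d (r-1)) = d r := by
        have := hdstep (r-1) (by omega)
        have he : r - 1 + 1 = r := by omega
        rwa [he] at this
      have : σ⁻¹ x = d (r-1) := by
        rw [hx, ← hstep1]
        simp
      have hgt : x < σ⁻¹ x := by
        rw [this, hx]
        have := hddec (r-1) (by omega)
        have he : r - 1 + 1 = r := by omega
        rwa [he] at this
      exact absurd hx2 (not_lt_of_gt hgt)
  · -- x on the ascending run
    have hx : x = e (r - a) := by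
      have h2 : σ^[r] M = e (r - a) := by
        have hdecomp : r = (r - a) + a := by omega
        calc σ^[r] M = σ^[(r-a)+a] M := by rw [← hdecomp]
          _ = σ^[r-a] (σ^[a] M) := Function.iterate_add_apply _ _ _ _
          _ = e (r - a) := by rw [hiter_d a (le_refl _), hde, hiter_e (r-a) (by omega)]
      rw [← hmod, h2]
    have hra : r - a < b := by omega
    have : σ x = e (r - a + 1) := by rw [hx, hestep (r-a) hra]
    have hgt : x < σ x := by
      rw [this, hx]
      exact heinc (r-a) hra
    exact absurd hx1 (not_lt_of_gt hgt)

/-- Main structural lemma: if `C_σ = C_{σ⁻¹} = 0` then every "local maximum"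
of `σ` is the maximum of its cycle. -/
lemma mx (σ : Equiv.Perm (Fin g)) (hC : Ccnt σ = 0) (hC' : Ccnt σ⁻¹ = 0) :
    ∀ x : Fin g, σ x < x → σ⁻¹ x < x → ∀ y, σ.SameCycle x y → y ≤ x := by
  set BAD : Finset (Fin g) :=
    univ.filter (fun z => (σ z < z ∧ σ⁻¹ z < z) ∧ ∃ w, σ.SameCycle z w ∧ z < w) with hBAD
  suffices hemp : BAD = ∅ by
    intro x h1 h2 y hxy
    by_contra hgt
    push_neg at hgt
    have : x ∈ BAD := by
      rw [hBAD, mem_filter]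
      exact ⟨mem_univ _, ⟨h1, h2⟩, y, hxy, hgt⟩
    rw [hemp] at this
    exact absurd this (notMem_empty x)
  by_contra hne
  have hnem : BAD.Nonempty := Finset.nonempty_iff_ne_empty.mpr hne
  set x := BAD.max' hnem with hx
  have hxBAD : x ∈ BAD := BAD.max'_mem hnem
  have hxmax : ∀ z ∈ BAD, z ≤ x := fun z hz => BAD.le_max' z hz
  rw [hBAD, mem_filter] at hxBAD
  obtain ⟨-, ⟨hx1, hx2⟩, y, hxy, hylt⟩ := hxBAD
  -- the cycle of x and its max
  have hxmoved : σ x ≠ x := ne_of_lt hx1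
  have hfix : ∀ z, σ.SameCycle x z → σ z ≠ z := fixed_ne σ x hxmoved
  set K : Finset (Fin g) := univ.filter (fun z => σ.SameCycle x z) with hK
  have hxK : x ∈ K := by rw [hK, mem_filter]; exact ⟨mem_univ _, SameCycle.refl σ x⟩
  have hKne : K.Nonempty := ⟨x, hxK⟩
  set M := K.max' hKne with hM
  have hMK : σ.SameCycle x M := (Finset.mem_filter.mp (K.max'_mem hKne)).2
  have hMmax : ∀ z, σ.SameCycle x z → z ≤ M := by
    intro z hz
    apply K.le_max'
    rw [hK, mem_filter]
    exact ⟨mem_univ _, hz⟩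
  have hxM : x < M := lt_of_lt_of_le hylt (hMmax y hxy)
  have hMdown : σ M < M := by
    have h1 : σ.SameCycle x (σ M) := sameCycle_apply_right.mpr hMK
    have h2 : σ M ≤ M := hMmax _ h1
    exact lt_of_le_of_ne h2 (hfix M hMK)
  have hMinvdown : σ⁻¹ M < M := by
    have h1 : σ.SameCycle x (σ⁻¹ M) := by
      have := sameCycle_apply_right.mpr (sameCycle_inv.mpr hMK)
      rw [sameCycle_inv] at this
      exact this
    have h2 : σ⁻¹ M ≤ M := hMmax _ h1
    refine lt_of_le_of_ne h2 (fun h => ?_)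
    have : σ M = M := by conv_lhs => rw [← h]; rw [Perm.inv_def, Equiv.apply_symm_apply]
    exact hfix M hMK this
  -- Claim P : every local minimum of the cycle is < x
  have claimP : ∀ z, σ.SameCycle x z → z < σ z → z < σ⁻¹ z → z < x := by
    intro z hz hz1 hz2
    rcases lt_trichotomy z x with h | h | h
    · exact h
    · exfalso; rw [h] at hz1; exact absurd (hx1.trans hz1) (lt_irrefl _)
    · exfalso
      -- ascending run from z (forward)
      obtain ⟨n, hnasc, hnstop⟩ := run_asc σ x z hxmoved hz
      set e : ℕ → Fin g := fun k => σ^[k] z with he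
      have hestep : ∀ k, σ (e k) = e (k+1) := by
        intro k
        rw [he]
        simp only []
        rw [Function.iterate_succ_apply']
      have hn1 : 1 ≤ n := by
        rcases Nat.eq_zero_or_pos n with h0 | h0
        · exfalso
          have := hnstop
          rw [h0] at this
          simp only [Function.iterate_zero_apply] at this
          exact absurd hz1 (not_lt_of_gt this)
        · exact h0
      have hv1 : σ (e n) < e n := hnstop
      have hv2 : σ⁻¹ (e n) < e n := by
        have hs : σ (e (n-1)) = e n := by
          have := hestep (n-1)
          have he1 : n - 1 + 1 = n := by omega
          rwa [he1] at this
        have : σ⁻¹ (e n) = e (n-1) := by rw [← hs]; simp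
        rw [this]
        have := hnasc (n-1) (by omega)
        have he1 : n - 1 + 1 = n := by omega
        rw [← hs]
        have h2 : e (n-1) < σ (e (n-1)) := hnasc (n-1) (by omega)
        exact h2
      have hez : ∀ k, k ≤ n → z ≤ e k := by
        intro k hk
        induction k with
        | zero => exact le_refl z
        | succ m ih =>
          have h1 : e m < e (m+1) := by
            have := hnasc m (by omega)
            rwa [hestep m] at this
          exact le_of_lt (lt_of_le_of_lt (ih (by omega)) h1)
      have hvgt : x < e n := by
        have h1 : e 0 < e 1 := by
          have := hnasc 0 (by omega)
          rwa [hestep 0] at this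
        have h2 : e 1 ≤ e n := by
          rcases Nat.eq_or_lt_of_le hn1 with h' | h'
          · rw [h']
          · -- e monotone from 1 to n
            have hmon : ∀ k, 1 ≤ k → k ≤ n → e 1 ≤ e k := by
              intro k hk1 hkn
              induction k with
              | zero => omega
              | succ m ih =>
                rcases Nat.eq_or_lt_of_le hk1 with h'' | h''
                · rw [← h'']
                · have h3 : e m < e (m+1) := by
                    have := hnasc m (by omega)
                    rwa [hestep m] at this
                  exact le_of_lt (lt_of_le_of_lt (ih (by omega) (by omega)) h3)
            exact hmon n hn1 (le_refl n)
        calc x < z := h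
          _ = e 0 := rfl
          _ < e 1 := h1
          _ ≤ e n := h2
      have hsczn : σ.SameCycle x (e n) := hz.trans (sc_iterate σ z n)
      -- e n is a local max above x, so e n = M by maximality of x in BAD
      have hveqM : e n = M := by
        have hnotbad : e n ∉ BAD := fun hmem => absurd (hxmax _ hmem) (not_le_of_gt hvgt)
        rw [hBAD, mem_filter] at hnotbad
        push_neg at hnotbad
        have h4 := hnotbad (mem_univ _) ⟨hv1, hv2⟩
        have h5 : M ≤ e n := by
          by_contra h6
          push_neg at h6
          exact absurd h6 (by
            have := h4 M (hsczn.symm.trans hMK)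
            exact not_lt_of_ge this)
        exact le_antisymm (hMmax _ hsczn) h5
      -- ascending backward run from z
      have hinvmoved : σ⁻¹ x ≠ x := by
        intro hfx
        apply hxmoved
        conv_lhs => rw [← hfx]
        rw [Perm.inv_def, Equiv.apply_symm_apply]
      obtain ⟨n', hn'asc, hn'stop⟩ := run_asc σ⁻¹ x z hinvmoved (sameCycle_inv.mpr hz)
      set b : ℕ → Fin g := fun k => ((σ⁻¹ : Equiv.Perm (Fin g)) : Fin g → Fin g)^[k] z with hbdef
      have hbstep : ∀ k, σ⁻¹ (b k) = b (k+1) := by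
        intro k
        rw [hbdef]
        simp only []
        rw [Function.iterate_succ_apply']
      have hbinc : ∀ k, k < n' → b k < b (k+1) := by
        intro k hk
        have := hn'asc k hk
        rwa [hbstep k] at this
      have hn'1 : 1 ≤ n' := by
        rcases Nat.eq_zero_or_pos n' with h0 | h0
        · exfalso
          have h2 := hn'stop
          rw [h0] at h2
          simp only [Function.iterate_zero_apply] at h2
          exact absurd hz2 (not_lt_of_gt h2)
        · exact h0
      have hsbsigma : ∀ k, k < n' → σ (b (k+1)) = b k := by
        intro k hk
        rw [← hbstep k]
        simp
      have hv'1 : σ (b n') < b n' := by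
        have h1 : σ (b n') = b (n'-1) := by
          have := hsbsigma (n'-1) (by omega)
          have he1 : n' - 1 + 1 = n' := by omega
          rwa [he1] at this
        rw [h1]
        have := hbinc (n'-1) (by omega)
        have he1 : n' - 1 + 1 = n' := by omega
        rwa [he1] at this
      have hv'2 : σ⁻¹ (b n') < b n' := hn'stop
      have hscbn : σ.SameCycle x (b n') :=
        hz.trans (sameCycle_inv.mp (sc_iterate σ⁻¹ z n'))
      have hv'gt : x < b n' := by
        have hmon : ∀ k, k ≤ n' → b 0 ≤ b k := by
          intro k hk
          induction k with
          | zero => exact le_refl _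
          | succ m ih =>
            exact le_of_lt (lt_of_le_of_lt (ih (by omega)) (hbinc m (by omega)))
        have h1 : b 0 < b 1 := hbinc 0 (by omega)
        have h2 : b 1 ≤ b n' := by
          have hmon2 : ∀ k, 1 ≤ k → k ≤ n' → b 1 ≤ b k := by
            intro k hk1 hkn
            induction k with
            | zero => omega
            | succ m ih =>
              rcases Nat.eq_or_lt_of_le hk1 with h'' | h''
              · rw [← h'']
              · exact le_of_lt (lt_of_le_of_lt (ih (by omega) (by omega)) (hbinc m (by omega)))
          exact hmon2 n' hn'1 (le_refl _)
        calc x < z := h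
          _ = b 0 := rfl
          _ < b 1 := h1
          _ ≤ b n' := h2
      have hv'eqM : b n' = M := by
        have hnotbad : b n' ∉ BAD := fun hmem => absurd (hxmax _ hmem) (not_le_of_gt hv'gt)
        rw [hBAD, mem_filter] at hnotbad
        push_neg at hnotbad
        have h4 := hnotbad (mem_univ _) ⟨hv'1, hv'2⟩
        have h5 : M ≤ b n' := by
          have := h4 M (hscbn.symm.trans hMK)
          exact this
        exact le_antisymm (hMmax _ hscbn) h5
      -- assemble: the cycle is covered by two runs, so x is on them: contradiction
      refine not_in_two_runs σ x M hx1 hx2 hxM hMK.symm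
        (fun k => b (n' - k)) e n' n hn'1 hn1 ?_ ?_ ?_ ?_ ?_ ?_ ?_
      · simpa using hv'eqM
      · show b (n' - n') = e 0
        rw [Nat.sub_self]
        simp only [hbdef, he, Function.iterate_zero_apply]
      · exact hveqM
      · intro k hk
        show σ (b (n' - k)) = b (n' - (k+1))
        have h1 : n' - k = (n' - k - 1) + 1 := by omega
        rw [h1, hsbsigma (n' - k - 1) (by omega)]
        have h2 : n' - (k+1) = n' - k - 1 := by omega
        rw [h2]
      · intro k _
        exact hestep k
      · intro k hk
        show b (n' - (k+1)) < b (n' - k)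
        have h1 : n' - k = (n' - k - 1) + 1 := by omega
        have h2 : n' - (k+1) = n' - k - 1 := by omega
        rw [h1, h2]
        exact hbinc (n' - k - 1) (by omega)
      · intro k hk
        have := hnasc k hk
        rwa [hestep k] at this
  -- descending run from M (forward)
  obtain ⟨l, hld, hlstop⟩ := run_desc σ x M hxmoved hMK
  set d : ℕ → Fin g := fun k => σ^[k] M with hddef
  have hdstep : ∀ k, σ (d k) = d (k+1) := by
    intro k
    rw [hddef]
    simp only []
    rw [Function.iterate_succ_apply']
  have hddec : ∀ k, k < l → d (k+1) < d k := by
    intro k hk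
    have := hld k hk
    rwa [hdstep k] at this
  have hl1 : 1 ≤ l := by
    rcases Nat.eq_zero_or_pos l with h0 | h0
    · exfalso
      have h2 := hlstop
      rw [h0] at h2
      simp only [Function.iterate_zero_apply] at h2
      exact absurd h2 (not_lt_of_gt hMdown)
    · exact h0
  have hscz : σ.SameCycle x (d l) := hMK.trans (sc_iterate σ M l)
  have hzpp1 : d l < σ (d l) := hlstop
  have hzpp2 : d l < σ⁻¹ (d l) := by
    have h1 : σ (d (l-1)) = d l := by
      have := hdstep (l-1)
      have he1 : l - 1 + 1 = l := by omega
      rwa [he1] at this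
    have h2 : σ⁻¹ (d l) = d (l-1) := by rw [← h1]; simp
    rw [h2]
    have := hddec (l-1) (by omega)
    have he1 : l - 1 + 1 = l := by omega
    rwa [he1] at this
  have hzlt : d l < x := claimP (d l) hscz hzpp1 hzpp2
  -- descending run from M (backward, i.e. for σ⁻¹)
  have hinvmoved : σ⁻¹ x ≠ x := by
    intro hfx
    apply hxmoved
    conv_lhs => rw [← hfx]
    rw [Perm.inv_def, Equiv.apply_symm_apply]
  obtain ⟨m, hmd, hmstop⟩ := run_desc σ⁻¹ x M hinvmoved (sameCycle_inv.mpr hMK)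
  set r : ℕ → Fin g := fun k => ((σ⁻¹ : Equiv.Perm (Fin g)) : Fin g → Fin g)^[k] M with hrdef
  have hrstep : ∀ k, σ⁻¹ (r k) = r (k+1) := by
    intro k
    rw [hrdef]
    simp only []
    rw [Function.iterate_succ_apply']
  have hrdec : ∀ k, k < m → r (k+1) < r k := by
    intro k hk
    have := hmd k hk
    rwa [hrstep k] at this
  have hm1 : 1 ≤ m := by
    rcases Nat.eq_zero_or_pos m with h0 | h0
    · exfalso
      have h2 := hmstop
      rw [h0] at h2
      simp only [Function.iterate_zero_apply] at h2
      exact absurd h2 (not_lt_of_gt hMinvdown)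
    · exact h0
  have hrsigma : ∀ k, k < m → σ (r (k+1)) = r k := by
    intro k hk
    rw [← hrstep k]
    simp
  have hscr : σ.SameCycle x (r m) :=
    hMK.trans (sameCycle_inv.mp (sc_iterate σ⁻¹ M m))
  have hrpp1 : r m < σ (r m) := by
    have h1 : σ (r m) = r (m-1) := by
      have := hrsigma (m-1) (by omega)
      have he1 : m - 1 + 1 = m := by omega
      rwa [he1] at this
    rw [h1]
    have := hrdec (m-1) (by omega)
    have he1 : m - 1 + 1 = m := by omega
    rwa [he1] at this
  have hrpp2 : r m < σ⁻¹ (r m) := hmstop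
  have hrlt : r m < x := claimP (r m) hscr hrpp1 hrpp2
  -- three cases
  rcases lt_trichotomy (r m) (d l) with hcase | hcase | hcase
  · -- r₀ < z* : walk forward from x down past d l
    obtain ⟨T, _, hT⟩ := hscr.exists_pow_eq'
    refine no_escape σ hC' d l (fun k _ => hdstep k) hddec hzpp1 x T hzlt ?_ ?_
    · intro j _
      exact hMmax _ (SameCycle.trans (SameCycle.refl σ x) (sc_iterate σ x j))
    · have hTx : σ^[T] x = r m := hT
      rw [hTx]
      exact hcase
  · -- r₀ = z* : cycle covered by the two runs
    refine not_in_two_runs σ x M hx1 hx2 hxM hMK.symm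
      d (fun k => r (m - k)) l m hl1 hm1 rfl ?_ ?_ (fun k _ => hdstep k) ?_ hddec ?_
    · show d l = r (m - 0)
      rw [Nat.sub_zero]
      exact hcase.symm
    · show r (m - m) = M
      rw [Nat.sub_self]
      simp only [hrdef, Function.iterate_zero_apply]
    · intro k hk
      show σ (r (m - k)) = r (m - (k+1))
      have h1 : m - k = (m - k - 1) + 1 := by omega
      rw [h1, hrsigma (m - k - 1) (by omega)]
      have h2 : m - (k+1) = m - k - 1 := by omega
      rw [h2]
    · intro k hk
      show r (m - k) < r (m - (k+1))
      have h1 : m - k = (m - k - 1) + 1 := by omega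
      have h2 : m - (k+1) = m - k - 1 := by omega
      rw [h1, h2]
      exact hrdec (m - k - 1) (by omega)
  · -- z* < r₀ : walk backward from x down past r m
    have hC2 : Ccnt (σ⁻¹)⁻¹ = 0 := by rw [inv_inv]; exact hC
    have hscz' : (σ⁻¹).SameCycle x (d l) := sameCycle_inv.mpr hscz
    obtain ⟨T, _, hT⟩ := hscz'.exists_pow_eq'
    refine no_escape σ⁻¹ hC2 r m (fun k _ => hrstep k) hrdec hrpp2 x T hrlt ?_ ?_
    · intro j _
      exact hMmax _ (sameCycle_inv.mp (sc_iterate σ⁻¹ x j))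
    · have hTx : ((σ⁻¹ : Equiv.Perm (Fin g)) : Fin g → Fin g)^[T] x = d l := hT
      rw [hTx]
      exact hcase

lemma mm_eq_card_cycleType (σ : Equiv.Perm (Fin g))
    (hmx : ∀ x : Fin g, σ x < x → σ⁻¹ x < x → ∀ y, σ.SameCycle x y → y ≤ x) :
    mmcnt σ = Multiset.card σ.cycleType := by
  rw [Equiv.Perm.cycleType_def, Multiset.card_map]
  unfold mmcnt
  refine Finset.card_bij (fun z _ => σ.cycleOf z) ?_ ?_ ?_
  · intro z hz
    rw [mem_filter] at hz
    obtain ⟨-, hz1, hz2⟩ := hz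
    have : z ∈ σ.support := mem_support.mpr (ne_of_lt hz1)
    exact cycleOf_mem_cycleFactorsFinset_iff.mpr this
  · intro z1 hz1 z2 hz2 hcyc
    rw [mem_filter] at hz1 hz2
    have hsc : σ.SameCycle z1 z2 := by
      have h1 : z2 ∈ (σ.cycleOf z2).support := by
        rw [mem_support_cycleOf_iff]
        exact ⟨SameCycle.refl _ _, mem_support.mpr (ne_of_lt hz2.2.1)⟩
      rw [← hcyc] at h1
      rw [mem_support_cycleOf_iff] at h1
      exact h1.1
    exact le_antisymm (hmx z2 hz2.2.1 hz2.2.2 z1 hsc.symm) (hmx z1 hz1.2.1 hz1.2.2 z2 hsc)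
  · intro c hc
    have hcyc : c.IsCycle := (mem_cycleFactorsFinset_iff.mp hc).1
    have hagree : ∀ a ∈ c.support, c a = σ a := (mem_cycleFactorsFinset_iff.mp hc).2
    have hne : c.support.Nonempty := by
      rw [Finset.nonempty_iff_ne_empty, Ne, support_eq_empty_iff]
      exact hcyc.ne_one
    set M := c.support.max' hne with hM
    have hMmem : M ∈ c.support := c.support.max'_mem hne
    have hcM : c M ≠ M := mem_support.mp hMmem
    have h1 : σ M < M := by
      rw [← hagree M hMmem]
      have hmem2 : c M ∈ c.support := apply_mem_support.mpr hMmem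
      exact lt_of_le_of_ne (c.support.le_max' _ hmem2) hcM
    have h2 : σ⁻¹ M < M := by
      set z := c⁻¹ M with hz
      have hzmem : z ∈ c.support := by
        rw [hz, ← Equiv.Perm.support_inv c]
        exact apply_mem_support.mpr (by rw [Equiv.Perm.support_inv c]; exact hMmem)
      have hcz : c z = M := by rw [hz]; simp
      have hsz : σ z = M := by rw [← hagree z hzmem, hcz]
      have hinv : σ⁻¹ M = z := by rw [← hsz]; simp
      rw [hinv]
      refine lt_of_le_of_ne (c.support.le_max' _ hzmem) ?_
      intro h
      rw [h] at hcz
      exact hcM hcz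
    refine ⟨M, ?_, ?_⟩
    · rw [mem_filter]
      exact ⟨mem_univ _, h1, h2⟩
    · exact (cycle_is_cycleOf hMmem hc).symm


end Stmt19

open Finset Equiv Equiv.Perm Stmt19 in
/-- `2ℓ(σ) = 4(A_σ + A_{σ⁻¹} + B_σ) + #{i : σ(i) ≠ i} + 1`
iff `C_σ = C_{σ⁻¹} = 0` and `σ` is a disjoint product of transpositions and
exactly one 3-cycle. -/
theorem eq_plus_one_iff (g : ℕ) (σ : Equiv.Perm (Fin g)) :
    2 * invCnt σ = 4 * (Acnt σ + Acnt σ⁻¹ + Bcnt σ)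
        + (Finset.univ.filter (fun i : Fin g => σ i ≠ i)).card + 1
      ↔ (Ccnt σ = 0 ∧ Ccnt σ⁻¹ = 0 ∧
         ∃ k : ℕ, σ.cycleType = 3 ::ₘ Multiset.replicate k 2) := by
  have hid := Stmt19.main_identity σ
  have hms := Stmt19.moved_split σ
  have hWmm := Stmt19.mm_le_W σ
  have hsupp : (univ.filter fun i : Fin g => σ i ≠ i) = σ.support := by
    ext i; simp [Equiv.Perm.mem_support]
  have hsuppc : (univ.filter fun i : Fin g => σ i ≠ i).card = σ.support.card := by
    rw [hsupp]
  have hsum : σ.cycleType.sum = σ.support.card := σ.sum_cycleType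
  constructor
  · intro h
    have hC : Ccnt σ = 0 := by omega
    have hC' : Ccnt σ⁻¹ = 0 := by omega
    have hW : Wcnt σ = mmcnt σ + 1 := by omega
    refine ⟨hC, hC', ?_⟩
    have hmm := Stmt19.mm_eq_card_cycleType σ (Stmt19.mx σ hC hC')
    apply Stmt19.multiset32
    · intro a ha; exact Equiv.Perm.two_le_of_mem_cycleType ha
    · omega
  · rintro ⟨hC, hC', ⟨k, hct⟩⟩
    have hmm := Stmt19.mm_eq_card_cycleType σ (Stmt19.mx σ hC hC')
    have hcard : Multiset.card σ.cycleType = k + 1 := by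
      rw [hct]
      simp
    have hsum2 : σ.cycleType.sum = 3 + 2 * k := by
      rw [hct]
      simp [Multiset.sum_replicate, mul_comm]
    omega
end
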